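/- arXiv:2510.13472 — 9 statements merged into one kernel-verified Lean document; each statement's English description precedes it below -/
import Mathlib

section
/- With the hypotheses of the generalized Fibonacci setting (p positive integer, q, l integers, l ≥ 1−m, p²+4q>0, p²+2q−2 < p√(p²+4q), c₁ ≠ 0, W_{mk+l} ≠ 0 for k ≥ n₀), we have lim_{n→∞} [ (∑_{k=n}^∞ 1/W_{mk+l}²)^{-1} − ( W_{mn+l}² − W_{m(n−1)+l}² + 2c₁c₂(−q)^{mn+l}(1 − (−q)^{−m} − (α^{2m}−1)²/(α^m(α^{3m}−β^m))) ) ] = 0. -/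
open Filter

private lemma horadam_alg (c₁ c₂ D A N x y Γ Bt Bs S : ℝ)
    (hA : A ≠ 0) (hc₁ : c₁ ≠ 0) (hx : 1 - x ≠ 0) (hy : 1 - y ≠ 0)
    (hD : D * (1 - y) = (1 - x) ^ 2)
    (hS : S = (c₁^2*(1-x))⁻¹/A + (2*c₂/(c₁^3*(1-y)))*N/A^2 + Γ) :
    A * (1 - (c₁^2*(A - A*x) + c₂^2*(Bt - Bs) - 2*c₁*c₂*D*N) * S) =
      -( c₁^2*(1-x)*A^2*Γ + (-2*c₁*c₂*D)*(2*c₂/(c₁^3*(1-y)))*N^2/A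
        + (-2*c₁*c₂*D)*N*A*Γ
        + c₂^2*(Bt - Bs)*((c₁^2*(1-x))⁻¹ + (2*c₂/(c₁^3*(1-y)))*N/A + A*Γ) ) := by
  have hDval : D = (1-x)^2 / (1-y) := by field_simp at hD ⊢; linarith
  subst hDval hS
  field_simp
  ring

set_option maxHeartbeats 1000000 in
private lemma horadam_aux (α β c₁ c₂ q D : ℝ) (m T1 : ℕ) (hm : 0 < m)
    (hα1 : 1 < α) (hβ1 : |β| < 1) (hq : α * β = -q) (hc₁ : c₁ ≠ 0)
    (hDrel : D * (1 - (-q)^m / α^(4*m)) = (1 - (α^(2*m))⁻¹) ^ 2)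
    (w : ℕ → ℝ) (hw : ∀ j, w j = c₁ * α ^ j - c₂ * β ^ j) :
    Tendsto (fun n : ℕ =>
      (∑' k : ℕ, 1 / (w (T1 + m + m * n + m * k)) ^ 2)⁻¹ -
        ((w (T1 + m + m * n)) ^ 2 - (w (T1 + m * n)) ^ 2
          + 2*c₁*c₂*((-q)^(T1+m+m*n) - (-q)^(T1+m*n))
          - 2*c₁*c₂*D*(-q)^(T1+m+m*n))) atTop (nhds 0) := by
  have hα0 : (0:ℝ) < α := lt_trans zero_lt_one hα1
  have hαne : α ≠ 0 := ne_of_gt hα0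
  have hqα : |q| < α := by
    have h : |q| = α * |β| := by rw [← abs_of_pos hα0, ← abs_mul, hq, abs_neg]
    nlinarith [abs_nonneg β, abs_nonneg q]
  have hq0 : (0:ℝ) ≤ |q| := abs_nonneg q
  set x : ℝ := (α^(2*m))⁻¹ with hxdef
  set y : ℝ := (-q)^m / α^(4*m) with hydef
  set ρ : ℝ := q^2 / α^6 with hρdef
  set K : ℝ := 16*c₂^2/c₁^4 with hKdef
  have hαm1 : (1:ℝ) < α^(2*m) := one_lt_pow₀ hα1 (by omega)
  have hx0 : 0 < x := by positivity
  have hx1 : x < 1 := inv_lt_one_of_one_lt₀ hαm1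
  have hxne : 1 - x ≠ 0 := by linarith
  have hy1 : |y| < 1 := by
    rw [hydef, abs_div, abs_of_pos (by positivity : (0:ℝ) < α^(4*m))]
    rw [div_lt_one (by positivity)]
    calc |(-q)^m| = |q|^m := by rw [abs_pow, abs_neg]
    _ ≤ α^m := pow_le_pow_left₀ hq0 (le_of_lt hqα) m
    _ < α^(4*m) := pow_lt_pow_right₀ hα1 (by omega)
  have hyne : 1 - y ≠ 0 := by
    intro h
    have : |y| = 1 := by rw [show y = 1 by linarith]; norm_num
    linarith
  have hq2 : q^2 < α^2 := by nlinarith [sq_abs q]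
  have hρ0 : (0:ℝ) ≤ ρ := by positivity
  have hρ1 : ρ < 1 := by
    rw [hρdef, div_lt_one (by positivity)]
    have h26 : α^2 ≤ α^6 := pow_le_pow_right₀ (le_of_lt hα1) (by omega)
    linarith
  -- epsilon machinery
  have hβval : β = -q / α := by rw [eq_div_iff hαne]; linarith [hq, mul_comm α β]
  have hβpow : ∀ j : ℕ, β ^ j = (-q) ^ j / α ^ j := by
    intro j; rw [hβval, div_pow]
  set ε : ℕ → ℝ := fun j => c₂ * (-q)^j / (c₁ * α^(2*j)) with hεdef
  have hwε : ∀ j, w j = c₁ * α ^ j * (1 - ε j) := by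
    intro j
    have h2 : α^(2*j) = (α^j)^2 := by rw [pow_mul']
    rw [hw, hβpow, hεdef]
    have hXne : α^j ≠ 0 := pow_ne_zero _ hαne
    field_simp [h2]
    ring
  have hεabs : ∀ j, |ε j| = (|c₂|/|c₁|) * (|q|/α^2)^j := by
    intro j
    have h2 : α^(2*j) = (α^2)^j := by rw [pow_mul]
    rw [hεdef]
    simp only
    rw [abs_div, abs_mul, abs_mul, abs_pow, abs_pow, abs_neg, abs_of_pos hα0, div_pow, h2]
    field_simp
  have hrq : |q|/α^2 < 1 := by
    rw [div_lt_one (by positivity)]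
    have : α ≤ α^2 := by nlinarith
    linarith
  have hεev : ∀ᶠ j in atTop, |ε j| < 1/2 := by
    have hlim : Tendsto (fun j : ℕ => (|c₂|/|c₁|) * (|q|/α^2)^j) atTop (nhds 0) := by
      have := (tendsto_pow_atTop_nhds_zero_of_lt_one (by positivity) hrq).const_mul (|c₂|/|c₁|)
      simpa using this
    filter_upwards [hlim.eventually (gt_mem_nhds (show (0:ℝ) < 1/2 by norm_num))] with j hj
    rw [hεabs]; exact hj
  obtain ⟨J₀, hJ₀⟩ := eventually_atTop.mp hεev
  have hε : ∀ j, J₀ ≤ j → |ε j| ≤ 1/2 := fun j hj => (hJ₀ j hj).le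
  have hwlb : ∀ j, J₀ ≤ j → |c₁| * α^j * (1/2) ≤ |w j| := by
    intro j hj
    rw [hwε j, abs_mul, abs_mul, abs_of_pos (pow_pos hα0 j)]
    have h1 : 1 - |ε j| ≤ |1 - ε j| := by
      have := abs_sub_abs_le_abs_sub (1:ℝ) (ε j)
      simpa using this
    have h2 := hε j hj
    have : (1:ℝ)/2 ≤ |1 - ε j| := by linarith
    exact mul_le_mul_of_nonneg_left this (by positivity)
  have hwne : ∀ j, J₀ ≤ j → w j ≠ 0 := by
    intro j hj
    have := hwlb j hj
    have hc : 0 < |c₁| := abs_pos.mpr hc₁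
    intro h
    rw [h, abs_zero] at this
    nlinarith [pow_pos hα0 j]
  -- g and its bound
  set g : ℕ → ℝ := fun j => 1/(w j)^2 - (c₁^2*α^(2*j))⁻¹ - 2*c₂*(-q)^j/(c₁^3*α^(4*j)) with hgdef
  have key : ∀ (X Y e : ℝ), X ≠ 0 → 1 - e ≠ 0 → c₂*Y = e*(c₁*X^2) →
      1/(c₁*X*(1-e))^2 - (c₁^2*X^2)⁻¹ - 2*c₂*Y/(c₁^3*X^4) =
        e^2*(3-2*e)/((1-e)^2*(c₁^2*X^2)) := by
    intro X Y e hX hne hrel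
    have h1 : 2*c₂*Y/(c₁^3*X^4) = 2*e/(c₁^2*X^2) := by
      rw [show (2:ℝ)*c₂*Y = 2*(c₂*Y) by ring, hrel]
      field_simp
    rw [h1]
    field_simp
    ring
  have hεne : ∀ j, J₀ ≤ j → 1 - ε j ≠ 0 := by
    intro j hj h
    have h2 := hε j hj
    have : ε j = 1 := by linarith
    rw [this] at h2; norm_num at h2
  have hgid : ∀ j, J₀ ≤ j →
      g j = (ε j)^2*(3 - 2*ε j)/((1 - ε j)^2*(c₁^2*α^(2*j))) := by
    intro j hj
    have h2 : α^(2*j) = (α^j)^2 := by rw [pow_mul']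
    have h4 : α^(4*j) = (α^j)^4 := by rw [pow_mul']
    have hXne : α^j ≠ 0 := pow_ne_zero _ hαne
    have hrel : c₂*(-q)^j = ε j * (c₁*(α^j)^2) := by
      rw [hεdef]; simp only; rw [h2]
      exact (div_mul_cancel₀ _ (mul_ne_zero hc₁ (pow_ne_zero 2 hXne))).symm
    rw [hgdef]; simp only
    rw [hwε j, h2, h4]
    exact key (α^j) ((-q)^j) (ε j) hXne (hεne j hj) hrel
  have hεsq : ∀ j, (ε j)^2/(c₁^2*α^(2*j)) = (c₂^2/c₁^4) * ρ^j := by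
    intro j
    have h2 : α^(2*j) = (α^2)^j := by rw [pow_mul]
    have h6 : (α^6)^j = ((α^2)^j)^3 := by rw [← pow_mul, ← pow_mul]; ring_nf
    have hq2j : ((-q)^j)^2 = (q^2)^j := by rw [pow_right_comm, neg_sq]
    rw [hεdef, hρdef]
    simp only
    rw [div_pow, h2, div_pow, h6, ← hq2j]
    have hune : ((α:ℝ)^2)^j ≠ 0 := by positivity
    field_simp
  have hgb : ∀ j, J₀ ≤ j → |g j| ≤ K * ρ^j := by
    intro j hj
    rw [hgid j hj]
    have he := hε j hj
    have habs := abs_le.mp he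
    have hden : (0:ℝ) < (1 - ε j)^2*(c₁^2*α^(2*j)) := by
      have := hεne j hj
      have h1 : (0:ℝ) < (1 - ε j)^2 := by positivity
      have h2 : (0:ℝ) < c₁^2*α^(2*j) := by positivity
      positivity
    rw [abs_div, abs_of_pos hden]
    have hnum : |(ε j)^2*(3 - 2*ε j)| ≤ (ε j)^2 * 4 := by
      rw [abs_mul, abs_pow, sq_abs]
      have : |3 - 2*ε j| ≤ 4 := by
        rw [abs_le]; constructor <;> nlinarith
      nlinarith [sq_nonneg (ε j)]
    have hdlb : (1/4:ℝ)*(c₁^2*α^(2*j)) ≤ (1 - ε j)^2*(c₁^2*α^(2*j)) := by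
      have : (1/4:ℝ) ≤ (1 - ε j)^2 := by nlinarith
      have h2 : (0:ℝ) < c₁^2*α^(2*j) := by positivity
      nlinarith
    calc |(ε j)^2*(3 - 2*ε j)| / ((1 - ε j)^2*(c₁^2*α^(2*j)))
        ≤ ((ε j)^2 * 4) / ((1/4:ℝ)*(c₁^2*α^(2*j))) := by
          apply div_le_div₀ (by positivity) hnum (by positivity) hdlb
      _ = 16 * ((ε j)^2/(c₁^2*α^(2*j))) := by ring
      _ = K * ρ^j := by rw [hεsq j, hKdef]; ring
  -- summability and tsum computations
  have hρm1 : ρ^m < 1 := pow_lt_one₀ hρ0 hρ1 (by omega)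
  have hρm0 : (0:ℝ) ≤ ρ^m := by positivity
  have ha_eq : ∀ s k : ℕ, (c₁^2*α^(2*(s+m*k)))⁻¹ = (c₁^2*α^(2*s))⁻¹ * x^k := by
    intro s k
    have h1 : α^(2*(s+m*k)) = α^(2*s) * (α^(2*m))^k := by
      rw [← pow_mul, ← pow_add]; congr 1; ring
    rw [hxdef, h1]
    have h2 : α^(2*s) ≠ 0 := by positivity
    have h3 : α^(2*m) ≠ 0 := by positivity
    field_simp
    ring_nf
    rw [← mul_pow, mul_inv_cancel₀ hαne, one_pow]
  have hb_eq : ∀ s k : ℕ, 2*c₂*(-q)^(s+m*k)/(c₁^3*α^(4*(s+m*k)))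
      = (2*c₂*(-q)^s/(c₁^3*α^(4*s))) * y^k := by
    intro s k
    have h1 : α^(4*(s+m*k)) = α^(4*s) * (α^(4*m))^k := by
      rw [← pow_mul, ← pow_add]; congr 1; ring
    have h2 : (-q)^(s+m*k) = (-q)^s * ((-q)^m)^k := by rw [← pow_mul, ← pow_add]
    rw [hydef, h1, h2, div_pow]
    have h3 : α^(4*s) ≠ 0 := by positivity
    have h4 : α^(4*m) ≠ 0 := by positivity
    field_simp
  have hpt : ∀ j : ℕ, 1/(w j)^2 = (c₁^2*α^(2*j))⁻¹ + 2*c₂*(-q)^j/(c₁^3*α^(4*j)) + g j := by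
    intro j; rw [hgdef]; ring
  have hsum_a : ∀ s : ℕ, Summable (fun k : ℕ => (c₁^2*α^(2*(s+m*k)))⁻¹) := by
    intro s
    exact ((summable_geometric_of_lt_one hx0.le hx1).mul_left _).congr
      (fun k => (ha_eq s k).symm)
  have hsum_b : ∀ s : ℕ, Summable (fun k : ℕ => 2*c₂*(-q)^(s+m*k)/(c₁^3*α^(4*(s+m*k)))) := by
    intro s
    exact ((summable_geometric_of_abs_lt_one hy1).mul_left _).congr
      (fun k => (hb_eq s k).symm)
  have hgb2 : ∀ s : ℕ, J₀ ≤ s → ∀ k : ℕ, |g (s+m*k)| ≤ (K*ρ^s)*(ρ^m)^k := by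
    intro s hs k
    calc |g (s+m*k)| ≤ K*ρ^(s+m*k) := hgb _ (by omega)
      _ = (K*ρ^s)*(ρ^m)^k := by rw [pow_add, pow_mul]; ring
  have hsum_gabs : ∀ s : ℕ, J₀ ≤ s → Summable (fun k : ℕ => |g (s+m*k)|) := by
    intro s hs
    exact Summable.of_nonneg_of_le (fun k => abs_nonneg _) (hgb2 s hs)
      ((summable_geometric_of_lt_one hρm0 hρm1).mul_left _)
  have hsum_g : ∀ s : ℕ, J₀ ≤ s → Summable (fun k : ℕ => g (s+m*k)) :=
    fun s hs => (hsum_gabs s hs).of_abs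
  have hsum_w : ∀ s : ℕ, J₀ ≤ s → Summable (fun k : ℕ => 1/(w (s+m*k))^2) := by
    intro s hs
    exact (((hsum_a s).add (hsum_b s)).add (hsum_g s hs)).congr
      (fun k => (hpt (s+m*k)).symm)
  have htsum_a : ∀ s : ℕ, ∑' k : ℕ, (c₁^2*α^(2*(s+m*k)))⁻¹ = (c₁^2*α^(2*s))⁻¹ * (1-x)⁻¹ := by
    intro s
    rw [tsum_congr (ha_eq s), tsum_mul_left, tsum_geometric_of_lt_one hx0.le hx1]
  have htsum_b : ∀ s : ℕ, ∑' k : ℕ, 2*c₂*(-q)^(s+m*k)/(c₁^3*α^(4*(s+m*k)))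
      = (2*c₂*(-q)^s/(c₁^3*α^(4*s))) * (1-y)⁻¹ := by
    intro s
    rw [tsum_congr (hb_eq s), tsum_mul_left, tsum_geometric_of_abs_lt_one hy1]
  have hΓb : ∀ s : ℕ, J₀ ≤ s → |∑' k : ℕ, g (s+m*k)| ≤ (K*(1-ρ^m)⁻¹)*ρ^s := by
    intro s hs
    have hnorm : Summable (fun k : ℕ => ‖g (s+m*k)‖) := by
      simpa only [Real.norm_eq_abs] using hsum_gabs s hs
    have h1 : |∑' k : ℕ, g (s+m*k)| ≤ ∑' k : ℕ, |g (s+m*k)| := by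
      have := norm_tsum_le_tsum_norm (f := fun k : ℕ => g (s+m*k)) hnorm
      simpa only [Real.norm_eq_abs] using this
    refine h1.trans ?_
    have h2 : ∑' k : ℕ, |g (s+m*k)| ≤ ∑' k : ℕ, (K*ρ^s)*(ρ^m)^k :=
      Summable.tsum_le_tsum (hgb2 s hs) (hsum_gabs s hs)
        ((summable_geometric_of_lt_one hρm0 hρm1).mul_left _)
    refine h2.trans ?_
    rw [tsum_mul_left, tsum_geometric_of_lt_one hρm0 hρm1]
    ring_nf
    exact le_refl _
  have htsum_w : ∀ s : ℕ, J₀ ≤ s → ∑' k : ℕ, 1/(w (s+m*k))^2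
      = (c₁^2*(1-x))⁻¹/α^(2*s) + (2*c₂/(c₁^3*(1-y)))*(-q)^s/(α^(2*s))^2
        + ∑' k : ℕ, g (s+m*k) := by
    intro s hs
    rw [tsum_congr (fun k => hpt (s+m*k)),
      Summable.tsum_add ((hsum_a s).add (hsum_b s)) (hsum_g s hs),
      Summable.tsum_add (hsum_a s) (hsum_b s), htsum_a, htsum_b]
    have h4s : α^(4*s) = (α^(2*s))^2 := by rw [← pow_mul]; congr 1; ring
    have h2s : (α:ℝ)^(2*s) ≠ 0 := by positivity
    rw [h4s]
    field_simp
  have hSpos : ∀ s : ℕ, J₀ ≤ s → 0 < ∑' k : ℕ, 1/(w (s+m*k))^2 := by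
    intro s hs
    refine Summable.tsum_pos (hsum_w s hs) (fun k => by positivity) 0 ?_
    have hne : w (s+m*0) ≠ 0 := hwne _ (by omega)
    positivity
  -- limit helpers
  have hnle : ∀ n : ℕ, n ≤ T1 + m + m * n := by
    intro n; have := Nat.le_mul_of_pos_left n hm; omega
  have hnle2 : ∀ n : ℕ, n ≤ T1 + m * n := by
    intro n; have := Nat.le_mul_of_pos_left n hm; omega
  have htt : Tendsto (fun n : ℕ => T1 + m + m * n) atTop atTop :=
    tendsto_atTop_mono hnle tendsto_id
  have htt2 : Tendsto (fun n : ℕ => T1 + m * n) atTop atTop :=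
    tendsto_atTop_mono hnle2 tendsto_id
  have hpow1 : ∀ r : ℝ, 0 ≤ r → r < 1 →
      Tendsto (fun n : ℕ => r ^ (T1 + m + m * n)) atTop (nhds 0) :=
    fun r h0 h1 => (tendsto_pow_atTop_nhds_zero_of_lt_one h0 h1).comp htt
  have hpow2 : ∀ r : ℝ, 0 ≤ r → r < 1 →
      Tendsto (fun n : ℕ => r ^ (T1 + m * n)) atTop (nhds 0) :=
    fun r h0 h1 => (tendsto_pow_atTop_nhds_zero_of_lt_one h0 h1).comp htt2
  set C2 : ℝ := K * (1-ρ^m)⁻¹ with hC2def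
  have hK0 : 0 ≤ K := by rw [hKdef]; positivity
  have hC2 : 0 ≤ C2 := by
    rw [hC2def]
    have : (0:ℝ) < 1 - ρ^m := by linarith
    positivity
  set r1 : ℝ := q^2/α^2 with hr1def
  have hr10 : 0 ≤ r1 := by positivity
  have hr11 : r1 < 1 := by rw [hr1def, div_lt_one (by positivity)]; exact hq2
  set r2 : ℝ := |q|^3/α^4 with hr2def
  have hr20 : 0 ≤ r2 := by positivity
  have hr21 : r2 < 1 := by
    rw [hr2def, div_lt_one (by positivity)]
    have h1 : |q|^3 < α^3 := by
      have := pow_lt_pow_left₀ hqα hq0 (n := 3)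
      simpa using this
    have h2 : α^3 ≤ α^4 := pow_le_pow_right₀ (le_of_lt hα1) (by omega)
    linarith
  set r3 : ℝ := q^2/α^4 with hr3def
  have hr30 : 0 ≤ r3 := by positivity
  have hr31 : r3 < 1 := by
    rw [hr3def, div_lt_one (by positivity)]
    have h2 : α^2 ≤ α^4 := pow_le_pow_right₀ (le_of_lt hα1) (by omega)
    linarith
  have hrq0 : (0:ℝ) ≤ |q|/α^2 := by positivity
  -- pointwise power identities
  have hA4 : ∀ j : ℕ, ((α^(2*j)):ℝ)^2 = (α^4)^j := by
    intro j; rw [← pow_mul, ← pow_mul]; congr 1; ring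
  have hA2 : ∀ j : ℕ, (α:ℝ)^(2*j) = (α^2)^j := fun j => pow_mul α 2 j
  have hβ2j : ∀ j : ℕ, (β:ℝ)^(2*j) = (β^2)^j := fun j => pow_mul β 2 j
  have hN2 : ∀ j : ℕ, (((-q):ℝ)^j)^2 = (q^2)^j := by
    intro j; rw [pow_right_comm, neg_sq]
  have idz1 : ∀ j : ℕ, ((α^(2*j)):ℝ)^2 * ρ^j = r1^j := by
    intro j
    have hb : (α^4) * ρ = r1 := by rw [hρdef, hr1def]; field_simp
    calc ((α^(2*j)):ℝ)^2 * ρ^j = (α^4)^j * ρ^j := by rw [hA4]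
      _ = ((α^4)*ρ)^j := (mul_pow _ _ j).symm
      _ = r1^j := by rw [hb]
  have idz2 : ∀ j : ℕ, (((-q):ℝ)^j)^2 / α^(2*j) = r1^j := by
    intro j
    rw [hN2, hA2, hr1def, div_pow]
  have idz3 : ∀ j : ℕ, |q|^j * ((α:ℝ)^(2*j) * ρ^j) = r2^j := by
    intro j
    have hb : |q| * ((α^2) * ρ) = r2 := by
      rw [hρdef, hr2def]
      field_simp
      rw [← sq_abs q]; ring
    calc |q|^j * ((α:ℝ)^(2*j) * ρ^j) = |q|^j * ((α^2)^j * ρ^j) := by rw [hA2]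
      _ = (|q| * ((α^2) * ρ))^j := by rw [mul_pow, mul_pow]
      _ = r2^j := by rw [hb]
  have idz4 : ∀ j : ℕ, (α:ℝ)^(2*j) * ρ^j = r3^j := by
    intro j
    have hb : (α^2) * ρ = r3 := by rw [hρdef, hr3def]; field_simp
    calc (α:ℝ)^(2*j) * ρ^j = (α^2)^j * ρ^j := by rw [hA2]
      _ = ((α^2)*ρ)^j := (mul_pow _ _ j).symm
      _ = r3^j := by rw [hb]
  have idqA : ∀ j : ℕ, |((-q):ℝ)^j| / α^(2*j) = (|q|/α^2)^j := by
    intro j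
    rw [abs_pow, abs_neg, hA2, div_pow]
  have hsJ : ∀ n : ℕ, J₀ ≤ n → J₀ ≤ T1 + m + m * n := fun n hn => le_trans hn (hnle n)
  have hc2pos : 0 < c₁^2 := by rw [← sq_abs]; exact pow_pos (abs_pos.mpr hc₁) 2
  have h1x : (0:ℝ) < 1 - x := by linarith
  have hP1pos : (0:ℝ) < (c₁^2*(1-x))⁻¹ := inv_pos.mpr (mul_pos hc2pos h1x)
  have hP1ne : ((c₁^2*(1-x))⁻¹ : ℝ) ≠ 0 := ne_of_gt hP1pos
  -- the key pointwise identity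
  have hev : ∀ n : ℕ, J₀ ≤ n →
      (∑' k : ℕ, 1 / (w (T1 + m + m * n + m * k)) ^ 2)⁻¹ -
        ((w (T1 + m + m * n)) ^ 2 - (w (T1 + m * n)) ^ 2
          + 2*c₁*c₂*((-q)^(T1+m+m*n) - (-q)^(T1+m*n))
          - 2*c₁*c₂*D*(-q)^(T1+m+m*n))
      = (-( c₁^2*(1-x)*(α^(2*(T1+m+m*n)))^2*(∑' k : ℕ, g (T1+m+m*n+m*k))
          + (-2*c₁*c₂*D)*(2*c₂/(c₁^3*(1-y)))*((-q)^(T1+m+m*n))^2/(α^(2*(T1+m+m*n)))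
          + (-2*c₁*c₂*D)*((-q)^(T1+m+m*n))*(α^(2*(T1+m+m*n)))*(∑' k : ℕ, g (T1+m+m*n+m*k))
          + c₂^2*((β^(2*(T1+m+m*n))) - (β^(2*(T1+m*n))))*((c₁^2*(1-x))⁻¹
              + (2*c₂/(c₁^3*(1-y)))*((-q)^(T1+m+m*n))/(α^(2*(T1+m+m*n)))
              + (α^(2*(T1+m+m*n)))*(∑' k : ℕ, g (T1+m+m*n+m*k))) ))
        * ((c₁^2*(1-x))⁻¹
              + (2*c₂/(c₁^3*(1-y)))*((-q)^(T1+m+m*n))/(α^(2*(T1+m+m*n)))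
              + (α^(2*(T1+m+m*n)))*(∑' k : ℕ, g (T1+m+m*n+m*k)))⁻¹ := by
    intro n hn
    have hs := hsJ n hn
    have hSdec := htsum_w (T1+m+m*n) hs
    have hSpos' := hSpos (T1+m+m*n) hs
    have hSne := ne_of_gt hSpos'
    have hAne : (α:ℝ)^(2*(T1+m+m*n)) ≠ 0 := by positivity
    have hAx : (α:ℝ)^(2*(T1+m+m*n)) * x = (α^(T1+m*n))^2 := by
      rw [hxdef, show 2*(T1+m+m*n) = 2*(T1+m*n)+2*m by ring, pow_add,
        mul_inv_cancel_right₀ (by positivity : (α:ℝ)^(2*m) ≠ 0), pow_mul']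
    have hA' : (α:ℝ)^(2*(T1+m+m*n)) = (α^(T1+m+m*n))^2 := by rw [pow_mul']
    have hβ' : (β:ℝ)^(2*(T1+m+m*n)) = (β^(T1+m+m*n))^2 := by rw [pow_mul']
    have hβ'' : (β:ℝ)^(2*(T1+m*n)) = (β^(T1+m*n))^2 := by rw [pow_mul']
    have hab1 : ((-q):ℝ)^(T1+m+m*n) = α^(T1+m+m*n)*β^(T1+m+m*n) := by
      rw [← mul_pow, hq]
    have hab2 : ((-q):ℝ)^(T1+m*n) = α^(T1+m*n)*β^(T1+m*n) := by
      rw [← mul_pow, hq]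
    have hE : (w (T1 + m + m * n)) ^ 2 - (w (T1 + m * n)) ^ 2
          + 2*c₁*c₂*((-q)^(T1+m+m*n) - (-q)^(T1+m*n))
          - 2*c₁*c₂*D*(-q)^(T1+m+m*n)
        = c₁^2*((α^(2*(T1+m+m*n))) - (α^(2*(T1+m+m*n)))*x)
          + c₂^2*((β^(2*(T1+m+m*n))) - (β^(2*(T1+m*n))))
          - 2*c₁*c₂*D*((-q)^(T1+m+m*n)) := by
      rw [hw, hw, hAx, hA', hβ', hβ'', hab1, hab2]
      ring
    rw [hE]
    have halg := horadam_alg c₁ c₂ D (α^(2*(T1+m+m*n))) ((-q)^(T1+m+m*n)) x y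
      (∑' k : ℕ, g (T1+m+m*n+m*k)) (β^(2*(T1+m+m*n))) (β^(2*(T1+m*n)))
      (∑' k : ℕ, 1/(w (T1+m+m*n+m*k))^2) hAne hc₁ hxne hyne hDrel hSdec
    have hΦeq : (α:ℝ)^(2*(T1+m+m*n)) * (∑' k : ℕ, 1/(w (T1+m+m*n+m*k))^2)
        = (c₁^2*(1-x))⁻¹
          + (2*c₂/(c₁^3*(1-y)))*((-q)^(T1+m+m*n))/(α^(2*(T1+m+m*n)))
          + (α^(2*(T1+m+m*n)))*(∑' k : ℕ, g (T1+m+m*n+m*k)) := by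
      rw [hSdec]
      field_simp
    have hstep : (∑' k : ℕ, 1/(w (T1+m+m*n+m*k))^2)⁻¹ -
          (c₁^2*((α^(2*(T1+m+m*n))) - (α^(2*(T1+m+m*n)))*x)
            + c₂^2*((β^(2*(T1+m+m*n))) - (β^(2*(T1+m*n))))
            - 2*c₁*c₂*D*((-q)^(T1+m+m*n)))
        = ((α^(2*(T1+m+m*n))) * (1 - (c₁^2*((α^(2*(T1+m+m*n))) - (α^(2*(T1+m+m*n)))*x)
            + c₂^2*((β^(2*(T1+m+m*n))) - (β^(2*(T1+m*n))))
            - 2*c₁*c₂*D*((-q)^(T1+m+m*n))) * (∑' k : ℕ, 1/(w (T1+m+m*n+m*k))^2)))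
          * ((α^(2*(T1+m+m*n))) * (∑' k : ℕ, 1/(w (T1+m+m*n+m*k))^2))⁻¹ := by
      field_simp
    rw [hstep, halg, hΦeq]
  -- the four vanishing pieces
  have hz1 : Tendsto (fun n : ℕ =>
      c₁^2*(1-x)*(α^(2*(T1+m+m*n)))^2*(∑' k : ℕ, g (T1+m+m*n+m*k))) atTop (nhds 0) := by
    apply squeeze_zero_norm' (a := fun n : ℕ => (|c₁^2*(1-x)| *C2) * r1^(T1+m+m*n))
    · filter_upwards [eventually_ge_atTop J₀] with n hn
      have hs := hsJ n hn
      have hApos : (0:ℝ) < (α^(2*(T1+m+m*n)))^2 := by positivity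
      calc ‖c₁^2*(1-x)*(α^(2*(T1+m+m*n)))^2*(∑' k : ℕ, g (T1+m+m*n+m*k))‖
          = |c₁^2*(1-x)| * ((α^(2*(T1+m+m*n)))^2) * |∑' k : ℕ, g (T1+m+m*n+m*k)| := by
            rw [Real.norm_eq_abs, abs_mul, abs_mul, abs_of_pos hApos]
        _ ≤ |c₁^2*(1-x)| * ((α^(2*(T1+m+m*n)))^2) * (C2 * ρ^(T1+m+m*n)) := by
            gcongr
            exact hΓb _ hs
        _ = (|c₁^2*(1-x)| *C2) * r1^(T1+m+m*n) := by
            rw [show |c₁^2*(1-x)| * ((α^(2*(T1+m+m*n)))^2) * (C2 * ρ^(T1+m+m*n))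
              = (|c₁^2*(1-x)| *C2) * ((α^(2*(T1+m+m*n)))^2 * ρ^(T1+m+m*n)) by ring, idz1]
    · simpa only [mul_zero] using (hpow1 r1 hr10 hr11).const_mul (|c₁^2*(1-x)| *C2)
  have hz2 : Tendsto (fun n : ℕ =>
      (-2*c₁*c₂*D)*(2*c₂/(c₁^3*(1-y)))*((-q)^(T1+m+m*n))^2/(α^(2*(T1+m+m*n)))) atTop (nhds 0) := by
    have h := (hpow1 r1 hr10 hr11).const_mul ((-2*c₁*c₂*D)*(2*c₂/(c₁^3*(1-y))))
    simp only [mul_zero] at h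
    exact h.congr (fun n => by rw [← idz2 (T1+m+m*n)]; ring)
  have hz3 : Tendsto (fun n : ℕ =>
      (-2*c₁*c₂*D)*((-q)^(T1+m+m*n))*(α^(2*(T1+m+m*n)))*(∑' k : ℕ, g (T1+m+m*n+m*k))) atTop (nhds 0) := by
    apply squeeze_zero_norm' (a := fun n : ℕ => (|(-2*c₁*c₂*D)| *C2) * r2^(T1+m+m*n))
    · filter_upwards [eventually_ge_atTop J₀] with n hn
      have hs := hsJ n hn
      calc ‖(-2*c₁*c₂*D)*((-q)^(T1+m+m*n))*(α^(2*(T1+m+m*n)))*(∑' k : ℕ, g (T1+m+m*n+m*k))‖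
          = |(-2*c₁*c₂*D)| * (|q|^(T1+m+m*n) * ((α^(2*(T1+m+m*n))) * |∑' k : ℕ, g (T1+m+m*n+m*k)|)) := by
            rw [Real.norm_eq_abs, abs_mul, abs_mul, abs_mul, abs_pow, abs_neg,
              abs_of_pos (pow_pos hα0 (2*(T1+m+m*n)))]
            ring
        _ ≤ |(-2*c₁*c₂*D)| * (|q|^(T1+m+m*n) * ((α^(2*(T1+m+m*n))) * (C2 * ρ^(T1+m+m*n)))) := by
            gcongr
            exact hΓb _ hs
        _ = (|(-2*c₁*c₂*D)| *C2) * r2^(T1+m+m*n) := by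
            rw [show |q|^(T1+m+m*n) * ((α^(2*(T1+m+m*n))) * (C2 * ρ^(T1+m+m*n)))
              = C2 * (|q|^(T1+m+m*n) * ((α^(2*(T1+m+m*n))) * ρ^(T1+m+m*n))) by ring, idz3]
            ring
    · simpa using (hpow1 r2 hr20 hr21).const_mul (|(-2*c₁*c₂*D)| *C2)
  -- Φ limit
  have hpart2 : Tendsto (fun n : ℕ =>
      (2*c₂/(c₁^3*(1-y)))*((-q)^(T1+m+m*n))/(α^(2*(T1+m+m*n)))) atTop (nhds 0) := by
    apply squeeze_zero_norm' (a := fun n : ℕ => |2*c₂/(c₁^3*(1-y))| * (|q|/α^2)^(T1+m+m*n))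
    · filter_upwards with n
      have : ‖(2*c₂/(c₁^3*(1-y)))*((-q)^(T1+m+m*n))/(α^(2*(T1+m+m*n)))‖
          = |2*c₂/(c₁^3*(1-y))| * (|(-q)^(T1+m+m*n)| / (α^(2*(T1+m+m*n)))) := by
        rw [Real.norm_eq_abs, abs_div, abs_mul, abs_of_pos (pow_pos hα0 (2*(T1+m+m*n))),
          mul_div_assoc]
      rw [this, idqA]
    · simpa using (hpow1 (|q|/α^2) hrq0 hrq).const_mul (|2*c₂/(c₁^3*(1-y))|)
  have hpart3 : Tendsto (fun n : ℕ =>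
      (α^(2*(T1+m+m*n)))*(∑' k : ℕ, g (T1+m+m*n+m*k))) atTop (nhds 0) := by
    apply squeeze_zero_norm' (a := fun n : ℕ => C2 * r3^(T1+m+m*n))
    · filter_upwards [eventually_ge_atTop J₀] with n hn
      have hs := hsJ n hn
      calc ‖(α^(2*(T1+m+m*n)))*(∑' k : ℕ, g (T1+m+m*n+m*k))‖
          = (α^(2*(T1+m+m*n))) * |∑' k : ℕ, g (T1+m+m*n+m*k)| := by
            rw [Real.norm_eq_abs, abs_mul, abs_of_pos (pow_pos hα0 (2*(T1+m+m*n)))]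
        _ ≤ (α^(2*(T1+m+m*n))) * (C2 * ρ^(T1+m+m*n)) := by
            gcongr
            exact hΓb _ hs
        _ = C2 * r3^(T1+m+m*n) := by
            rw [show (α^(2*(T1+m+m*n))) * (C2 * ρ^(T1+m+m*n))
              = C2 * ((α^(2*(T1+m+m*n))) * ρ^(T1+m+m*n)) by ring, idz4]
    · simpa using (hpow1 r3 hr30 hr31).const_mul C2
  have hΦlim : Tendsto (fun n : ℕ => (c₁^2*(1-x))⁻¹
      + (2*c₂/(c₁^3*(1-y)))*((-q)^(T1+m+m*n))/(α^(2*(T1+m+m*n)))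
      + (α^(2*(T1+m+m*n)))*(∑' k : ℕ, g (T1+m+m*n+m*k))) atTop (nhds ((c₁^2*(1-x))⁻¹)) := by
    have h := (tendsto_const_nhds (x := ((c₁^2*(1-x))⁻¹ : ℝ)) (f := atTop)).add hpart2 |>.add hpart3
    simpa using h
  have hβ20 : (0:ℝ) ≤ β^2 := sq_nonneg β
  have hβ21 : β^2 < 1 := by nlinarith [sq_abs β, abs_nonneg β]
  have hz4 : Tendsto (fun n : ℕ =>
      c₂^2*((β^(2*(T1+m+m*n))) - (β^(2*(T1+m*n))))*((c₁^2*(1-x))⁻¹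
        + (2*c₂/(c₁^3*(1-y)))*((-q)^(T1+m+m*n))/(α^(2*(T1+m+m*n)))
        + (α^(2*(T1+m+m*n)))*(∑' k : ℕ, g (T1+m+m*n+m*k)))) atTop (nhds 0) := by
    have hfac : Tendsto (fun n : ℕ =>
        c₂^2*((β^(2*(T1+m+m*n))) - (β^(2*(T1+m*n))))) atTop (nhds 0) := by
      have h := ((hpow1 (β^2) hβ20 hβ21).sub (hpow2 (β^2) hβ20 hβ21)).const_mul (c₂^2)
      simp only [sub_self, mul_zero] at h
      exact h.congr (fun n => by rw [← hβ2j (T1+m+m*n), ← hβ2j (T1+m*n)])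
    have h := hfac.mul hΦlim
    simpa using h
  have hZlim := (((hz1.add hz2).add hz3).add hz4).neg
  simp only [add_zero, neg_zero] at hZlim
  have hfinal := hZlim.mul (hΦlim.inv₀ hP1ne)
  simp only [zero_mul] at hfinal
  refine Tendsto.congr' ?_ hfinal
  filter_upwards [eventually_ge_atTop J₀] with n hn
  exact (hev n hn).symm

set_option maxHeartbeats 1000000 in
theorem horadam_reciprocal_square_tail_asymptotic
    (a b p q : ℤ) (hp : 0 < p) (m : ℕ) (hm : 0 < m) (l : ℤ) (hl : 1 - (m : ℤ) ≤ l)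
    (hD : 0 < p ^ 2 + 4 * q)
    (hcond : (p : ℝ) ^ 2 + 2 * q - 2 < p * Real.sqrt ((p : ℝ) ^ 2 + 4 * q))
    (W : ℕ → ℤ) (hW0 : W 0 = a) (hW1 : W 1 = b)
    (hWrec : ∀ n, 2 ≤ n → W n = p * W (n - 1) + q * W (n - 2))
    (α β c₁ c₂ : ℝ)
    (hα : α = ((p : ℝ) + Real.sqrt ((p : ℝ) ^ 2 + 4 * q)) / 2)
    (hβ : β = ((p : ℝ) - Real.sqrt ((p : ℝ) ^ 2 + 4 * q)) / 2)
    (hc₁ : c₁ = ((b : ℝ) - a * β) / (α - β))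
    (hc₂ : c₂ = ((b : ℝ) - a * α) / (α - β))
    (hc₁ne : c₁ ≠ 0)
    (hWne : ∃ n₀ : ℕ, ∀ k ≥ n₀, W ((m : ℤ) * (k : ℤ) + l).toNat ≠ 0) :
    Filter.Tendsto
      (fun n : ℕ =>
        (∑' k : ℕ, (1 : ℝ) / (W ((m : ℤ) * ((n : ℤ) + (k : ℤ)) + l).toNat : ℝ) ^ 2)⁻¹ -
          ((W ((m : ℤ) * (n : ℤ) + l).toNat : ℝ) ^ 2 -
            (W ((m : ℤ) * ((n : ℤ) - 1) + l).toNat : ℝ) ^ 2 +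
            2 * c₁ * c₂ * ((-q : ℝ)) ^ ((m : ℤ) * (n : ℤ) + l) *
              (1 - ((-q : ℝ)) ^ (-(m : ℤ)) -
                (α ^ (2 * m) - 1) ^ 2 / (α ^ m * (α ^ (3 * m) - β ^ m)))))
      Filter.atTop (nhds 0) := by
  set Dv : ℝ := (α ^ (2 * m) - 1) ^ 2 / (α ^ m * (α ^ (3 * m) - β ^ m)) with hDvdef
  set s : ℝ := Real.sqrt ((p:ℝ)^2+4*q) with hsdef
  have hpos : (0:ℝ) < (p:ℝ)^2+4*q := by exact_mod_cast hD
  have hs2 : s^2 = (p:ℝ)^2+4*q := Real.sq_sqrt (le_of_lt hpos)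
  have hspos : 0 < s := Real.sqrt_pos.mpr hpos
  have hαβdiff : α - β = s := by rw [hα, hβ]; ring
  have hne : α - β ≠ 0 := by rw [hαβdiff]; exact ne_of_gt hspos
  have hαβ : α*β = -(q:ℝ) := by rw [hα, hβ]; linear_combination (-(1:ℝ)/4)*hs2
  have hppos : (0:ℝ) < p := by exact_mod_cast hp
  have hα0 : 0 < α := by rw [hα]; positivity
  have hα2 : α^2 = p*α + q := by rw [hα]; linear_combination hs2/4
  have hβ2 : β^2 = p*β + q := by rw [hβ]; linear_combination hs2/4
  have hc12a : c₁ - c₂ = (a:ℝ) := by rw [hc₁, hc₂]; field_simp; ring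
  have hc12b : c₁*α - c₂*β = (b:ℝ) := by rw [hc₁, hc₂]; field_simp; ring
  have hBinet : ∀ j : ℕ, ((W j : ℝ)) = c₁*α^j - c₂*β^j := by
    intro j
    induction j using Nat.strong_induction_on with
    | _ j ih =>
      match j with
      | 0 => rw [hW0]; simpa using by linarith [hc12a]
      | 1 => rw [hW1]; simpa using by linarith [hc12b]
      | (j+2) =>
        have h1 := ih (j+1) (by omega)
        have h0 := ih j (by omega)
        have hrec := hWrec (j+2) (by omega)
        have e1 : j+2-1 = j+1 := by omega
        have e2 : j+2-2 = j := by omega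
        rw [e1, e2] at hrec
        rw [hrec]
        push_cast
        rw [h1, h0]
        have ha : α^(j+2) = α^j * α^2 := by ring
        have hb : β^(j+2) = β^j * β^2 := by ring
        rw [ha, hb, hα2, hβ2]
        ring
  have hβsq : β^2 < 1 := by rw [hβ]; nlinarith [hs2]
  have habsβ : |β| < 1 := by rw [abs_lt]; constructor <;> nlinarith [hβsq]
  by_cases hdeg : p = 1 ∧ q = 0
  · -- degenerate case: α = 1, the series diverges and everything vanishes
    obtain ⟨hp1, hq0⟩ := hdeg
    subst hp1 hq0
    have hs1 : s = 1 := by rw [hsdef]; norm_num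
    have hαv : α = 1 := by rw [hα, hs1]; norm_num
    have hβv : β = 0 := by rw [hβ, hs1]; norm_num
    have hWc : ∀ j : ℕ, 1 ≤ j → ((W j : ℝ)) = c₁ := by
      intro j hj
      rw [hBinet j, hαv, hβv, one_pow, zero_pow (by omega : j ≠ 0)]
      ring
    refine Filter.Tendsto.congr' ?_ (tendsto_const_nhds (x := (0:ℝ)))
    filter_upwards [Filter.eventually_ge_atTop (l.natAbs + 2)] with n hn
    have hnz : ((l.natAbs + 2 : ℕ) : ℤ) ≤ (n:ℤ) := by exact_mod_cast hn
    have hlabs : -|l| ≤ l := neg_abs_le l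
    have hidx1 : ∀ k : ℕ, 1 ≤ ((m:ℤ)*((n:ℤ)+(k:ℤ))+l).toNat := by
      intro k
      have h1 : ((n:ℤ)+(k:ℤ)) ≤ (m:ℤ)*((n:ℤ)+(k:ℤ)) :=
        le_mul_of_one_le_left (by positivity) (by exact_mod_cast hm)
      have h2 : (1:ℤ) ≤ (m:ℤ)*((n:ℤ)+(k:ℤ))+l := by
        have hk : (0:ℤ) ≤ (k:ℤ) := Int.natCast_nonneg k
        push_cast at hnz
        linarith [hlabs]
      omega
    have hidx2 : 1 ≤ ((m:ℤ)*(n:ℤ)+l).toNat := by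
      have h1 : ((n:ℤ)) ≤ (m:ℤ)*(n:ℤ) :=
        le_mul_of_one_le_left (by positivity) (by exact_mod_cast hm)
      have h2 : (1:ℤ) ≤ (m:ℤ)*(n:ℤ)+l := by
        push_cast at hnz
        linarith [hlabs]
      omega
    have hidx3 : 1 ≤ ((m:ℤ)*((n:ℤ)-1)+l).toNat := by
      have h1 : ((n:ℤ)-1) ≤ (m:ℤ)*((n:ℤ)-1) :=
        le_mul_of_one_le_left (by push_cast at hnz; linarith [hlabs, abs_nonneg l]) (by exact_mod_cast hm)
      have h2 : (1:ℤ) ≤ (m:ℤ)*((n:ℤ)-1)+l := by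
        push_cast at hnz
        linarith [hlabs]
      omega
    have hc₁2 : (0:ℝ) < c₁^2 := by rw [← sq_abs]; exact pow_pos (abs_pos.mpr hc₁ne) 2
    have hnsum : ¬ Summable (fun k : ℕ =>
        (1 : ℝ) / (W ((m : ℤ) * ((n : ℤ) + (k : ℤ)) + l).toNat : ℝ) ^ 2) := by
      intro hS
      have hconst : ∀ k : ℕ, (1 : ℝ) / (W ((m : ℤ) * ((n : ℤ) + (k : ℤ)) + l).toNat : ℝ) ^ 2
          = 1/c₁^2 := by
        intro k
        rw [hWc _ (hidx1 k)]
      have h0 := hS.tendsto_atTop_zero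
      have h1 : Filter.Tendsto (fun _ : ℕ => (1:ℝ)/c₁^2) Filter.atTop (nhds 0) :=
        h0.congr hconst
      have h2 : (1:ℝ)/c₁^2 = 0 := (tendsto_nhds_unique h1 tendsto_const_nhds).symm
      rw [div_eq_zero_iff] at h2
      rcases h2 with h2 | h2
      · norm_num at h2
      · exact absurd h2 (ne_of_gt hc₁2)
    have hzp : ((-(((0:ℤ)):ℝ))) ^ ((m:ℤ)*(n:ℤ)+l) = 0 := by
      have hne0 : (m:ℤ)*(n:ℤ)+l ≠ 0 := by
        have h1 : ((n:ℤ)) ≤ (m:ℤ)*(n:ℤ) :=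
          le_mul_of_one_le_left (by positivity) (by exact_mod_cast hm)
        push_cast at hnz
        have h2 : (1:ℤ) ≤ (m:ℤ)*(n:ℤ)+l := by linarith [hlabs]
        exact ne_of_gt (lt_of_lt_of_le zero_lt_one h2)
      simp only [Int.cast_zero, neg_zero]
      exact zero_zpow _ hne0
    rw [tsum_eq_zero_of_not_summable hnsum, inv_zero,
      hWc _ hidx2, hWc _ hidx3]
    push_cast
    push_cast at hzp
    rw [hzp]
    ring
  · -- nondegenerate case
    have hα1 : 1 < α := by
      rcases eq_or_lt_of_le (show (1:ℤ) ≤ p from hp) with h1 | h2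
      · have hq1 : 1 ≤ q := by
          rcases Decidable.lt_or_eq_of_le (show (0:ℤ) ≤ q by nlinarith [hD, h1]) with h | h
          · omega
          · exact absurd ⟨h1.symm, h.symm⟩ hdeg
        have h5 : (5:ℝ) ≤ (p:ℝ)^2+4*q := by
          have : (5:ℤ) ≤ p^2+4*q := by nlinarith
          exact_mod_cast this
        have hs5 : 2 < s := by nlinarith [hs2, hspos]
        rw [hα]
        have : (1:ℝ) ≤ (p:ℝ) := by exact_mod_cast h1.le
        linarith
      · have h2' : (2:ℝ) ≤ (p:ℝ) := by exact_mod_cast h2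
        rw [hα]
        linarith
    have hαm1 : (1:ℝ) < α^m := one_lt_pow₀ hα1 (by omega)
    have hβm3 : β^m < (α^m)^3 := by
      have h1 : β^m ≤ |β|^m := by rw [← abs_pow]; exact le_abs_self _
      have h3 : |β|^m < 1 := pow_lt_one₀ (abs_nonneg β) habsβ (by omega)
      have h4 : (1:ℝ) < (α^m)^3 := one_lt_pow₀ hαm1 (by norm_num)
      linarith
    have hm3 : α^(3*m) = (α^m)^3 := by rw [pow_mul']
    have hβm3' : β^m < α^(3*m) := by rw [hm3]; exact hβm3
    have hDrel : Dv * (1 - (-(q:ℝ))^m / α^(4*m)) = (1 - (α^(2*m))⁻¹)^2 := by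
      have hma : α^(2*m) = (α^m)^2 := by rw [pow_mul']
      have hm4 : α^(4*m) = (α^m)^4 := by rw [pow_mul']
      have hqm : (-(q:ℝ))^m = α^m * β^m := by rw [← hαβ, mul_pow]
      have hd1 : (α^m)^3 - β^m ≠ 0 := ne_of_gt (by linarith)
      have ham : (α:ℝ)^m ≠ 0 := by positivity
      rw [hDvdef, hma, hm3, hm4, hqm]
      field_simp
    set N₀ : ℕ := l.natAbs + m + 1 with hN₀def
    have hN₀z : ((N₀:ℕ):ℤ) = |l| + m + 1 := by rw [hN₀def]; push_cast; ring
    have hlabs : -|l| ≤ l := neg_abs_le l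
    have hT0ge : (m:ℤ) + 1 ≤ (m:ℤ)*N₀ + l := by
      have h1 : ((N₀:ℕ):ℤ) ≤ (m:ℤ)*N₀ :=
        le_mul_of_one_le_left (by positivity) (by exact_mod_cast hm)
      linarith [hN₀z, hlabs]
    set T0 : ℕ := ((m:ℤ)*N₀ + l).toNat with hT0def
    have hT0z : (T0:ℤ) = (m:ℤ)*N₀ + l := Int.toNat_of_nonneg (by linarith)
    have hT0m' : (m:ℤ)+1 ≤ (T0:ℤ) := by rw [hT0z]; exact hT0ge
    have hT0m : m+1 ≤ T0 := by exact_mod_cast hT0m'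
    set T1 : ℕ := T0 - m with hT1def
    have hT0eq : T0 = T1 + m := by omega
    have hT11 : 1 ≤ T1 := by omega
    have hT1z : ((T1:ℕ):ℤ) + m = (m:ℤ)*N₀ + l := by
      have : ((T1:ℕ):ℤ) + m = (T0:ℤ) := by omega
      rw [this, hT0z]
    have hidxz : ∀ n k : ℕ, (m:ℤ)*(((n+N₀ : ℕ):ℤ)+(k:ℤ))+l = ((T1+m+m*n+m*k : ℕ):ℤ) := by
      intro n k; push_cast; linear_combination -hT1z
    have hidx : ∀ n k : ℕ, ((m:ℤ)*(((n+N₀:ℕ):ℤ)+(k:ℤ))+l).toNat = T1+m+m*n+m*k :=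
      fun n k => by rw [hidxz n k, Int.toNat_natCast]
    have hidx0z : ∀ n : ℕ, (m:ℤ)*((n+N₀:ℕ):ℤ)+l = ((T1+m+m*n : ℕ):ℤ) := by
      intro n; push_cast; linear_combination -hT1z
    have hidx0 : ∀ n : ℕ, ((m:ℤ)*((n+N₀:ℕ):ℤ)+l).toNat = T1+m+m*n :=
      fun n => by rw [hidx0z n, Int.toNat_natCast]
    have hidx1z : ∀ n : ℕ, (m:ℤ)*(((n+N₀:ℕ):ℤ)-1)+l = ((T1+m*n : ℕ):ℤ) := by
      intro n; push_cast; linear_combination -hT1z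
    have hidx1 : ∀ n : ℕ, ((m:ℤ)*(((n+N₀:ℕ):ℤ)-1)+l).toNat = T1+m*n :=
      fun n => by rw [hidx1z n, Int.toNat_natCast]
    have hNY : ∀ n : ℕ, ((-(q:ℝ))^(T1+m+m*n)) * ((-(q:ℝ)))^(-(m:ℤ)) = (-(q:ℝ))^(T1+m*n) := by
      intro n
      by_cases hq0 : (q:ℝ) = 0
      · rw [hq0, neg_zero, zero_pow (by omega : T1+m+m*n ≠ 0),
          zero_pow (by omega : T1+m*n ≠ 0), zero_mul]
      · have hneq : (-(q:ℝ)) ≠ 0 := neg_ne_zero.mpr hq0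
        rw [← zpow_natCast (-(q:ℝ)) (T1+m+m*n), ← zpow_natCast (-(q:ℝ)) (T1+m*n),
          ← zpow_add₀ hneq]
        congr 1
        push_cast; ring
    have haux := horadam_aux α β c₁ c₂ (q:ℝ) Dv m T1 hm hα1 habsβ hαβ hc₁ne hDrel
      (fun j : ℕ => c₁*α^j - c₂*β^j) (fun j => rfl)
    refine (Filter.tendsto_add_atTop_iff_nat N₀).mp ?_
    refine Filter.Tendsto.congr (fun n => ?_) haux
    beta_reduce
    rw [tsum_congr (fun k : ℕ => by
      rw [hidx n k, hBinet (T1+m+m*n+m*k)] :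
      ∀ k : ℕ, (1 : ℝ) / (W ((m:ℤ)*(((n+N₀:ℕ):ℤ)+(k:ℤ))+l).toNat : ℝ) ^ 2
        = 1 / (c₁*α^(T1+m+m*n+m*k) - c₂*β^(T1+m+m*n+m*k)) ^ 2)]
    rw [hidx0 n, hidx1 n, hBinet (T1+m+m*n), hBinet (T1+m*n), hidx0z n, zpow_natCast]
    linear_combination (-2*c₁*c₂) * hNY n
end

section
/- For the Fibonacci sequence Fₙ (F₀=0, F₁=1), lim_{n→∞} [ (∑_{k=n}^∞ 1/F_k)^{-1} − F_{n−2} ] = 0. -/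
open Filter Topology Finset

noncomputable def fr (k : ℕ) : ℝ := 1 / Nat.fib k

lemma fr_nonneg (k : ℕ) : 0 ≤ fr k := by
  unfold fr; positivity

lemma fibR_pos (k : ℕ) : 0 < (Nat.fib (k + 1) : ℝ) := by
  exact_mod_cast Nat.fib_pos.mpr k.succ_pos

lemma summable_fr : Summable fr := by
  apply summable_of_ratio_norm_eventually_le (r := 2/3) (by norm_num)
  filter_upwards [eventually_ge_atTop 2] with k hk
  obtain ⟨j, rfl⟩ := Nat.exists_eq_add_of_le' hk
  have key : 3 * Nat.fib (j + 2) ≤ 2 * Nat.fib (j + 3) := by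
    have h2 := Nat.fib_add_two (n := j)
    have h3 : Nat.fib (j + 3) = Nat.fib (j + 1) + Nat.fib (j + 2) := Nat.fib_add_two
    have hm : Nat.fib j ≤ Nat.fib (j + 1) := Nat.fib_le_fib_succ
    omega
  have keyR : 3 * (Nat.fib (j + 2) : ℝ) ≤ 2 * (Nat.fib (j + 3) : ℝ) := by exact_mod_cast key
  have p2 : (0:ℝ) < Nat.fib (j + 2) := fibR_pos _
  have p3 : (0:ℝ) < Nat.fib (j + 3) := fibR_pos _
  simp only [fr, Real.norm_eq_abs, abs_of_nonneg (fr_nonneg _)]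
  rw [show (2:ℝ)/3 * |1 / (Nat.fib (j+2):ℝ)| = 2 / (3 * Nat.fib (j+2)) by
    rw [abs_of_pos (by positivity)]; ring]
  rw [show j + 2 + 1 = j + 3 from rfl, abs_of_pos (by positivity), div_le_div_iff₀ p3 (by positivity)]
  nlinarith

lemma fib_id (m : ℕ) :
    (Nat.fib (m+1) : ℤ) * Nat.fib (m+2) - Nat.fib (m+3) * Nat.fib m = (-1)^m := by
  induction m with
  | zero => decide
  | succ n ih =>
    have h2 : Nat.fib (n+2) = Nat.fib n + Nat.fib (n+1) := Nat.fib_add_two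
    have h4 : Nat.fib (n+4) = Nat.fib (n+2) + Nat.fib (n+3) := Nat.fib_add_two
    have h2' : (Nat.fib (n+2) : ℤ) = Nat.fib n + Nat.fib (n+1) := by exact_mod_cast h2
    have h4' : (Nat.fib (n+4) : ℤ) = Nat.fib (n+2) + Nat.fib (n+3) := by exact_mod_cast h4
    show (Nat.fib (n+2) : ℤ) * Nat.fib (n+3) - Nat.fib (n+4) * Nat.fib (n+1) = (-1)^(n+1)
    rw [h4']
    linear_combination -ih + (Nat.fib (n+3) : ℤ) * h2'

noncomputable def dd (m : ℕ) : ℝ :=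
  1 / ((Nat.fib (m+1) : ℝ) * Nat.fib (m+2) * Nat.fib (m+3))

noncomputable def cc (m : ℕ) : ℝ := fr (m+1) - fr (m+2) - fr (m+3)

lemma dd_pos (m : ℕ) : 0 < dd m := by
  have := fibR_pos m; have := fibR_pos (m+1); have := fibR_pos (m+2)
  unfold dd; positivity

lemma cc_eq (m : ℕ) : cc m = (-1)^(m+1) * dd m := by
  have p1 := fibR_pos m
  have p2 := fibR_pos (m+1)
  have p3 := fibR_pos (m+2)
  have hz : (Nat.fib (m+1) : ℝ) * Nat.fib (m+2) - Nat.fib (m+3) * Nat.fib m = (-1)^m := by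
    exact_mod_cast fib_id m
  have h2 : (Nat.fib (m+2) : ℝ) = Nat.fib m + Nat.fib (m+1) := by
    exact_mod_cast (Nat.fib_add_two : Nat.fib (m+2) = _)
  have key : (Nat.fib (m+2) : ℝ) * Nat.fib (m+3) - Nat.fib (m+1) * Nat.fib (m+3)
      - Nat.fib (m+1) * Nat.fib (m+2) = (-1)^(m+1) := by
    linear_combination -hz + (Nat.fib (m+3) : ℝ) * h2
  have q1 : (0:ℝ) < Nat.fib (m+1) := fibR_pos m
  have q2 : (0:ℝ) < Nat.fib (m+2) := fibR_pos (m+1)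
  have q3 : (0:ℝ) < Nat.fib (m+3) := fibR_pos (m+2)
  have hstep : cc m = ((Nat.fib (m+2) : ℝ) * Nat.fib (m+3) - Nat.fib (m+1) * Nat.fib (m+3)
      - Nat.fib (m+1) * Nat.fib (m+2)) / ((Nat.fib (m+1) : ℝ) * Nat.fib (m+2) * Nat.fib (m+3)) := by
    unfold cc fr
    rw [show m+1+1 = m+2 from rfl, show m+1+2 = m+3 from rfl]
    field_simp
  rw [hstep, key]
  unfold dd
  ring

lemma abs_cc (m : ℕ) : |cc m| = dd m := by
  rw [cc_eq]
  rw [abs_mul, abs_pow, abs_neg, abs_one, one_pow, one_mul, abs_of_pos (dd_pos m)]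

lemma dd_half (m : ℕ) : dd (m+1) ≤ dd m / 2 := by
  have key : 2 * Nat.fib (m+1) ≤ Nat.fib (m+4) := by
    have h4 : Nat.fib (m+4) = Nat.fib (m+2) + Nat.fib (m+3) := Nat.fib_add_two
    have a1 : Nat.fib (m+1) ≤ Nat.fib (m+2) := Nat.fib_le_fib_succ
    have a2 : Nat.fib (m+2) ≤ Nat.fib (m+3) := Nat.fib_le_fib_succ
    omega
  have keyR : 2 * (Nat.fib (m+1) : ℝ) ≤ Nat.fib (m+4) := by exact_mod_cast key
  have q1 : (0:ℝ) < Nat.fib (m+1) := fibR_pos m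
  have q2 : (0:ℝ) < Nat.fib (m+2) := fibR_pos (m+1)
  have q3 : (0:ℝ) < Nat.fib (m+3) := fibR_pos (m+2)
  have q4 : (0:ℝ) < Nat.fib (m+4) := fibR_pos (m+3)
  unfold dd
  rw [show m+1+1 = m+2 from rfl, show m+1+2 = m+3 from rfl, show m+1+3 = m+4 from rfl]
  rw [show (1 / ((Nat.fib (m+1) : ℝ) * Nat.fib (m+2) * Nat.fib (m+3))) / 2
      = 1 / ((Nat.fib (m+1) : ℝ) * Nat.fib (m+2) * Nat.fib (m+3) * 2) by ring]
  apply one_div_le_one_div_of_le (by positivity)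
  calc (Nat.fib (m+1) : ℝ) * Nat.fib (m+2) * Nat.fib (m+3) * 2
      = (2 * Nat.fib (m+1)) * ((Nat.fib (m+2) : ℝ) * Nat.fib (m+3)) := by ring
    _ ≤ (Nat.fib (m+4) : ℝ) * ((Nat.fib (m+2) : ℝ) * Nat.fib (m+3)) :=
        mul_le_mul_of_nonneg_right keyR (by positivity)
    _ = (Nat.fib (m+2) : ℝ) * Nat.fib (m+3) * Nat.fib (m+4) := by ring

lemma dd_geo (n m : ℕ) : dd (n + m) ≤ dd n * (1/2)^m := by
  induction m with
  | zero => simp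
  | succ j ih =>
    calc dd (n + (j+1)) ≤ dd (n + j) / 2 := dd_half _
    _ ≤ (dd n * (1/2)^j) / 2 := by linarith
    _ = dd n * (1/2)^(j+1) := by ring

lemma summable_tail (n : ℕ) : Summable (fun k => fr (n + k)) := by
  have := (summable_nat_add_iff n).mpr summable_fr
  exact this.congr (fun k => by rw [add_comm])

noncomputable def T (n : ℕ) : ℝ := ∑' k, fr (n + k)

lemma T_succ (n : ℕ) : T n = fr n + T (n+1) := by
  unfold T
  rw [Summable.tsum_eq_zero_add (summable_tail n)]
  congr 1
  exact tsum_congr fun k => by rw [show n + (k + 1) = n + 1 + k by omega]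

lemma T_tendsto : Tendsto T atTop (𝓝 0) := by
  have := tendsto_sum_nat_add fr
  exact this.congr fun i => tsum_congr fun k => by rw [add_comm]

lemma T_pos (n : ℕ) : fr (n+3) ≤ T (n+3) := by
  have := Summable.le_tsum (summable_tail (n+3)) 0 (fun j _ => fr_nonneg _)
  simpa [T] using this

noncomputable def b (n : ℕ) : ℝ := 1 / (Nat.fib (n+1) : ℝ) - T (n+3)

lemma b_tendsto : Tendsto b atTop (𝓝 0) := by
  have h1 : Tendsto (fun n => (1 : ℝ) / (Nat.fib (n+1) : ℝ)) atTop (𝓝 0) := by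
    have := summable_fr.tendsto_atTop_zero
    have h := this.comp (tendsto_add_atTop_nat 1)
    exact h.congr fun n => rfl
  have h2 : Tendsto (fun n => T (n+3)) atTop (𝓝 0) :=
    T_tendsto.comp (tendsto_add_atTop_nat 3)
  have h3 := h1.sub h2
  rw [sub_zero] at h3
  exact h3

lemma b_step (n : ℕ) : cc n = b n - b (n+1) := by
  unfold b cc fr
  rw [show n+1+1 = n+2 from rfl, show n+1+3 = n+4 from rfl]
  have := T_succ (n+3)
  rw [show n+3+1 = n+4 from rfl] at this
  rw [this]
  unfold fr
  ring

lemma b_sum (n : ℕ) : HasSum (fun m => cc (n + m)) (b n) := by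
  have hsum : Summable (fun m => cc (n + m)) := by
    apply Summable.of_norm
    have hd : Summable (fun m => dd n * (1/2)^m) :=
      (summable_geometric_of_lt_one (by norm_num) (by norm_num)).mul_left _
    apply Summable.of_nonneg_of_le (fun m => norm_nonneg _) _ hd
    intro m
    rw [Real.norm_eq_abs, abs_cc]
    exact dd_geo n m
  have htel : ∀ N, ∑ m ∈ Finset.range N, cc (n + m) = b n - b (n + N) := by
    intro N
    induction N with
    | zero => simp
    | succ j ih =>
      rw [Finset.sum_range_succ, ih, b_step (n + j)]
      ring_nf
  have hb0 : Tendsto (fun N => b (n + N)) atTop (𝓝 0) := by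
    have h := b_tendsto.comp (tendsto_add_atTop_nat n)
    exact h.congr fun N => by simp [Function.comp, add_comm]
  have h2 : Tendsto (fun N => ∑ m ∈ Finset.range N, cc (n + m)) atTop (𝓝 (b n)) := by
    simp only [htel]
    simpa using tendsto_const_nhds.sub hb0
  exact (tendsto_nhds_unique hsum.hasSum.tendsto_sum_nat h2) ▸ hsum.hasSum

lemma b_bound (n : ℕ) : |b n| ≤ 2 * dd n := by
  have hb := b_sum n
  have habs : ∀ m, |cc (n + m)| ≤ dd n * (1/2)^m := fun m => by
    rw [abs_cc]; exact dd_geo n m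
  have hd : Summable (fun m => dd n * (1/2)^m) :=
    (summable_geometric_of_lt_one (by norm_num) (by norm_num)).mul_left _
  have h1 : |b n| ≤ ∑' m, dd n * (1/2)^m := by
    have hs := hb.summable
    have hsa : Summable (fun m => |cc (n + m)|) := hs.abs
    have hna : Summable (fun m => ‖cc (n + m)‖) := by
      simpa only [Real.norm_eq_abs] using hsa
    calc |b n| = ‖∑' m, cc (n + m)‖ := by rw [hb.tsum_eq, Real.norm_eq_abs]
      _ ≤ ∑' m, ‖cc (n + m)‖ := norm_tsum_le_tsum_norm hna
      _ = ∑' m, |cc (n + m)| := by simp only [Real.norm_eq_abs]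
      _ ≤ ∑' m, dd n * (1/2)^m := Summable.tsum_le_tsum habs hsa hd
  calc |b n| ≤ ∑' m, dd n * (1/2)^m := h1
    _ = dd n * ∑' m, ((1:ℝ)/2)^m := tsum_mul_left
    _ = dd n * 2 := by rw [tsum_geometric_of_lt_one (by norm_num) (by norm_num)]; norm_num
    _ = 2 * dd n := by ring

theorem fib_reciprocal_tail_asymptotic :
    Filter.Tendsto
      (fun n : ℕ => (∑' k : ℕ, (1 : ℝ) / Nat.fib (n + k))⁻¹ - (Nat.fib (n - 2) : ℝ))
      Filter.atTop (nhds 0) := by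
  have hTeq : ∀ n : ℕ, (∑' k : ℕ, (1 : ℝ) / Nat.fib (n + k)) = T n := fun n => rfl
  simp only [hTeq]
  rw [← tendsto_add_atTop_iff_nat 3]
  apply squeeze_zero_norm (a := fun n => 2 / (Nat.fib (n+2) : ℝ))
  · intro n
    have q1 : (0:ℝ) < Nat.fib (n+1) := fibR_pos n
    have q2 : (0:ℝ) < Nat.fib (n+2) := fibR_pos (n+1)
    have q3 : (0:ℝ) < Nat.fib (n+3) := fibR_pos (n+2)
    have hfr : fr (n+3) = 1 / (Nat.fib (n+3) : ℝ) := rfl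
    have hTge : 1 / (Nat.fib (n+3) : ℝ) ≤ T (n+3) := by rw [← hfr]; exact T_pos n
    have hTpos : 0 < T (n+3) := lt_of_lt_of_le (by positivity) hTge
    have hTle : (T (n+3))⁻¹ ≤ (Nat.fib (n+3) : ℝ) := by
      have h := inv_anti₀ (by positivity) hTge
      simpa [one_div] using h
    have hkey : (T (n+3))⁻¹ - (Nat.fib (n+1) : ℝ)
        = (Nat.fib (n+1) : ℝ) * b n * (T (n+3))⁻¹ := by
      unfold b
      field_simp
    rw [show n + 3 - 2 = n + 1 from rfl, hkey, Real.norm_eq_abs, abs_mul, abs_mul,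
      abs_of_pos q1, abs_of_pos (inv_pos.mpr hTpos)]
    calc (Nat.fib (n+1) : ℝ) * |b n| * (T (n+3))⁻¹
        ≤ (Nat.fib (n+1) : ℝ) * (2 * dd n) * (Nat.fib (n+3) : ℝ) := by
          have hb := b_bound n
          have hd := dd_pos n
          gcongr
    _ = 2 / (Nat.fib (n+2) : ℝ) := by
          unfold dd
          field_simp
  · have h := summable_fr.tendsto_atTop_zero.comp (tendsto_add_atTop_nat 2)
    have h2 := h.const_mul (2:ℝ)
    rw [mul_zero] at h2
    refine h2.congr fun n => ?_
    show 2 * fr (n+2) = 2 / (Nat.fib (n+2) : ℝ)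
    unfold fr
    ring
end

section
/- For the Fibonacci sequence Fₙ and positive integers m, l with l ≤ m−1, lim_{n→∞} [ (∑_{k=n}^∞ 1/F_{mk−l})^{-1} − (F_{mn−l} − F_{m(n−1)−l}) ] = 0. -/
open Real Filter goldenRatio

private lemma gold_inv_pos' : (0:ℝ) < φ⁻¹ := inv_pos.mpr goldenRatio_pos

private lemma gold_inv_lt_one' : (φ:ℝ)⁻¹ < 1 := inv_lt_one_of_one_lt₀ one_lt_goldenRatio

private lemma gold_inv_sq_le_half : (φ:ℝ)⁻¹ ^ 2 ≤ 1/2 := by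
  have h2 : (2:ℝ) ≤ φ ^ 2 := by nlinarith [goldenRatio_sq, one_lt_goldenRatio]
  have hφ : (0:ℝ) < φ ^ 2 := by positivity
  rw [inv_pow]
  rw [inv_le_iff_one_le_mul₀ hφ] at *
  nlinarith

private lemma psi_eq' : (ψ:ℝ) = -φ⁻¹ := by
  have := inv_goldenRatio
  linarith

/-- Binet upper bound -/
private lemma fib_le' (j : ℕ) : (Nat.fib j : ℝ) ≤ (φ ^ j + φ⁻¹ ^ j) / √5 := by
  rw [Real.coe_fib_eq]
  have h : -(φ⁻¹ ^ j) ≤ ψ ^ j := by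
    rw [psi_eq']
    have habs : |(-φ⁻¹ : ℝ) ^ j| = φ⁻¹ ^ j := by
      rw [abs_pow, abs_neg, abs_of_pos gold_inv_pos']
    nlinarith [neg_abs_le ((-φ⁻¹:ℝ) ^ j)]
  gcongr
  linarith

private lemma le_fib' (j : ℕ) : (φ ^ j - φ⁻¹ ^ j) / √5 ≤ (Nat.fib j : ℝ) := by
  rw [Real.coe_fib_eq]
  have h : ψ ^ j ≤ φ⁻¹ ^ j := by
    rw [psi_eq']
    have habs : |(-φ⁻¹ : ℝ) ^ j| = φ⁻¹ ^ j := by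
      rw [abs_pow, abs_neg, abs_of_pos gold_inv_pos']
    nlinarith [le_abs_self ((-φ⁻¹:ℝ) ^ j)]
  have h5 : (0:ℝ) < √5 := by positivity
  gcongr

private lemma fib_pos_real (j : ℕ) (hj : 1 ≤ j) : (0:ℝ) < Nat.fib j := by
  exact_mod_cast Nat.fib_pos.mpr hj

private lemma basic_facts (j : ℕ) (hj : 1 ≤ j) :
    0 < φ⁻¹ ^ j ∧ φ⁻¹ ^ j * φ ^ j = 1 ∧ (φ⁻¹ ^ j)^2 ≤ 1/2 ∧ (1:ℝ) ≤ φ ^ j := by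
  refine ⟨by positivity, ?_, ?_, one_le_pow₀ (le_of_lt one_lt_goldenRatio)⟩
  · rw [← mul_pow, inv_mul_cancel₀ goldenRatio_ne_zero, one_pow]
  · calc (φ⁻¹ ^ j)^2 = (φ⁻¹ ^ 2) ^ j := by rw [← pow_mul, ← pow_mul, Nat.mul_comm]
    _ ≤ (1/2 : ℝ) ^ j := pow_le_pow_left₀ (by positivity) gold_inv_sq_le_half j
    _ ≤ (1/2 : ℝ) ^ 1 := pow_le_pow_of_le_one (by norm_num) (by norm_num) hj
    _ = 1/2 := by norm_num

/-- upper bound for 1/fib -/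
private lemma one_div_fib_le (j : ℕ) (hj : 1 ≤ j) :
    1 / (Nat.fib j : ℝ) ≤ √5 * (φ⁻¹ ^ j + 2 * (φ⁻¹ ^ j)^3) := by
  have h5 : (0:ℝ) < √5 := by positivity
  obtain ⟨hx, hxy, hx2, hy1⟩ := basic_facts j hj
  set x := φ⁻¹ ^ j with hxdef
  set y := φ ^ j with hydef
  have hyx : 0 < y - x := by nlinarith
  have hfibpos := fib_pos_real j hj
  have hlow : (y - x)/√5 ≤ (Nat.fib j : ℝ) := le_fib' j
  have h1 : 1 / (Nat.fib j : ℝ) ≤ √5 / (y - x) := by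
    rw [div_le_div_iff₀ hfibpos hyx]
    calc 1 * (y - x) = ((y-x)/√5) * √5 := by field_simp
    _ ≤ (Nat.fib j : ℝ) * √5 := mul_le_mul_of_nonneg_right hlow (le_of_lt h5)
    _ = √5 * (Nat.fib j : ℝ) := mul_comm _ _
  have key : 1 ≤ (x + 2*x^3) * (y - x) := by nlinarith
  have h2 : √5 / (y - x) ≤ √5 * (x + 2*x^3) := by
    rw [div_le_iff₀ hyx]
    nlinarith
  linarith

private lemma le_one_div_fib (j : ℕ) (hj : 1 ≤ j) :
    √5 * (φ⁻¹ ^ j - (φ⁻¹ ^ j)^3) ≤ 1 / (Nat.fib j : ℝ) := by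
  have h5 : (0:ℝ) < √5 := by positivity
  obtain ⟨hx, hxy, hx2, hy1⟩ := basic_facts j hj
  set x := φ⁻¹ ^ j with hxdef
  set y := φ ^ j with hydef
  have hyx : 0 < y + x := by nlinarith
  have hfibpos := fib_pos_real j hj
  have hup : (Nat.fib j : ℝ) ≤ (y + x)/√5 := fib_le' j
  have h1 : √5 / (y + x) ≤ 1 / (Nat.fib j : ℝ) := by
    rw [div_le_div_iff₀ hyx hfibpos]
    calc √5 * (Nat.fib j : ℝ) ≤ √5 * ((y+x)/√5) := mul_le_mul_of_nonneg_left hup (le_of_lt h5)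
    _ = 1 * (y + x) := by field_simp
  have key : (x - x^3) * (y + x) ≤ 1 := by nlinarith
  have h2 : √5 * (x - x^3) ≤ √5 / (y + x) := by
    rw [le_div_iff₀ hyx]
    nlinarith
  linarith

private lemma alg1 (x u v : ℝ) (hx0 : 0 < x) (hu0 : 0 < u) (hv0 : 0 < v)
    (hu1 : u ≤ 1) (huv : u ≤ v) (h2x2 : 2*x^2 ≤ 1) :
    1*(u*v) ≤ (v - x^2*u)*(u + 2*x^2) := by
  have k1 : u^2 ≤ v := by nlinarith
  have k2 : 2*x^2*u ≤ v := by nlinarith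
  nlinarith [mul_nonneg (sq_nonneg x) (sub_nonneg.mpr k1),
    mul_nonneg (sq_nonneg x) (sub_nonneg.mpr k2)]

private lemma alg2 (x u v : ℝ) (hx0 : 0 < x) (hu0 : 0 < u) (hv0 : 0 < v)
    (hu1 : u ≤ 1) (huv : u ≤ v) (h2x2 : 2*x^2 ≤ 1) :
    (v + 2*x^2*u)*(u - 2*x^2) ≤ 1*(u*v) := by
  have k1 : u^2 ≤ v := by nlinarith
  nlinarith [mul_nonneg (sq_nonneg x) (sub_nonneg.mpr k1),
    mul_nonneg (mul_nonneg (sq_nonneg x) (sq_nonneg x)) hu0.le]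

private lemma alg0 (x u v : ℝ) (hx0 : 0 < x) (hu0 : 0 < u) (hv0 : 0 < v)
    (huv : u ≤ v) (h2x2 : 2*x^2 ≤ 1) : 0 < v - x^2*u := by nlinarith

private lemma key_estimate (m a b : ℕ) (hm : 1 ≤ m) (hb : 1 ≤ b) (hab : a = b + m) :
    |(∑' k : ℕ, (1:ℝ) / Nat.fib (a + m * k))⁻¹ - ((Nat.fib a : ℝ) - Nat.fib b)| ≤
      2 * φ⁻¹ ^ b := by
  have h5 : (0:ℝ) < √5 := by positivity
  have h52 : (2:ℝ) ≤ √5 := by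
    nlinarith [Real.sq_sqrt (by norm_num : (0:ℝ) ≤ 5), Real.sqrt_nonneg 5]
  have hr0 : (0:ℝ) < φ⁻¹ := gold_inv_pos'
  have hr1 : (φ:ℝ)⁻¹ < 1 := gold_inv_lt_one'
  have ha1 : 1 ≤ a := by omega
  obtain ⟨hx0, hxφ, hx2, hφ1⟩ := basic_facts a ha1
  obtain ⟨hxb0, hxbφ, hxb2, hφb1⟩ := basic_facts b hb
  set x := (φ:ℝ)⁻¹ ^ a with hxdef
  set xb := (φ:ℝ)⁻¹ ^ b with hxbdef
  set q := (φ:ℝ)⁻¹ ^ m with hqdef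
  have hq0 : 0 < q := pow_pos hr0 m
  have hq1 : q < 1 := pow_lt_one₀ hr0.le hr1 (by omega)
  set u := 1 - q with hudef
  set v := 1 - q^3 with hvdef
  have hu0 : 0 < u := by simp only [hudef]; linarith
  have hv0 : 0 < v := by
    have : q^3 < 1 := pow_lt_one₀ hq0.le hq1 (by norm_num)
    simp only [hvdef]; linarith
  have huv : u ≤ v := by
    have : q^3 ≤ q := by
      calc q^3 ≤ q^1 := pow_le_pow_of_le_one hq0.le hq1.le (by norm_num)
      _ = q := pow_one q
    simp only [hudef, hvdef]; linarith
  have hu1 : u ≤ 1 := by simp only [hudef]; linarith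
  clear_value u v
  have hxq : x = xb * q := by rw [hxdef, hxbdef, hqdef, hab, pow_add]
  have hx1 : x < 1 := by
    calc x ≤ (φ:ℝ)⁻¹ ^ 1 := pow_le_pow_of_le_one hr0.le hr1.le (by omega)
    _ = φ⁻¹ := pow_one _
    _ < 1 := hr1
  have hxxb : x ≤ xb := pow_le_pow_of_le_one hr0.le hr1.le (by omega)
  have h2x2 : 2 * x^2 ≤ 1 := by linarith
  clear_value x xb q
  -- series set-up
  have hgeoq : Summable (fun k : ℕ => q ^ k) := summable_geometric_of_lt_one hq0.le hq1
  have hq31 : q^3 < 1 := pow_lt_one₀ hq0.le hq1 (by norm_num)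
  have hgeoq3 : Summable (fun k : ℕ => (q^3) ^ k) :=
    summable_geometric_of_lt_one (by positivity) hq31
  have hpow : ∀ k : ℕ, (φ:ℝ)⁻¹ ^ (a + m * k) = x * q ^ k := fun k => by
    rw [hxdef, hqdef, pow_add, pow_mul]
  have hterm_up : ∀ k : ℕ, 1 / (Nat.fib (a + m*k) : ℝ) ≤
      (√5*x) * q^k + (2*√5*x^3) * (q^3)^k := by
    intro k
    calc 1 / (Nat.fib (a + m*k) : ℝ)
        ≤ √5 * ((φ:ℝ)⁻¹ ^ (a+m*k) + 2 * ((φ:ℝ)⁻¹ ^ (a+m*k))^3) :=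
          one_div_fib_le (a+m*k) (by omega)
    _ = (√5*x) * q^k + (2*√5*x^3) * (q^3)^k := by rw [hpow k]; ring
  have hterm_lo : ∀ k : ℕ, (√5*x) * q^k - (√5*x^3) * (q^3)^k ≤
      1 / (Nat.fib (a + m*k) : ℝ) := by
    intro k
    calc (√5*x) * q^k - (√5*x^3) * (q^3)^k
        = √5 * ((φ:ℝ)⁻¹ ^ (a+m*k) - ((φ:ℝ)⁻¹ ^ (a+m*k))^3) := by rw [hpow k]; ring
    _ ≤ 1 / (Nat.fib (a + m*k) : ℝ) := le_one_div_fib (a+m*k) (by omega)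
  have hsumT : Summable (fun k : ℕ => (√5*x) * q^k + (2*√5*x^3) * (q^3)^k) :=
    (hgeoq.mul_left _).add (hgeoq3.mul_left _)
  have hsumTl : Summable (fun k : ℕ => (√5*x) * q^k - (√5*x^3) * (q^3)^k) :=
    (hgeoq.mul_left _).sub (hgeoq3.mul_left _)
  have hsumf : Summable (fun k : ℕ => 1 / (Nat.fib (a + m*k) : ℝ)) :=
    Summable.of_nonneg_of_le (fun k => by positivity) hterm_up hsumT
  set S := ∑' k : ℕ, (1:ℝ) / Nat.fib (a + m * k) with hSdef
  set A := (√5*x) * u⁻¹ - (√5*x^3) * v⁻¹ with hAdef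
  set B := (√5*x) * u⁻¹ + (2*√5*x^3) * v⁻¹ with hBdef
  have hSB : S ≤ B := by
    calc S ≤ ∑' k : ℕ, ((√5*x) * q^k + (2*√5*x^3) * (q^3)^k) :=
          Summable.tsum_le_tsum hterm_up hsumf hsumT
    _ = B := by
        rw [Summable.tsum_add (hgeoq.mul_left _) (hgeoq3.mul_left _), tsum_mul_left, tsum_mul_left,
          tsum_geometric_of_lt_one hq0.le hq1, tsum_geometric_of_lt_one (by positivity) hq31,
          hBdef, hudef, hvdef]
  have hAS : A ≤ S := by
    calc A = ∑' k : ℕ, ((√5*x) * q^k - (√5*x^3) * (q^3)^k) := by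
          rw [Summable.tsum_sub (hgeoq.mul_left _) (hgeoq3.mul_left _), tsum_mul_left, tsum_mul_left,
            tsum_geometric_of_lt_one hq0.le hq1, tsum_geometric_of_lt_one (by positivity) hq31,
            hAdef, hudef, hvdef]
    _ ≤ S := Summable.tsum_le_tsum hterm_lo hsumTl hsumf
  have hu0' : u ≠ 0 := hu0.ne'
  have hv0' : v ≠ 0 := hv0.ne'
  have hx0' : x ≠ 0 := hx0.ne'
  have h50 : √5 ≠ 0 := h5.ne'
  have EA : A = √5*x*(v - x^2*u)/(u*v) := by rw [hAdef]; field_simp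
  have hnum : 0 < v - x^2*u := alg0 x u v hx0 hu0 hv0 huv h2x2
  have hApos : 0 < A := by rw [EA]; exact div_pos (by positivity) (mul_pos hu0 hv0)
  have hS0 : 0 < S := hApos.trans_le hAS
  set M := u / (√5*x) with hMdef
  set c := 2*x/√5 with hcdef
  clear_value S A B M c
  have E1 : A * (M + c) = (v - x^2*u)*(u + 2*x^2)/(u*v) := by
    rw [hAdef, hMdef, hcdef]; field_simp
  have key1 : 1 ≤ A * (M + c) := by
    rw [E1, le_div_iff₀ (mul_pos hu0 hv0)]
    exact alg1 x u v hx0 hu0 hv0 hu1 huv h2x2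
  have E2 : B * (M - c) = (v + 2*x^2*u)*(u - 2*x^2)/(u*v) := by
    rw [hBdef, hMdef, hcdef]; field_simp
  have key2 : B * (M - c) ≤ 1 := by
    rw [E2, div_le_iff₀ (mul_pos hu0 hv0)]
    exact alg2 x u v hx0 hu0 hv0 hu1 huv h2x2
  -- S⁻¹ bounds
  have hup : S⁻¹ ≤ M + c := by
    have h1 : S⁻¹ ≤ A⁻¹ := by
      apply inv_anti₀ hApos hAS
    have h2 : A⁻¹ ≤ M + c := by
      calc A⁻¹ = A⁻¹ * 1 := (mul_one _).symm
      _ ≤ A⁻¹ * (A * (M + c)) :=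
          mul_le_mul_of_nonneg_left key1 (inv_pos.mpr hApos).le
      _ = M + c := by field_simp
    linarith
  have hlow : M - c ≤ S⁻¹ := by
    rcases le_or_gt (M - c) 0 with h | h
    · exact h.trans (inv_nonneg.mpr hS0.le)
    · have h1 : (M - c) * S ≤ (M - c) * B := mul_le_mul_of_nonneg_left hSB h.le
      have h2 : (M - c) * S ≤ 1 := by
        calc (M - c) * S ≤ (M - c) * B := h1
        _ = B * (M - c) := mul_comm _ _
        _ ≤ 1 := key2
      calc M - c = ((M - c) * S) * S⁻¹ := by field_simp
      _ ≤ 1 * S⁻¹ := mul_le_mul_of_nonneg_right h2 (inv_nonneg.mpr hS0.le)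
      _ = S⁻¹ := one_mul _
  -- relate M to fibonacci difference
  have hax : x * φ ^ a = 1 := hxφ
  have hbxb : xb * φ ^ b = 1 := hxbφ
  have hbx : φ ^ b * x = q := by
    rw [hxq]
    calc φ ^ b * (xb * q) = (xb * φ ^ b) * q := by ring
    _ = q := by rw [hbxb, one_mul]
  have hM' : M = (φ ^ a - φ ^ b)/√5 := by
    rw [hMdef, div_eq_div_iff (show √5*x ≠ 0 by positivity) h5.ne']
    linear_combination (-√5) * hax + √5 * hbx + √5 * hudef
  have habsψ : ∀ j : ℕ, |ψ ^ j| = (φ:ℝ)⁻¹ ^ j := fun j => by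
    rw [psi_eq', abs_pow, abs_neg, abs_of_pos hr0]
  have hDM : |M - ((Nat.fib a : ℝ) - Nat.fib b)| ≤ 2 * xb / √5 := by
    rw [hM', Real.coe_fib_eq, Real.coe_fib_eq]
    have hrew : (φ ^ a - φ ^ b)/√5 - ((φ ^ a - ψ ^ a) / √5 - (φ ^ b - ψ ^ b) / √5)
        = (ψ ^ a - ψ ^ b)/√5 := by ring
    rw [hrew, abs_div, abs_of_pos h5, div_le_div_iff₀ h5 h5]
    have h1 : |ψ ^ a - ψ ^ b| ≤ x + xb := by
      calc |ψ ^ a - ψ ^ b| ≤ |ψ ^ a| + |ψ ^ b| := abs_sub _ _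
      _ = x + xb := by rw [habsψ a, habsψ b, ← hxdef, ← hxbdef]
    have h2 : |ψ ^ a - ψ ^ b| * √5 ≤ (x + xb) * √5 := mul_le_mul_of_nonneg_right h1 h5.le
    have h3 : (x + xb) * √5 ≤ (2 * xb) * √5 :=
      mul_le_mul_of_nonneg_right (by linarith) h5.le
    linarith
  -- conclude
  have h1 : |S⁻¹ - M| ≤ c := abs_le.mpr ⟨by linarith, by linarith⟩
  calc |S⁻¹ - ((Nat.fib a : ℝ) - Nat.fib b)|
      ≤ |S⁻¹ - M| + |M - ((Nat.fib a : ℝ) - Nat.fib b)| := abs_sub_le _ _ _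
  _ ≤ c + 2 * xb / √5 := add_le_add h1 hDM
  _ ≤ 4 * xb / √5 := by
      rw [hcdef, ← add_div, div_le_div_iff₀ h5 h5]
      have h3 : (2*x + 2*xb) * √5 ≤ (4 * xb) * √5 :=
        mul_le_mul_of_nonneg_right (by linarith) h5.le
      linarith
  _ ≤ 2 * xb := by
      rw [div_le_iff₀ h5]
      have h4 : (2*xb) * 2 ≤ (2*xb) * √5 :=
        mul_le_mul_of_nonneg_left h52 (by positivity)
      linarith

theorem fib_sub_reciprocal_tail_asymptotic (m l : ℕ) (hm : 0 < m) (hl : 0 < l)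
    (hlm : l ≤ m - 1) :
    Filter.Tendsto
      (fun n : ℕ =>
        (∑' k : ℕ, (1 : ℝ) / Nat.fib (m * (n + k) - l))⁻¹ -
          ((Nat.fib (m * n - l) : ℝ) - (Nat.fib (m * (n - 1) - l) : ℝ)))
      Filter.atTop (nhds 0) := by
  have hm2 : 2 ≤ m := by omega
  have hr0 : (0:ℝ) ≤ φ⁻¹ := le_of_lt gold_inv_pos'
  have hr1 : (φ:ℝ)⁻¹ < 1 := gold_inv_lt_one'
  apply squeeze_zero_norm' (a := fun n : ℕ => 2 * φ⁻¹ ^ (n - 1))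
  · filter_upwards [eventually_ge_atTop 2] with n hn
    set a := m * n - l with ha
    set b := m * (n - 1) - l with hbdef
    have hmn1 : m ≤ m * (n-1) := Nat.le_mul_of_pos_right m (by omega)
    have hb1 : 1 ≤ b := by omega
    have hab : a = b + m := by
      have h1 : m * n = m * (n-1) + m := by
        nth_rewrite 1 [show n = (n-1) + 1 by omega]
        ring
      omega
    have hidx : ∀ k : ℕ, m * (n + k) - l = a + m * k := by
      intro k
      have h2 : m * (n + k) = m * n + m * k := by ring
      omega
    have hbn : n - 1 ≤ b := by
      have h3 : 2 * (n-2) ≤ m * (n-2) := Nat.mul_le_mul_right _ hm2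
      have h4 : m * (n-1) = m * (n-2) + m := by
        nth_rewrite 1 [show n - 1 = (n-2) + 1 by omega]
        ring
      omega
    calc ‖(∑' k : ℕ, (1 : ℝ) / Nat.fib (m * (n + k) - l))⁻¹ -
          ((Nat.fib (m * n - l) : ℝ) - (Nat.fib (m * (n - 1) - l) : ℝ))‖
        = |(∑' k : ℕ, (1:ℝ) / Nat.fib (a + m * k))⁻¹ - ((Nat.fib a : ℝ) - Nat.fib b)| := by
          rw [Real.norm_eq_abs]
          congr 3
          exact tsum_congr fun k => by rw [hidx k]
    _ ≤ 2 * φ⁻¹ ^ b := key_estimate m a b (by omega) hb1 hab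
    _ ≤ 2 * φ⁻¹ ^ (n - 1) := by
        have := pow_le_pow_of_le_one hr0 (le_of_lt hr1) hbn
        linarith
  · have h1 : Filter.Tendsto (fun n : ℕ => (φ:ℝ)⁻¹ ^ n) atTop (nhds 0) :=
      tendsto_pow_atTop_nhds_zero_of_lt_one hr0 hr1
    have h2 : Filter.Tendsto (fun n : ℕ => (φ:ℝ)⁻¹ ^ (n-1)) atTop (nhds 0) :=
      h1.comp (tendsto_sub_atTop_nat 1)
    have := h2.const_mul (2:ℝ)
    simpa using this
end

section
/- For the Fibonacci sequence Fₙ, lim_{n→∞} [ (∑_{k=n}^∞ 1/F_k²)^{-1} − (F_n² − F_{n−1}² + (2/3)(−1)ⁿ) ] = 0. -/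
open Real goldenRatio Filter

namespace FibTail

noncomputable def X : ℝ := ψ ^ 2

lemma X_eq : X = ψ + 1 := goldenConj_sq

lemma X_lb : 1/3 < X := by
  have h := Real.sq_sqrt (by norm_num : (0:ℝ) ≤ 5)
  have h2 := Real.sqrt_nonneg 5
  rw [X_eq]; show (1:ℝ)/3 < (1 - √5)/2 + 1; nlinarith

lemma X_ub : X < 2/5 := by
  have h := Real.sq_sqrt (by norm_num : (0:ℝ) ≤ 5)
  have h2 := Real.sqrt_nonneg 5
  rw [X_eq]; show ((1:ℝ) - √5)/2 + 1 < 2/5; nlinarith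

lemma X_pos : 0 < X := lt_trans (by norm_num) X_lb
lemma X_lt_one : X < 1 := lt_trans X_ub (by norm_num)

lemma X_quad : X^2 = 3*X - 1 := by
  have h : ψ^2 = ψ + 1 := goldenConj_sq
  rw [X_eq]; linear_combination h

lemma gold_X (n : ℕ) : φ^(2*n) * X^n = 1 := by
  rw [X, pow_mul, ← mul_pow, ← mul_pow, goldenRatio_mul_goldenConj]
  norm_num

lemma psi_pow (n : ℕ) : ψ^n = (-1)^n * φ^n * X^n := by
  have h : φ^n * ψ^n = (-1)^n := by rw [← mul_pow, goldenRatio_mul_goldenConj]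
  have h2 : ((-1:ℝ)^n)*((-1:ℝ)^n) = 1 := by rw [← mul_pow]; norm_num
  rw [X, ← pow_mul, mul_comm 2 n, pow_mul, sq]
  linear_combination (-(-1:ℝ)^n*ψ^n)*h - (ψ^n)*h2

lemma fib_sq (m : ℕ) : (Nat.fib m : ℝ)^2 = (φ^m - ψ^m)^2 / 5 := by
  rw [Real.coe_fib_eq, div_pow, Real.sq_sqrt (by norm_num : (0:ℝ) ≤ 5)]





lemma inv_sq_bound (u : ℝ) (hu : |u| ≤ 2/5) : |1/(1-u)^2 - (1+2*u)| ≤ 11*u^2 := by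
  rw [abs_le] at hu
  have h2 : (0:ℝ) < 1 - u := by linarith
  have h3 : 1/(1-u)^2 - (1+2*u) = u^2*(3-2*u)/(1-u)^2 := by field_simp; ring
  rw [h3, abs_div, abs_of_nonneg (by nlinarith : (0:ℝ) ≤ u^2*(3-2*u)),
    abs_of_nonneg (by positivity : (0:ℝ) ≤ (1-u)^2), div_le_iff₀ (by positivity)]
  have h4 : 0 ≤ 11*u^2 - 20*u + 8 := by nlinarith
  nlinarith [mul_nonneg (sq_nonneg u) h4]

lemma Xm_le (m : ℕ) (hm : 1 ≤ m) : X^m ≤ X := by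
  calc X^m ≤ X^1 := pow_le_pow_of_le_one X_pos.le X_lt_one.le hm
  _ = X := pow_one X

lemma onefib (m : ℕ) (hm : 1 ≤ m) :
    |1/(Nat.fib m : ℝ)^2 - (5*X^m + 10*(-1)^m*X^(2*m))| ≤ 55 * X^(3*m) := by
  set u : ℝ := (-1)^m * X^m with hu_def
  have habs_u : |u| = X^m := by
    rw [hu_def, abs_mul, abs_pow, abs_neg, abs_one, one_pow, one_mul,
      abs_of_nonneg (pow_nonneg X_pos.le m)]
  have hu : |u| ≤ 2/5 := by rw [habs_u]; exact le_trans (Xm_le m hm) X_ub.le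
  have h1u : (0:ℝ) < 1 - u := by
    have := abs_le.mp hu; linarith [this.2]
  have hψm : ψ^m = φ^m * u := by rw [hu_def, psi_pow]; ring
  have hfib : (Nat.fib m : ℝ)^2 = φ^(2*m) * (1-u)^2 / 5 := by
    rw [fib_sq, hψm, two_mul, pow_add]; ring
  have hXφ := gold_X m
  have hφ : (0:ℝ) < φ^(2*m) := pow_pos goldenRatio_pos _
  have h1ne : ((1:ℝ)-u) ≠ 0 := h1u.ne'
  have h2ne : (φ:ℝ)^(2*m) ≠ 0 := hφ.ne'
  have hkey : 1/(Nat.fib m : ℝ)^2 = 5*X^m * (1/(1-u)^2) := by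
    rw [hfib]
    generalize hA : φ^(2*m) = A at hXφ h2ne
    generalize hY : X^m = Y at hXφ ⊢
    field_simp
    linear_combination (-1:ℝ) * hXφ
  have hsplit : 1/(Nat.fib m : ℝ)^2 - (5*X^m + 10*(-1)^m*X^(2*m))
      = 5*X^m * (1/(1-u)^2 - (1+2*u)) := by
    rw [hkey, hu_def]; ring
  rw [hsplit, abs_mul, abs_of_nonneg (mul_nonneg (by norm_num) (pow_nonneg X_pos.le m) : (0:ℝ) ≤ 5*X^m)]
  have hb := inv_sq_bound u hu
  have hneg : ((-1:ℝ)^m)^2 = 1 := by rw [← pow_mul, mul_comm, pow_mul]; norm_num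
  have hu2 : u^2 = X^(2*m) := by rw [hu_def, mul_pow, hneg, one_mul, ← pow_mul, mul_comm m 2]
  calc 5*X^m * |1/(1-u)^2 - (1+2*u)| ≤ 5*X^m * (11*u^2) := by
        apply mul_le_mul_of_nonneg_left hb (mul_nonneg (by norm_num) (pow_nonneg X_pos.le m))
  _ = 55 * X^(3*m) := by
        rw [hu2, show 3*m = m + 2*m by ring, pow_add]; ring



set_option maxHeartbeats 1000000

lemma tail_est (n : ℕ) (hn : 1 ≤ n) :
    |(∑' k : ℕ, (1:ℝ)/(Nat.fib (n+k) : ℝ)^2) -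
      (5*X^n*(1-X)⁻¹ + 10*(-1)^n*X^(2*n)*(1+X^2)⁻¹)| ≤ 60 * X^(3*n) := by
  have hX0 := X_pos
  have hX1 := X_lt_one
  set f : ℕ → ℝ := fun k => (1:ℝ)/(Nat.fib (n+k) : ℝ)^2 with hf_def
  set g : ℕ → ℝ := fun k => 5*X^(n+k) + 10*(-1)^(n+k)*X^(2*(n+k)) with hg_def
  have hg_eq : g = fun k => (5*X^n)*X^k + (10*(-1)^n*X^(2*n))*(-(X^2))^k := by
    funext k
    show 5*X^(n+k) + 10*(-1)^(n+k)*X^(2*(n+k)) = _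
    rw [neg_pow, pow_add (-1:ℝ) n k, mul_add 2 n k, pow_add X n k, pow_add X (2*n) (2*k),
      pow_mul X 2 k]
    ring
  have hnorm : ‖-(X^2)‖ < 1 := by
    rw [norm_neg, Real.norm_eq_abs, abs_of_nonneg (sq_nonneg X)]
    nlinarith
  have hs1 : Summable (fun k : ℕ => (5*X^n)*X^k) :=
    (summable_geometric_of_lt_one hX0.le hX1).mul_left _
  have hs2 : Summable (fun k : ℕ => (10*(-1)^n*X^(2*n))*(-(X^2))^k) :=
    (summable_geometric_of_norm_lt_one hnorm).mul_left _
  have hg : Summable g := by rw [hg_eq]; exact hs1.add hs2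
  have htsumg : ∑' k, g k = 5*X^n*(1-X)⁻¹ + 10*(-1)^n*X^(2*n)*(1+X^2)⁻¹ := by
    rw [hg_eq, hs1.tsum_add hs2, tsum_mul_left, tsum_mul_left,
      tsum_geometric_of_lt_one hX0.le hX1, tsum_geometric_of_norm_lt_one hnorm]
    norm_num
  have hm1 : ∀ k : ℕ, 1 ≤ n + k := fun k => le_trans hn (Nat.le_add_right n k)
  have hXm_le_one : ∀ m : ℕ, X^m ≤ 1 := fun m => pow_le_one₀ hX0.le hX1.le
  have hfg : ∀ k : ℕ, |f k - g k| ≤ 55 * X^(3*(n+k)) := fun k => onefib (n+k) (hm1 k)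
  have hs3 : Summable (fun k : ℕ => (55*X^(3*n))*(X^3)^k) :=
    (summable_geometric_of_lt_one (by positivity) (by nlinarith)).mul_left _
  have hs3' : Summable (fun k : ℕ => 55 * X^(3*(n+k))) := by
    refine hs3.congr fun k => ?_
    rw [mul_add 3 n k, pow_add, pow_mul]
    ring
  have hfle : ∀ k : ℕ, f k ≤ (70*X^n)*X^k := by
    intro k
    have h1 := hfg k
    rw [abs_le] at h1
    have h2 : X^(2*(n+k)) ≤ X^(n+k) :=
      pow_le_pow_of_le_one hX0.le hX1.le (by omega)
    have h3 : X^(3*(n+k)) ≤ X^(n+k) :=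
      pow_le_pow_of_le_one hX0.le hX1.le (by omega)
    have h4 : (-1:ℝ)^(n+k)*X^(2*(n+k)) ≤ X^(2*(n+k)) := by
      have := abs_le.mp (le_of_eq (abs_mul ((-1:ℝ)^(n+k)) (X^(2*(n+k)))))
      calc (-1:ℝ)^(n+k)*X^(2*(n+k)) ≤ |(-1:ℝ)^(n+k)*X^(2*(n+k))| := le_abs_self _
      _ = X^(2*(n+k)) := by
          rw [abs_mul, abs_pow, abs_neg, abs_one, one_pow, one_mul,
            abs_of_nonneg (pow_nonneg hX0.le _)]
    have h5 : (70*X^n)*X^k = 70*X^(n+k) := by rw [pow_add]; ring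
    have hgk : g k = 5*X^(n+k) + 10*(-1)^(n+k)*X^(2*(n+k)) := rfl
    rw [h5]
    have h6 := h1.2
    rw [hgk] at h6
    linarith
  have hf : Summable f :=
    Summable.of_nonneg_of_le (fun k => by positivity) hfle
      ((summable_geometric_of_lt_one hX0.le hX1).mul_left _)
  have habs_sum : Summable (fun k => |f k - g k|) :=
    Summable.of_nonneg_of_le (fun k => abs_nonneg _) hfg hs3'
  rw [← htsumg, ← hf.tsum_sub hg]
  calc |∑' k, (f k - g k)| ≤ ∑' k, |f k - g k| := by
        have := norm_tsum_le_tsum_norm (f := fun k => f k - g k)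
          (by simpa [Real.norm_eq_abs] using habs_sum)
        simpa [Real.norm_eq_abs] using this
  _ ≤ ∑' k, 55 * X^(3*(n+k)) := Summable.tsum_le_tsum hfg habs_sum hs3'
  _ = (55*X^(3*n)) * (1-X^3)⁻¹ := by
        rw [show (fun k : ℕ => 55 * X^(3*(n+k))) = fun k : ℕ => (55*X^(3*n))*(X^3)^k by
          funext k; rw [mul_add 3 n k, pow_add, pow_mul]; ring]
        rw [tsum_mul_left, tsum_geometric_of_lt_one (by positivity) (by nlinarith)]
  _ ≤ 60 * X^(3*n) := by
        have hX3 : (0:ℝ) < 1 - X^3 := by nlinarith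
        have h6 : (1-X^3)⁻¹ ≤ 12/11 := by
          rw [inv_le_comm₀ hX3 (by norm_num)]
          have h8 : X^3 < (2/5)^3 := by
            apply pow_lt_pow_left₀ X_ub X_pos.le
            norm_num
          norm_num at h8 ⊢
          linarith
        have h7 : (0:ℝ) ≤ X^(3*n) := pow_nonneg hX0.le _
        nlinarith


lemma fib_sq_closed (m : ℕ) : 5*(Nat.fib m:ℝ)^2 = φ^(2*m) - 2*(-1)^m + X^m := by
  rw [fib_sq, psi_pow]
  have h := gold_X m
  have hsq : ((-1:ℝ)^m)^2 = 1 := by rw [← pow_mul, mul_comm, pow_mul]; norm_num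
  linear_combination (-2*(-1:ℝ)^m + ((-1:ℝ)^m)^2*X^m) * h + X^m * hsq

lemma a_eq (m : ℕ) : (Nat.fib (m+1):ℝ)^2 - (Nat.fib m:ℝ)^2 + (2/3)*(-1:ℝ)^(m+1)
    = (1-X)/5*φ^(2*(m+1)) - (2/15)*(-1:ℝ)^(m+1) - X^m*(1-X)/5 := by
  have h1 := fib_sq_closed (m+1)
  have h2 := fib_sq_closed m
  have hφ2 : φ^2*X = 1 := by have := gold_X 1; rwa [pow_one, mul_one] at this
  have h3 : φ^(2*(m+1))*X = φ^(2*m) := by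
    rw [show 2*(m+1) = 2*m+2 by ring, pow_add, mul_assoc, hφ2, mul_one]
  linear_combination (1/5)*h1 - (1/5)*h2 + (1/5)*h3

/-- Abstract inversion estimate. -/
lemma invert_bound (Y T A c P d E : ℝ) (hY0 : 0 < Y) (hYs : Y ≤ 1/100)
    (hE : |E| ≤ 60*Y^3) (hT : T = A + c*A^2 + E) (hPA : P*A = 1) (hP_pos : 0 < P)
    (hA_lb : 5*Y ≤ A) (hA_ub : A ≤ 9*Y) (habsc : |c| = 2/15) (hc2 : c^2 = 4/225)
    (hd0 : 0 ≤ d) (hd_ub : d ≤ Y) :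
    |T⁻¹ - (P - c - d)| ≤ 50*Y := by
  have hE' := abs_le.mp hE
  have hA0 : 0 < A := by nlinarith
  have hA2 : A^2 ≤ 81*Y^2 := by nlinarith
  have hcA : -(2/15)*(81*Y^2) ≤ c*A^2 := by
    nlinarith [neg_abs_le c, sq_nonneg A, mul_nonneg (by linarith [neg_abs_le c, abs_nonneg c] : (0:ℝ) ≤ c + 2/15) (sq_nonneg A)]
  have hY2 : Y^2 ≤ Y*(1/100) := by nlinarith
  have hY3 : Y^3 ≤ Y^2*(1/100) := by nlinarith
  have hT_lb : 4*Y ≤ T := by nlinarith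
  have hT_pos : 0 < T := by nlinarith
  have hPY : P * Y ≤ 1/5 := by nlinarith
  have hkey : 1 - (P - c - d) * T
      = -(P*E) + c^2*A^2 + c*E + d*A + c*d*A^2 + d*E := by
    rw [hT]
    linear_combination (-(1 + c*A)) * hPA
  have habsc' := abs_le.mp (le_of_eq habsc)
  have hnum : |1 - (P - c - d) * T| ≤ 30*Y^2 := by
    rw [hkey]
    have t1 : |-(P*E)| ≤ 12*Y^2 := by
      rw [abs_neg, abs_mul, abs_of_pos hP_pos]
      nlinarith [abs_nonneg E, mul_le_mul_of_nonneg_left hE hP_pos.le]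
    have t2 : |c^2*A^2| ≤ 2*Y^2 := by
      rw [abs_mul, abs_of_nonneg (sq_nonneg c), abs_of_nonneg (sq_nonneg A), hc2]
      nlinarith
    have t3 : |c*E| ≤ Y^2 := by
      rw [abs_mul, habsc]
      nlinarith [abs_nonneg E]
    have t4 : |d*A| ≤ 9*Y^2 := by
      rw [abs_mul, abs_of_nonneg hd0, abs_of_pos hA0]
      nlinarith
    have t5 : |c*d*A^2| ≤ 2*Y^2 := by
      rw [abs_mul, abs_mul, habsc, abs_of_nonneg hd0, abs_of_nonneg (sq_nonneg A)]
      nlinarith [mul_le_mul hd_ub hA2 (sq_nonneg A) hY0.le]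
    have t6 : |d*E| ≤ Y^2 := by
      rw [abs_mul, abs_of_nonneg hd0]
      nlinarith [abs_nonneg E, mul_le_mul hd_ub hE (abs_nonneg E) hY0.le]
    calc |-(P*E) + c^2*A^2 + c*E + d*A + c*d*A^2 + d*E|
        ≤ |-(P*E)| + |c^2*A^2| + |c*E| + |d*A| + |c*d*A^2| + |d*E| := by
          have g1 := abs_add_le (-(P*E) + c^2*A^2 + c*E + d*A + c*d*A^2) (d*E)
          have g2 := abs_add_le (-(P*E) + c^2*A^2 + c*E + d*A) (c*d*A^2)
          have g3 := abs_add_le (-(P*E) + c^2*A^2 + c*E) (d*A)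
          have g4 := abs_add_le (-(P*E) + c^2*A^2) (c*E)
          have g5 := abs_add_le (-(P*E)) (c^2*A^2)
          linarith
    _ ≤ 30*Y^2 := by linarith
  have hfinal : T⁻¹ - (P - c - d) = (1 - (P - c - d) * T) / T := by
    field_simp
  rw [hfinal, abs_div, abs_of_pos hT_pos, div_le_iff₀ hT_pos]
  nlinarith [hnum, hT_lb, hY0]

lemma main_bound (n : ℕ) (hn : 1 ≤ n) (hsmall : X^n ≤ 1/100) :
    |(∑' k : ℕ, (1:ℝ)/(Nat.fib (n+k) : ℝ)^2)⁻¹ -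
      ((Nat.fib n : ℝ)^2 - (Nat.fib (n-1) : ℝ)^2 + (2/3)*(-1:ℝ)^n)| ≤ 50 * X^n := by
  obtain ⟨m, rfl⟩ : ∃ m, n = m + 1 := ⟨n-1, (Nat.succ_pred_eq_of_pos hn).symm⟩
  rw [Nat.add_sub_cancel]
  have hXu := X_ub
  have hXl := X_lb
  have hY0 : 0 < X^(m+1) := pow_pos X_pos _
  have h1X : (0:ℝ) < 1 - X := by linarith
  have h1Xne : (1:ℝ) - X ≠ 0 := h1X.ne'
  have hsq : ((-1:ℝ)^(m+1))^2 = 1 := by rw [← pow_mul, mul_comm, pow_mul]; norm_num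
  have hY2 : X^(2*(m+1)) = (X^(m+1))^2 := by rw [← pow_mul, mul_comm (m+1) 2]
  have hY3 : X^(3*(m+1)) = (X^(m+1))^3 := by rw [← pow_mul, mul_comm (m+1) 3]
  set A : ℝ := 5*X^(m+1)*(1-X)⁻¹ with hA_def
  set c : ℝ := (2/15)*(-1:ℝ)^(m+1) with hc_def
  set P : ℝ := (1-X)/5*φ^(2*(m+1)) with hP_def
  set d : ℝ := X^m*(1-X)/5 with hd_def
  set T : ℝ := ∑' k : ℕ, (1:ℝ)/(Nat.fib (m+1+k) : ℝ)^2 with hT_def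
  have hB : 10*(-1:ℝ)^(m+1)*X^(2*(m+1))*(1+X^2)⁻¹ = c*A^2 := by
    rw [hc_def, hA_def]
    have h33 : 3*(1-X)^2 = 1+X^2 := by linear_combination 2*X_quad
    have h1X2 : (0:ℝ) < 1 + X^2 := by positivity
    field_simp
    linear_combination (50*(X^(m+1))^2) * h33
  have hE : |T - (A + c*A^2)| ≤ 60*(X^(m+1))^3 := by
    rw [← hB, ← hY3]
    have := tail_est (m+1) (by omega)
    rw [← hT_def] at this
    rw [hA_def]
    exact this
  have hPA : P * A = 1 := by
    rw [hP_def, hA_def]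
    have hg := gold_X (m+1)
    have hinv : (1-X)*(1-X)⁻¹ = 1 := mul_inv_cancel₀ h1Xne
    linear_combination ((1-X)*(1-X)⁻¹) * hg + hinv
  have hP_pos : 0 < P := by rw [hP_def]; positivity
  have hA_lb : 5*X^(m+1) ≤ A := by
    rw [hA_def]
    have hi : 0 < (1-X)⁻¹ := inv_pos.mpr h1X
    have hmul := mul_inv_cancel₀ h1Xne
    have h5 : (1:ℝ) ≤ (1-X)⁻¹ := by nlinarith
    nlinarith
  have hA_ub : A ≤ 9*X^(m+1) := by
    rw [hA_def]
    have hi : 0 < (1-X)⁻¹ := inv_pos.mpr h1X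
    have hmul := mul_inv_cancel₀ h1Xne
    have h5 : (1-X)⁻¹ ≤ 5/3 := by nlinarith
    nlinarith
  have habsc : |c| = 2/15 := by
    rw [hc_def, abs_mul, abs_pow, abs_neg, abs_one, one_pow, mul_one]; norm_num
  have hc2 : c^2 = 4/225 := by rw [hc_def, mul_pow, hsq]; norm_num
  have hd0 : 0 ≤ d := by rw [hd_def]; positivity
  have hd_ub : d ≤ X^(m+1) := by
    rw [hd_def, pow_succ]
    nlinarith [pow_pos X_pos m]
  have ha := a_eq m
  rw [ha, show (1-X)/5*φ^(2*(m+1)) - (2/15)*(-1:ℝ)^(m+1) - X^m*(1-X)/5 = P - c - d by rw [hP_def, hc_def, hd_def]]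
  exact invert_bound (X^(m+1)) T A c P d (T - (A + c*A^2)) hY0 hsmall hE (by ring) hPA
    hP_pos hA_lb hA_ub habsc hc2 hd0 hd_ub


end FibTail

theorem fib_reciprocal_square_tail_asymptotic :
    Filter.Tendsto
      (fun n : ℕ =>
        (∑' k : ℕ, (1 : ℝ) / (Nat.fib (n + k) : ℝ) ^ 2)⁻¹ -
          ((Nat.fib n : ℝ) ^ 2 - (Nat.fib (n - 1) : ℝ) ^ 2 + (2 / 3) * (-1 : ℝ) ^ n))
      Filter.atTop (nhds 0) := by
  have h0 : Filter.Tendsto (fun n : ℕ => FibTail.X ^ n) Filter.atTop (nhds 0) :=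
    tendsto_pow_atTop_nhds_zero_of_lt_one FibTail.X_pos.le FibTail.X_lt_one
  rw [← Filter.tendsto_add_atTop_iff_nat 1]
  apply squeeze_zero_norm' (a := fun n : ℕ => 50 * FibTail.X ^ (n + 1))
  · have h1 : ∀ᶠ n : ℕ in Filter.atTop, FibTail.X ^ n < 1/100 :=
      h0.eventually (gt_mem_nhds (by norm_num))
    filter_upwards [h1] with n hs
    have hsmall : FibTail.X ^ (n+1) ≤ 1/100 := by
      have h2 : FibTail.X ^ (n+1) ≤ FibTail.X ^ n :=
        pow_le_pow_of_le_one FibTail.X_pos.le FibTail.X_lt_one.le (Nat.le_succ n)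
      linarith
    have h3 := FibTail.main_bound (n+1) (by omega) hsmall
    rw [Nat.add_sub_cancel] at h3
    simpa [Real.norm_eq_abs] using h3
  · have h2 : Filter.Tendsto (fun n : ℕ => FibTail.X ^ (n+1)) Filter.atTop (nhds 0) := by
      exact h0.comp (Filter.tendsto_add_atTop_nat 1)
    simpa using h2.const_mul (50:ℝ)
end

section
/- For the Fibonacci sequence Fₙ, lim_{n→∞} [ (∑_{k=n}^∞ 1/F_{3k}²)^{-1} − (F_{3n}² − F_{3n−3}² + (4/9)(−1)ⁿ) ] = 0. -/
open Real Filter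

noncomputable def gq : ℝ := goldenRatio ^ 6

lemma gq_eq : gq = 8 * goldenRatio + 5 := by
  unfold gq
  linear_combination (goldenRatio^4 + goldenRatio^3 + 2*goldenRatio^2 + 3*goldenRatio + 5) * goldenRatio_sq

lemma sqrt5_bounds : 2 ≤ Real.sqrt 5 ∧ Real.sqrt 5 ≤ 9/4 := by
  have h := Real.sq_sqrt (show (0:ℝ) ≤ 5 by norm_num)
  have h0 := Real.sqrt_nonneg 5
  constructor <;> nlinarith

lemma gq_ge : 17 ≤ gq := by
  have h := sqrt5_bounds
  rw [gq_eq]; unfold goldenRatio; nlinarith [h.1]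

lemma gq_le : gq ≤ 18 := by
  have h := sqrt5_bounds
  rw [gq_eq]; unfold goldenRatio; nlinarith [h.2]

lemma gq18 : gq^2 + 1 = 18 * gq := by
  rw [gq_eq]
  linear_combination 64 * goldenRatio_sq

lemma fib3_sq (m : ℕ) : ((Nat.fib (3*m) : ℝ))^2 = (gq^m - 2*(-1)^m + (gq⁻¹)^m) / 5 := by
  have hpsi : goldenConj ^ 6 = gq⁻¹ := by
    have h : gq * goldenConj ^ 6 = 1 := by
      unfold gq
      rw [← mul_pow, goldenRatio_mul_goldenConj]; norm_num
    field_simp [show gq ≠ 0 by nlinarith [gq_ge]] at h ⊢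
    linarith [h]
  rw [Real.coe_fib_eq]
  rw [div_pow, Real.sq_sqrt (by norm_num : (0:ℝ) ≤ 5)]
  rw [pow_mul goldenRatio 3 m, pow_mul goldenConj 3 m]
  have hXY : (goldenRatio^3) * (goldenConj^3) = -1 := by
    rw [← mul_pow, goldenRatio_mul_goldenConj]; norm_num
  have e1 : ((goldenRatio^3)^m)^2 = gq^m := by
    unfold gq; rw [← pow_mul, ← pow_mul, ← pow_mul]; congr 1; ring
  have e2 : ((goldenConj^3)^m)^2 = (gq⁻¹)^m := by
    rw [← hpsi, ← pow_mul, ← pow_mul, ← pow_mul]; congr 1; ring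
  have e3 : (goldenRatio^3)^m * (goldenConj^3)^m = (-1)^m := by
    rw [← mul_pow, hXY]
  have : ((goldenRatio^3)^m - (goldenConj^3)^m)^2
      = ((goldenRatio^3)^m)^2 - 2*((goldenRatio^3)^m * (goldenConj^3)^m) + ((goldenConj^3)^m)^2 := by
    ring
  rw [this, e1, e2, e3]

lemma gq_pos : 0 < gq := by nlinarith [gq_ge]

lemma t_pos : 0 < gq⁻¹ := inv_pos.mpr gq_pos

lemma t_le : gq⁻¹ ≤ 1/17 := by
  rw [inv_le_comm₀ (by nlinarith [gq_ge]) (by norm_num)]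
  simpa using gq_ge

lemma t18 : (gq⁻¹)^2 + 1 = 18 * gq⁻¹ := by
  have h0 : gq ≠ 0 := ne_of_gt gq_pos
  have h1 : gq * gq⁻¹ = 1 := mul_inv_cancel₀ h0
  linear_combination (gq⁻¹)^2 * gq18 - (1 + gq*gq⁻¹ - 18*gq⁻¹) * h1

noncomputable def Dm (m : ℕ) : ℝ := gq^m - 2*(-1)^m + (gq⁻¹)^m

noncomputable def rem (m : ℕ) : ℝ :=
  (15*(gq⁻¹)^(2*m) - 10*(-1)^m*(gq⁻¹)^(3*m)) / Dm m

lemma gqm_ge (m : ℕ) (hm : 1 ≤ m) : 17 ≤ gq^m :=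
  le_trans gq_ge (le_self_pow₀ (by nlinarith [gq_ge]) (by omega))

lemma neg_one_pow_bounds (m : ℕ) : -1 ≤ ((-1:ℝ))^m ∧ ((-1:ℝ))^m ≤ 1 := by
  have habs : |((-1:ℝ))^m| = 1 := by rw [abs_pow, abs_neg, abs_one, one_pow]
  constructor
  · nlinarith [neg_abs_le (((-1:ℝ))^m), habs.le]
  · nlinarith [le_abs_self (((-1:ℝ))^m), habs.le]

lemma tm_le (m : ℕ) (hm : 1 ≤ m) : (gq⁻¹)^m ≤ 1/17 :=
  le_trans (pow_le_of_le_one t_pos.le (by nlinarith [t_le]) (by omega)) t_le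

lemma Dm_ge (m : ℕ) (hm : 1 ≤ m) : (15/17) * gq^m ≤ Dm m := by
  have h1 := gqm_ge m hm
  have h2 : (0:ℝ) < (gq⁻¹)^m := pow_pos t_pos m
  have h3 := neg_one_pow_bounds m
  unfold Dm; nlinarith [h3.1, h3.2]

lemma Dm_pos (m : ℕ) (hm : 1 ≤ m) : 0 < Dm m := by
  nlinarith [Dm_ge m hm, gqm_ge m hm]

lemma hQT (m : ℕ) : gq^m * (gq⁻¹)^m = 1 := by
  rw [← mul_pow, mul_inv_cancel₀ (ne_of_gt gq_pos), one_pow]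

lemma term_eq (m : ℕ) (hm : 1 ≤ m) :
    (1:ℝ)/((Nat.fib (3*m):ℝ))^2
      = 5*(gq⁻¹)^m + 10*(-1)^m*(gq⁻¹)^(2*m) + rem m := by
  have hD := Dm_pos m hm
  have halg : (5*(gq⁻¹)^m + 10*(-1)^m*(gq⁻¹)^(2*m)) * Dm m
      + (15*(gq⁻¹)^(2*m) - 10*(-1)^m*(gq⁻¹)^(3*m)) = 5 := by
    have h1 := hQT m
    have hE : (-1:ℝ)^m * (-1)^m = 1 := by
      rw [← pow_add]; exact Even.neg_one_pow ⟨m, rfl⟩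
    unfold Dm
    linear_combination (5 + 10*(-1)^m*(gq⁻¹)^m) * h1 - 20*(gq⁻¹)^(2*m) * hE
  rw [fib3_sq]
  have hshow : (1:ℝ)/((gq^m - 2*(-1)^m + (gq⁻¹)^m)/5) = 5 / Dm m := by
    unfold Dm; rw [one_div_div]
  rw [hshow]
  have hX : 5*(gq⁻¹)^m + 10*(-1)^m*(gq⁻¹)^(2*m)
      = (5 - (15*(gq⁻¹)^(2*m) - 10*(-1)^m*(gq⁻¹)^(3*m)))/Dm m := by
    rw [eq_div_iff (ne_of_gt hD)]; linarith [halg]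
  rw [hX, rem, ← add_div]
  congr 1; ring

lemma rem_bound (m : ℕ) (hm : 1 ≤ m) : |rem m| ≤ 20 * (gq⁻¹)^(3*m) := by
  have hD := Dm_pos m hm
  have hDg := Dm_ge m hm
  have hq := gqm_ge m hm
  have hqt := hQT m
  have hx : (0:ℝ) < (gq⁻¹)^m := pow_pos t_pos m
  have hx17 := tm_le m hm
  have h2 : (gq⁻¹)^(2*m) = ((gq⁻¹)^m)^2 := by rw [mul_comm 2 m, pow_mul]
  have h3 : (gq⁻¹)^(3*m) = ((gq⁻¹)^m)^3 := by rw [mul_comm 3 m, pow_mul]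
  have he := neg_one_pow_bounds m
  set x := (gq⁻¹)^m with hxdef
  rw [rem, abs_div, abs_of_pos hD, div_le_iff₀ hD, h2, h3]
  rw [abs_le]
  constructor <;> nlinarith [he.1, he.2, mul_pos hx hx, mul_pos (mul_pos hx hx) hx,
    mul_le_mul_of_nonneg_left hDg (show (0:ℝ) ≤ 20*x^3 by positivity),
    mul_pos hD hx]

lemma t_lt_one : gq⁻¹ < 1 := lt_of_le_of_lt t_le (by norm_num)

lemma tsum_struct (n : ℕ) (hn : 1 ≤ n) :
    ∃ R : ℝ, |R| ≤ 21*(gq⁻¹)^(3*n) ∧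
      ∑' k : ℕ, (1:ℝ)/((Nat.fib (3*(n+k)):ℝ))^2
        = 5*(gq⁻¹)^n * (1 - gq⁻¹)⁻¹
          + 10*(-1)^n*(gq⁻¹)^(2*n) * (1 + (gq⁻¹)^2)⁻¹ + R := by
  have ht0 := t_pos
  have ht1 := t_lt_one
  have h1e : ∀ k : ℕ, 5*(gq⁻¹)^(n+k) = (5*(gq⁻¹)^n) * (gq⁻¹)^k := by
    intro k; rw [pow_add]; ring
  have h2e : ∀ k : ℕ, 10*(-1:ℝ)^(n+k)*(gq⁻¹)^(2*(n+k))
      = (10*(-1:ℝ)^n*(gq⁻¹)^(2*n)) * (-((gq⁻¹)^2))^k := by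
    intro k
    rw [neg_pow, pow_add (-1:ℝ) n k, mul_add 2 n k, pow_add]
    ring
  have h3e : ∀ k : ℕ, (20:ℝ)*(gq⁻¹)^(3*(n+k)) = (20*(gq⁻¹)^(3*n)) * ((gq⁻¹)^3)^k := by
    intro k; rw [mul_add 3 n k, pow_add, pow_mul]; ring
  have hs1 : Summable (fun k : ℕ => 5*(gq⁻¹)^(n+k)) := by
    simp only [h1e]
    exact (summable_geometric_of_lt_one ht0.le ht1).mul_left _
  have hs2 : Summable (fun k : ℕ => 10*(-1:ℝ)^(n+k)*(gq⁻¹)^(2*(n+k))) := by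
    simp only [h2e]
    refine Summable.mul_left _ (summable_geometric_of_norm_lt_one ?_)
    rw [norm_neg, norm_pow, Real.norm_eq_abs, abs_of_pos ht0]
    nlinarith [t_le]
  have hrb : ∀ k : ℕ, ‖rem (n+k)‖ ≤ (20*(gq⁻¹)^(3*n)) * ((gq⁻¹)^3)^k := by
    intro k
    rw [← h3e k, Real.norm_eq_abs]
    exact rem_bound (n+k) (by omega)
  have ht3 : (gq⁻¹)^3 < 1 := pow_lt_one₀ ht0.le ht1 (by norm_num)
  have hgs : Summable (fun k : ℕ => (20*(gq⁻¹)^(3*n)) * ((gq⁻¹)^3)^k) :=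
    (summable_geometric_of_lt_one (pow_nonneg ht0.le 3) ht3).mul_left _
  have hs3 : Summable (fun k : ℕ => rem (n+k)) :=
    Summable.of_norm_bounded hgs hrb
  refine ⟨∑' k : ℕ, rem (n+k), ?_, ?_⟩
  · have hb : ‖∑' k : ℕ, rem (n+k)‖ ≤ ∑' k : ℕ, ((20*(gq⁻¹)^(3*n)) * ((gq⁻¹)^3)^k) :=
      (norm_tsum_le_tsum_norm hs3.norm).trans (Summable.tsum_le_tsum hrb hs3.norm hgs)
    rw [tsum_mul_left, tsum_geometric_of_lt_one (pow_nonneg ht0.le 3) ht3] at hb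
    rw [← Real.norm_eq_abs]
    have h13 : (gq⁻¹)^3 ≤ 1/4913 := by
      have := pow_le_pow_left₀ ht0.le t_le 3
      norm_num at this ⊢
      linarith
    have hinv : (1 - (gq⁻¹)^3)⁻¹ ≤ 21/20 := by
      rw [inv_le_comm₀ (by linarith) (by norm_num)]
      linarith
    calc ‖∑' k : ℕ, rem (n+k)‖ ≤ 20*(gq⁻¹)^(3*n) * (1 - (gq⁻¹)^3)⁻¹ := hb
      _ ≤ 21*(gq⁻¹)^(3*n) := by nlinarith [pow_pos ht0 (3*n), hinv]
  · have hcongr : ∀ k : ℕ, (1:ℝ)/((Nat.fib (3*(n+k)):ℝ))^2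
        = 5*(gq⁻¹)^(n+k) + 10*(-1:ℝ)^(n+k)*(gq⁻¹)^(2*(n+k)) + rem (n+k) :=
      fun k => term_eq (n+k) (by omega)
    rw [tsum_congr hcongr, Summable.tsum_add (hs1.add hs2) hs3, Summable.tsum_add hs1 hs2]
    congr 1
    congr 1
    · simp only [h1e]
      rw [tsum_mul_left, tsum_geometric_of_lt_one ht0.le ht1]
    · simp only [h2e]
      rw [tsum_mul_left, tsum_geometric_of_norm_lt_one (by
        rw [norm_neg, norm_pow, Real.norm_eq_abs, abs_of_pos ht0]; nlinarith [t_le]),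
        sub_neg_eq_add]

set_option maxHeartbeats 1000000 in
lemma main_bound (n : ℕ) (hn : 1 ≤ n) :
    |(∑' k : ℕ, (1:ℝ)/((Nat.fib (3*(n+k)):ℝ))^2)⁻¹
      - (((Nat.fib (3*n):ℝ))^2 - ((Nat.fib (3*n-3):ℝ))^2 + (4/9)*(-1:ℝ)^n)|
      ≤ 13 * (gq⁻¹)^n := by
  obtain ⟨m, rfl⟩ : ∃ m, n = m+1 := ⟨n-1, by omega⟩
  obtain ⟨R, hR, hTsum⟩ := tsum_struct (m+1) (by omega)
  have ht0 := t_pos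
  have ht17 := t_le
  set t : ℝ := gq⁻¹ with htdef
  set P : ℝ := t^(m+1) with hPdef
  set Q : ℝ := gq^(m+1) with hQdef
  set e : ℝ := (-1:ℝ)^(m+1) with hedef
  set a : ℝ := (1-t)⁻¹ with hadef
  set b : ℝ := (1+t^2)⁻¹ with hbdef
  have hQP : Q*P = 1 := hQT (m+1)
  have hP0 : 0 < P := pow_pos ht0 _
  have hP17 : P ≤ 1/17 := tm_le (m+1) (by omega)
  have hQ17 : 17 ≤ Q := gqm_ge (m+1) (by omega)
  have ha1 : (1-t)*a = 1 := mul_inv_cancel₀ (by nlinarith)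
  have hb1 : (1+t^2)*b = 1 := mul_inv_cancel₀ (by positivity)
  have haB : 1 ≤ a ∧ a ≤ 17/16 := by
    constructor <;> nlinarith [ha1]
  have hbB : 1/2 ≤ b ∧ b ≤ 1 := by
    constructor <;> nlinarith [hb1, sq_nonneg t]
  have he2 : e*e = 1 := by
    rw [hedef, ← pow_add]; exact Even.neg_one_pow ⟨m+1, rfl⟩
  have heB : -1 ≤ e ∧ e ≤ 1 := neg_one_pow_bounds (m+1)
  have ht18 : t^2 + 1 = 18*t := t18
  have h2n : t^(2*(m+1)) = P^2 := by rw [mul_comm 2 (m+1), pow_mul]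
  have h3n : t^(3*(m+1)) = P^3 := by rw [mul_comm 3 (m+1), pow_mul]
  rw [h2n] at hTsum
  rw [h3n] at hR
  -- closed form for A
  have hfib1 : ((Nat.fib (3*(m+1)):ℝ))^2 = (Q - 2*e + P)/5 := fib3_sq (m+1)
  have hsub : 3*(m+1) - 3 = 3*m := by omega
  have hQm : gq^m = Q*t := by
    rw [hQdef, pow_succ, mul_assoc, mul_inv_cancel₀ (ne_of_gt gq_pos), mul_one]
  have hPm : t^m = P*gq := by
    rw [hPdef, pow_succ, mul_assoc, inv_mul_cancel₀ (ne_of_gt gq_pos), mul_one]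
  have hem : (-1:ℝ)^m = -e := by rw [hedef, pow_succ]; ring
  have hfib2 : ((Nat.fib (3*(m+1)-3):ℝ))^2 = (Q*t + 2*e + P*gq)/5 := by
    rw [hsub, fib3_sq m, hQm, hPm, hem]; ring
  set M : ℝ := Q*(1-t)/5 - (16/45)*e with hMdef
  set ρ : ℝ := (P - P*gq)/5 with hrhodef
  have hAeq : ((Nat.fib (3*(m+1)):ℝ))^2 - ((Nat.fib (3*(m+1)-3):ℝ))^2 + (4/9)*(-1:ℝ)^(m+1)
      = M + ρ := by
    rw [hfib1, hfib2, hMdef, hrhodef, ← hedef]; ring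
  -- cancellation
  have h18 : 18*(1-t)^2 = 16*(1+t^2) := by linear_combination 2*ht18
  have hmid : 2*(1-t)*b = 16/9*a := by
    linear_combination (a*b/9)*h18 - 2*(1-t)*b*ha1 + (16/9)*a*hb1
  have hcancel : (5*P*a + 10*e*P^2*b) * M = 1 - (32/9)*P^2*b := by
    rw [hMdef]
    linear_combination (a*(1-t) + 2*e*P*b*(1-t))*hQP + ha1 + e*P*hmid - (32/9)*P^2*b*he2
  rw [hAeq, hTsum]
  set T : ℝ := 5*P*a + 10*e*P^2*b + R with hTdef
  have hTg : T = 5*P*a + 10*e*P^2*b + R := hTdef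
  have hgq18 := gq_le
  have hPgq : P*gq ≤ 18*P := by nlinarith only [hP0, hgq18]
  have hPgq0 : 0 < P*gq := mul_pos hP0 gq_pos
  have heb : -1 ≤ e*b ∧ e*b ≤ 1 := by
    constructor <;> nlinarith only [heB.1, heB.2, hbB.1, hbB.2]
  have hT_low : 4*P ≤ T := by
    rw [hTg]
    have habs := abs_le.mp hR
    nlinarith only [haB.1, haB.2, heb.1, heb.2, habs.1, habs.2,
      hP0, hP17, mul_pos hP0 hP0, mul_pos (mul_pos hP0 hP0) hP0,
      mul_le_mul_of_nonneg_left hP17 (le_of_lt (mul_pos hP0 hP0)),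
      mul_le_mul_of_nonneg_left hP17 (le_of_lt hP0)]
  have hT_up : T ≤ 7*P := by
    rw [hTg]
    have habs := abs_le.mp hR
    nlinarith only [haB.1, haB.2, heb.1, heb.2, habs.1, habs.2,
      hP0, hP17, mul_pos hP0 hP0, mul_pos (mul_pos hP0 hP0) hP0,
      mul_le_mul_of_nonneg_left hP17 (le_of_lt (mul_pos hP0 hP0)),
      mul_le_mul_of_nonneg_left hP17 (le_of_lt hP0)]
  have hT0 : 0 < T := lt_of_lt_of_le (by positivity) hT_low
  have hMabs : |M| ≤ Q/4 := by
    rw [abs_le]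
    constructor <;> rw [hMdef] <;>
      nlinarith only [heB.1, heB.2, ht0, ht17, hQ17]
  have hrhoabs : |ρ| ≤ 4*P := by
    rw [abs_le]
    constructor <;> rw [hrhodef] <;> nlinarith only [hP0, hPgq, hPgq0]
  have hkey : 1 - T*(M + ρ) = (32/9)*P^2*b - T*ρ - R*M := by
    rw [hTg]
    linear_combination (-1)*hcancel
  have h1TA : |1 - T*(M+ρ)| ≤ 40*P^2 := by
    rw [hkey]
    have e1 : |(32/9)*P^2*b - T*ρ - R*M| ≤ |(32/9)*P^2*b| + |T*ρ| + |R*M| := by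
      calc |(32/9)*P^2*b - T*ρ - R*M| ≤ |(32/9)*P^2*b - T*ρ| + |R*M| := abs_sub _ _
        _ ≤ |(32/9)*P^2*b| + |T*ρ| + |R*M| := by linarith [abs_sub ((32/9)*P^2*b) (T*ρ)]
    have e2 : |(32/9)*P^2*b| ≤ 4*P^2 := by
      rw [abs_of_nonneg (by positivity)]; nlinarith only [hbB.2, mul_pos hP0 hP0]
    have e3 : |T*ρ| ≤ 28*P^2 := by
      rw [abs_mul, abs_of_pos hT0]
      nlinarith only [abs_nonneg ρ, mul_le_mul hT_up hrhoabs (abs_nonneg ρ) (by positivity),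
        mul_pos hP0 hP0]
    have e4 : |R*M| ≤ 6*P^2 := by
      rw [abs_mul]
      have : |R| * |M| ≤ (21*P^3)*(Q/4) :=
        mul_le_mul hR hMabs (abs_nonneg M) (by positivity)
      nlinarith only [this, mul_pos (mul_pos hP0 hP0) hP0, hQP, hP0, hP17, abs_mul R M,
        mul_le_mul_of_nonneg_left hP17 (le_of_lt (mul_pos hP0 hP0))]
    linarith [e1, e2, e3, e4, sq_nonneg P]
  -- conclude
  have hfrac : T⁻¹ - (M + ρ) = (1 - T*(M+ρ))/T := by
    rw [eq_div_iff (ne_of_gt hT0)]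
    field_simp
  rw [hfrac, abs_div, abs_of_pos hT0]
  calc |1 - T*(M+ρ)|/T ≤ (40*P^2)/T := (div_le_div_iff_of_pos_right hT0).mpr h1TA
    _ ≤ (40*P^2)/(4*P) := div_le_div_of_nonneg_left (by positivity) (by positivity) hT_low
    _ ≤ 13*P := by
        rw [div_le_iff₀ (by positivity)]; nlinarith only [mul_pos hP0 hP0, hP0]

theorem fib_three_reciprocal_square_tail_asymptotic :
    Filter.Tendsto
      (fun n : ℕ =>
        (∑' k : ℕ, (1 : ℝ) / (Nat.fib (3 * (n + k)) : ℝ) ^ 2)⁻¹ -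
          ((Nat.fib (3 * n) : ℝ) ^ 2 - (Nat.fib (3 * n - 3) : ℝ) ^ 2 +
            (4 / 9) * (-1 : ℝ) ^ n))
      Filter.atTop (nhds 0) := by
  apply squeeze_zero_norm' (a := fun n : ℕ => 13 * (gq⁻¹)^n)
  · filter_upwards [Filter.eventually_ge_atTop 1] with n hn
    rw [Real.norm_eq_abs]
    exact main_bound n hn
  · have h := tendsto_pow_atTop_nhds_zero_of_lt_one t_pos.le t_lt_one
    simpa using h.const_mul (13:ℝ)
end

section
/- For the Fibonacci sequence Fₙ, lim_{n→∞} [ (∑_{k=n}^∞ 1/F_k⁴)^{-1} − (F_n⁴ − F_{n−1}⁴ + (2(−1)ⁿ/5)·F_{2n−1} + 2√5/75) ] = 0. -/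
set_option maxHeartbeats 1000000

noncomputable section
open Real Filter

namespace FibTail

lemma ht5 : Real.sqrt 5 ^ 2 = 5 := Real.sq_sqrt (by norm_num)
lemma ht5a : 2 < Real.sqrt 5 := by nlinarith [ht5, Real.sqrt_nonneg 5]
lemma ht5b : Real.sqrt 5 < 9/4 := by nlinarith [ht5, Real.sqrt_nonneg 5]

def ss : ℝ := (3 - Real.sqrt 5)/2

lemma ss_pos : 0 < ss := by unfold ss; nlinarith [ht5b]
lemma ss_lt : ss < 2/5 := by
  unfold ss
  nlinarith [ht5, Real.sqrt_nonneg 5]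
lemma ss_half : ss ≤ 1/2 := by nlinarith [ss_lt]
lemma ss_lt_one : ss < 1 := by nlinarith [ss_lt]

lemma fib_sq_s15 (k : ℕ) : 25 * (Nat.fib k : ℝ)^4 * ss^(2*k) = (1 - (-ss)^k)^4 := by
  have hb := Real.coe_fib_eq k
  simp only [goldenRatio, goldenConj] at hb
  have ht : Real.sqrt 5 ^ 2 = 5 := ht5
  set t := Real.sqrt 5 with htdef
  have htne : t ≠ 0 := by nlinarith [ht5a]
  have hψ : ((1-t)/2) = ((1+t)/2) * (-ss) := by unfold ss; linear_combination (-1/4) * ht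
  have h4 : (Nat.fib k : ℝ) * t = ((1+t)/2)^k * (1 - (-ss)^k) := by
    rw [hb, div_mul_cancel₀ _ htne, hψ, mul_pow]; ring
  have hφs : (((1+t)/2)^2 * ss) = 1 := by unfold ss; linear_combination ((1-t)/8) * ht
  have hphi : (((1+t)/2)^k)^4 * ss^(2*k) = 1 := by
    have h1 : (((1+t)/2)^k)^4 * ss^(2*k) = (((1+t)/2)^2 * ss)^(2*k) := by
      rw [mul_pow, ← pow_mul, ← pow_mul, show k*4 = 2*(2*k) by ring]
    rw [h1, hφs, one_pow]
  have ht4 : t^4 = 25 := by nlinarith [ht]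
  have hlhs : 25 * (Nat.fib k : ℝ)^4 * ss^(2*k) = ((Nat.fib k : ℝ) * t)^4 * ss^(2*k) := by
    rw [mul_pow, ht4]; ring
  rw [hlhs, h4, mul_pow]
  calc (((1+t)/2)^k)^4 * ((1 - (-ss)^k))^4 * ss^(2*k)
      = (((1+t)/2)^k)^4 * ss^(2*k) * (1 - (-ss)^k)^4 := by ring
    _ = (1 - (-ss)^k)^4 := by rw [hphi, one_mul]

lemma core_ineq (y : ℝ) (hy : |y| ≤ 1/2) :
    |25*y^2/(1-y)^4 - (25*y^2 + 100*y^3 + 250*y^4)| ≤ 25000 * |y|^5 := by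
  obtain ⟨hyl, hyr⟩ := abs_le.mp hy
  have h1 : (0:ℝ) < 1 - y := by linarith
  have hD : (0:ℝ) < (1-y)^4 := by positivity
  have heq : 25*y^2/(1-y)^4 - (25*y^2 + 100*y^3 + 250*y^4)
      = 25*y^5*(20 - 45*y + 36*y^2 - 10*y^3) / (1-y)^4 := by
    field_simp
    ring
  rw [heq, abs_div, abs_of_pos hD, div_le_iff₀ hD]
  have h53 : |20 - 45*y + 36*y^2 - 10*y^3| ≤ 53 := by
    rw [abs_le]; constructor <;> nlinarith
  have hD16 : (1:ℝ)/16 ≤ (1-y)^4 := by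
    have h2 : ((1:ℝ)/2)^4 ≤ (1-y)^4 := pow_le_pow_left₀ (by norm_num) (by linarith) 4
    norm_num at h2 ⊢
    linarith
  have habs : |25*y^5*(20 - 45*y + 36*y^2 - 10*y^3)| = 25*|y|^5 * |20 - 45*y + 36*y^2 - 10*y^3| := by
    rw [abs_mul, abs_mul, abs_pow, abs_of_nonneg (by norm_num : (0:ℝ) ≤ 25)]
  rw [habs]
  have hy5 : (0:ℝ) ≤ |y|^5 := by positivity
  nlinarith [mul_le_mul_of_nonneg_left h53 (by positivity : (0:ℝ) ≤ 25*|y|^5),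
    mul_le_mul_of_nonneg_left hD16 (by positivity : (0:ℝ) ≤ 25000*|y|^5)]

lemma term_bound (k : ℕ) (hk : 1 ≤ k) :
    |1/(Nat.fib k : ℝ)^4 - (25*ss^(2*k) + 100*(-1:ℝ)^k*ss^(3*k) + 250*ss^(4*k))|
      ≤ 25000 * ss^(5*k) := by
  have hfib := fib_sq_s15 k
  have hfibpos : (0:ℝ) < (Nat.fib k : ℝ) := by
    exact_mod_cast Nat.cast_pos.mpr (Nat.fib_pos.mpr hk)
  have hfne : ((Nat.fib k : ℝ))^4 ≠ 0 := by positivity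
  set y : ℝ := (-ss)^k with hydef
  have hs1 : ((-1:ℝ)^k)^2 = 1 := by
    rw [← pow_mul, mul_comm, pow_mul]; norm_num
  have hy0 : y = (-1:ℝ)^k * ss^k := by rw [hydef, neg_pow]
  have hyabs : |y| = ss^k := by
    rw [hydef, abs_pow, abs_neg, abs_of_pos ss_pos]
  have hssk : ss^k ≤ 1/2 := by
    calc ss^k ≤ ss^1 := pow_le_pow_of_le_one ss_pos.le ss_lt_one.le hk
    _ = ss := pow_one ss
    _ ≤ 1/2 := ss_half
  have hyle : |y| ≤ 1/2 := by rw [hyabs]; exact hssk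
  have hyne : y ≠ 0 := by
    intro h
    rw [h, abs_zero] at hyabs
    exact absurd hyabs.symm (ne_of_gt (pow_pos ss_pos k))
  have hp : ∀ m : ℕ, ss^(m*k) = (ss^k)^m := fun m => by rw [mul_comm, pow_mul]
  have hy2 : y^2 = ss^(2*k) := by
    rw [hy0, mul_pow, hs1, one_mul, hp 2]
  have hy4 : y^4 = ss^(4*k) := by
    rw [hy0, mul_pow, show ((-1:ℝ)^k)^4 = (((-1:ℝ)^k)^2)^2 by ring, hs1, one_pow, one_mul, hp 4]
  have hy3 : y^3 = (-1:ℝ)^k * ss^(3*k) := by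
    rw [hy0, mul_pow, show ((-1:ℝ)^k)^3 = (((-1:ℝ)^k)^2) * (-1:ℝ)^k by ring, hs1, one_mul, hp 3]
  -- value of 1/fib^4
  rw [← hy2] at hfib
  have hA : 1/(Nat.fib k : ℝ)^4 = 25*y^2/(1-y)^4 := by
    rw [← hfib]
    field_simp
  have hmid : 25*ss^(2*k) + 100*(-1:ℝ)^k*ss^(3*k) + 250*ss^(4*k)
      = 25*y^2 + 100*y^3 + 250*y^4 := by
    rw [hy2, hy3, hy4]; ring
  rw [hA, hmid, show (25000:ℝ)*ss^(5*k) = 25000*|y|^5 by rw [hyabs, hp 5]]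
  exact core_ineq y hyle


def TT (n : ℕ) : ℝ := ∑' k : ℕ, (1:ℝ)/(Nat.fib (n+k) : ℝ)^4
def aa : ℝ := (15*Real.sqrt 5 + 25)/2
def bb : ℝ := 50 + 20*Real.sqrt 5
def cc : ℝ := (525*Real.sqrt 5 + 1125)/9
def GG (n : ℕ) : ℝ := aa*ss^(2*n) + bb*((-1:ℝ)^n*ss^(3*n)) + cc*ss^(4*n)
def rr (n : ℕ) : ℝ := TT n - GG n

lemma ss2_lt_one : ss^2 < 1 := by nlinarith [ss_pos, ss_lt]
lemma ss3_lt_one : ss^3 < 1 := by nlinarith [ss_pos, ss_lt, ss2_lt_one]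
lemma ss4_lt_one : ss^4 < 1 := by nlinarith [ss_pos, ss_lt, ss2_lt_one]
lemma ss5_le_half : ss^5 ≤ 1/2 := by
  calc ss^5 ≤ ss^1 := pow_le_pow_of_le_one ss_pos.le ss_lt_one.le (by norm_num)
  _ = ss := pow_one ss
  _ ≤ 1/2 := ss_half
lemma ss5_lt_one : ss^5 < 1 := by nlinarith [ss5_le_half]

lemma lemA : 25*(1 - ss^2)⁻¹ = aa := by
  have hne : (1 - ss^2) ≠ 0 := by nlinarith [ss2_lt_one]
  rw [← div_eq_mul_inv, div_eq_iff hne]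
  unfold aa ss
  linear_combination (-65/8 + 15/8*Real.sqrt 5) * ht5

lemma lemB : 100*(1 - (-ss^3))⁻¹ = bb := by
  have hne : (1 - (-ss^3)) ≠ 0 := by nlinarith [pow_pos ss_pos 3]
  rw [← div_eq_mul_inv, div_eq_iff hne]
  unfold bb ss
  linear_combination (95/4 - 65/4*Real.sqrt 5 + 5/2*Real.sqrt 5^2) * ht5

lemma lemC : 250*(1 - ss^4)⁻¹ = cc := by
  have hne : (1 - ss^4) ≠ 0 := by nlinarith [ss4_lt_one]
  rw [← div_eq_mul_inv, div_eq_iff hne]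
  unfold cc ss
  linear_combination (-2425/16 + 5825/48*Real.sqrt 5 - 575/16*Real.sqrt 5^2
    + 175/48*Real.sqrt 5^3) * ht5

lemma tail_decomp (n : ℕ) (hn : 1 ≤ n) :
    Summable (fun k : ℕ => (1:ℝ)/(Nat.fib (n+k) : ℝ)^4) ∧ |rr n| ≤ 50000 * ss^(5*n) := by
  set g : ℕ → ℝ := fun k =>
    25*ss^(2*n)*(ss^2)^k + 100*((-1:ℝ)^n*ss^(3*n))*(-ss^3)^k + 250*ss^(4*n)*(ss^4)^k with hgdef
  set f : ℕ → ℝ := fun k => (1:ℝ)/(Nat.fib (n+k) : ℝ)^4 with hfdef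
  set h : ℕ → ℝ := fun k => f k - g k with hhdef
  have hsg2 : Summable (fun k : ℕ => (ss^2)^k) :=
    summable_geometric_of_lt_one (pow_pos ss_pos 2).le ss2_lt_one
  have hsg3 : Summable (fun k : ℕ => (-ss^3)^k) := by
    apply summable_geometric_of_norm_lt_one
    rw [norm_neg, Real.norm_eq_abs, abs_of_pos (pow_pos ss_pos 3)]
    exact ss3_lt_one
  have hsg4 : Summable (fun k : ℕ => (ss^4)^k) :=
    summable_geometric_of_lt_one (pow_pos ss_pos 4).le ss4_lt_one
  have hsg5 : Summable (fun k : ℕ => (ss^5)^k) :=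
    summable_geometric_of_lt_one (pow_pos ss_pos 5).le ss5_lt_one
  have hsum_g : Summable g :=
    ((hsg2.mul_left _).add (hsg3.mul_left _)).add (hsg4.mul_left _)
  have hgeq : ∀ k : ℕ, g k = 25*ss^(2*(n+k)) + 100*(-1:ℝ)^(n+k)*ss^(3*(n+k))
      + 250*ss^(4*(n+k)) := by
    intro k
    have e2 : ss^(2*(n+k)) = ss^(2*n)*(ss^2)^k := by rw [mul_add, pow_add, pow_mul, pow_mul]
    have e3 : ss^(3*(n+k)) = ss^(3*n)*(ss^3)^k := by rw [mul_add, pow_add, pow_mul, pow_mul]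
    have e4 : ss^(4*(n+k)) = ss^(4*n)*(ss^4)^k := by rw [mul_add, pow_add, pow_mul, pow_mul]
    have em : (-1:ℝ)^(n+k) = (-1:ℝ)^n*(-1:ℝ)^k := pow_add _ _ _
    have eneg : (-ss^3)^k = (-1:ℝ)^k*(ss^3)^k := by rw [neg_pow]
    simp only [hgdef]
    rw [e2, e3, e4, em, eneg]
    ring
  have hh : ∀ k, ‖h k‖ ≤ 25000*ss^(5*n)*(ss^5)^k := by
    intro k
    have tb := term_bound (n+k) (le_trans hn (Nat.le_add_right n k))
    have e5 : ss^(5*(n+k)) = ss^(5*n)*(ss^5)^k := by rw [mul_add, pow_add, pow_mul, pow_mul]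
    rw [Real.norm_eq_abs]
    simp only [hhdef, hfdef]
    rw [hgeq k]
    calc |1/(Nat.fib (n+k) : ℝ)^4 - (25*ss^(2*(n+k)) + 100*(-1:ℝ)^(n+k)*ss^(3*(n+k))
        + 250*ss^(4*(n+k)))| ≤ 25000 * ss^(5*(n+k)) := tb
    _ = 25000*ss^(5*n)*(ss^5)^k := by rw [e5]; ring
  have hsum_bnd : Summable (fun k : ℕ => 25000*ss^(5*n)*(ss^5)^k) := hsg5.mul_left _
  have hsum_h : Summable h := Summable.of_norm_bounded hsum_bnd hh
  have hsum_f : Summable f := by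
    have : f = fun k => g k + h k := by
      funext k; simp only [hhdef]; ring
    rw [this]; exact hsum_g.add hsum_h
  refine ⟨hsum_f, ?_⟩
  have hTT : TT n = (∑' k, g k) + (∑' k, h k) := by
    have : TT n = ∑' k, (g k + h k) := by
      unfold TT
      apply tsum_congr
      intro k
      simp only [hhdef, hfdef]
      ring
    rw [this, Summable.tsum_add hsum_g hsum_h]
  have hGsum : (∑' k, g k) = GG n := by
    rw [hgdef]
    rw [Summable.tsum_add ((hsg2.mul_left _).add (hsg3.mul_left _)) (hsg4.mul_left _),
        Summable.tsum_add (hsg2.mul_left _) (hsg3.mul_left _)]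
    rw [tsum_mul_left, tsum_mul_left, tsum_mul_left]
    rw [tsum_geometric_of_lt_one (pow_pos ss_pos 2).le ss2_lt_one,
        tsum_geometric_of_lt_one (pow_pos ss_pos 4).le ss4_lt_one]
    rw [tsum_geometric_of_norm_lt_one (by
      rw [norm_neg, Real.norm_eq_abs, abs_of_pos (pow_pos ss_pos 3)]
      exact ss3_lt_one)]
    unfold GG
    rw [← lemA, ← lemB, ← lemC]
    ring
  have hrr : rr n = ∑' k, h k := by
    unfold rr
    rw [hTT, hGsum]; ring
  rw [hrr]
  have hsum_hn : Summable (fun k => ‖h k‖) :=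
    Summable.of_nonneg_of_le (fun k => norm_nonneg _) hh hsum_bnd
  calc |∑' k, h k| ≤ ∑' k, ‖h k‖ := by
        rw [← Real.norm_eq_abs]
        exact norm_tsum_le_tsum_norm hsum_hn
  _ ≤ ∑' k, 25000*ss^(5*n)*(ss^5)^k := Summable.tsum_le_tsum hh hsum_hn hsum_bnd
  _ = 25000*ss^(5*n)*(1-ss^5)⁻¹ := by
        rw [tsum_mul_left, tsum_geometric_of_lt_one (pow_pos ss_pos 5).le ss5_lt_one]
  _ ≤ 50000 * ss^(5*n) := by
        have h2 : (1-ss^5)⁻¹ ≤ 2 := by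
          have hhalf : (1:ℝ)/2 ≤ 1 - ss^5 := by nlinarith [ss5_le_half]
          calc (1-ss^5)⁻¹ ≤ ((1:ℝ)/2)⁻¹ := inv_anti₀ (by norm_num) hhalf
          _ = 2 := by norm_num
        have hp5 : (0:ℝ) ≤ 25000*ss^(5*n) :=
          mul_nonneg (by norm_num) (pow_nonneg ss_pos.le _)
        nlinarith [hp5]


lemma prod_id (x σ : ℝ) (hσ : σ^2 = 1) :
    ((3*Real.sqrt 5-5)/2 - (5-Real.sqrt 5)*σ*x + (2*Real.sqrt 5/3)*x^2
      - (5+Real.sqrt 5)*σ*x^3 - ((5+3*Real.sqrt 5)/2)*x^4) * (aa + bb*(σ*x) + cc*x^2)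
    = 25 + x^3*( (-(1100+550*Real.sqrt 5)/3)*σ + (-4375/18 - 625*Real.sqrt 5/6)*x
      + (-(3575+1625*Real.sqrt 5)/3)*(σ*x^2) + (-750 - 1000*Real.sqrt 5/3)*x^3 ) := by
  unfold aa bb cc
  linear_combination (45/4 + 75/2*x*σ + 225/2*x^2 + 385/6*x^3*σ + 275/36*x^4
    - 265/3*x^5*σ - 175/2*x^6) * ht5
    + ((-250 - 50*Real.sqrt 5 + 20*Real.sqrt 5^2)*x^2
      + (-250 - 150*Real.sqrt 5 - 20*Real.sqrt 5^2)*x^4) * hσ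

lemma PX (m : ℕ) :
    25*((Nat.fib (m+1) : ℝ)^4 - (Nat.fib m : ℝ)^4
        + (2*(-1:ℝ)^(m+1)/5)*(Nat.fib (2*m+1) : ℝ) + 2*Real.sqrt 5/75) * (ss^(m+1))^2
      = (3*Real.sqrt 5-5)/2 - (5-Real.sqrt 5)*((-1:ℝ)^(m+1))*ss^(m+1)
        + (2*Real.sqrt 5/3)*(ss^(m+1))^2
        - (5+Real.sqrt 5)*((-1:ℝ)^(m+1))*(ss^(m+1))^3
        - ((5+3*Real.sqrt 5)/2)*(ss^(m+1))^4 := by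
  have ht : Real.sqrt 5 ^ 2 = 5 := ht5
  unfold ss
  set t : ℝ := Real.sqrt 5 with htdef
  have htne : t ≠ 0 := by nlinarith [ht5a]
  set n := m + 1 with hndef
  set x : ℝ := ((3-t)/2)^n with hxdef
  set σ : ℝ := (-1:ℝ)^n with hσdef
  set F : ℝ := ((1+t)/2)^n with hFdef
  set G : ℝ := ((1-t)/2)^n with hGdef
  have hσ2 : σ^2 = 1 := by
    rw [hσdef, ← pow_mul, mul_comm, pow_mul]; norm_num
  have hprod : ((1+t)/2)*((1-t)/2) = -1 := by linear_combination (-1/4)*ht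
  have hFG : F*G = σ := by
    rw [hFdef, hGdef, hσdef, ← mul_pow, hprod]
  have hψ2 : ((1-t)/2)^2 = (3-t)/2 := by linear_combination (1/4)*ht
  have hφ2s : ((1+t)/2)^2*((3-t)/2) = 1 := by linear_combination ((1-t)/8)*ht
  have hG2 : G^2 = x := by
    rw [hGdef, hxdef, ← pow_mul, mul_comm, pow_mul, hψ2]
  have hF2 : F^2*x = 1 := by
    rw [hFdef, hxdef, ← pow_mul, mul_comm n 2, pow_mul, ← mul_pow, hφ2s, one_pow]
  have ht4 : t^4 = 25 := by nlinarith [ht]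
  -- Binet values
  have hbn : (Nat.fib n : ℝ) * t = F - G := by
    have hb := Real.coe_fib_eq n
    simp only [goldenRatio, goldenConj] at hb
    rw [hb, div_mul_cancel₀ _ htne]
  have hbm : (Nat.fib m : ℝ) * t = ((1+t)/2)^m - ((1-t)/2)^m := by
    have hb := Real.coe_fib_eq m
    simp only [goldenRatio, goldenConj] at hb
    rw [hb, div_mul_cancel₀ _ htne]
  have hb2 : (Nat.fib (2*m+1) : ℝ) * t = ((1+t)/2)^(2*m+1) - ((1-t)/2)^(2*m+1) := by
    have hb := Real.coe_fib_eq (2*m+1)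
    simp only [goldenRatio, goldenConj] at hb
    rw [hb, div_mul_cancel₀ _ htne]
  -- lower index expressions
  have hFm : ((1+t)/2)^m = -F*((1-t)/2) := by
    have h1 : ((1+t)/2)^m * ((1+t)/2) = F := by rw [hFdef, hndef, pow_succ]
    calc ((1+t)/2)^m = -(((1+t)/2)^m * (((1+t)/2)*((1-t)/2))) := by rw [hprod]; ring
    _ = -(((1+t)/2)^m * ((1+t)/2)) * ((1-t)/2) := by ring
    _ = -F*((1-t)/2) := by rw [h1]
  have hGm : ((1-t)/2)^m = -G*((1+t)/2) := by
    have h1 : ((1-t)/2)^m * ((1-t)/2) = G := by rw [hGdef, hndef, pow_succ]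
    calc ((1-t)/2)^m = -(((1-t)/2)^m * (((1+t)/2)*((1-t)/2))) := by rw [hprod]; ring
    _ = -(((1-t)/2)^m * ((1-t)/2)) * ((1+t)/2) := by ring
    _ = -G*((1+t)/2) := by rw [h1]
  have hFodd : ((1+t)/2)^(2*m+1) = -F^2*((1-t)/2) := by
    have h1 : ((1+t)/2)^(2*m+1) * ((1+t)/2) = F^2 := by
      rw [← pow_succ, hFdef, ← pow_mul, hndef]
      congr 1
      ring
    calc ((1+t)/2)^(2*m+1)
        = -(((1+t)/2)^(2*m+1) * (((1+t)/2)*((1-t)/2))) := by rw [hprod]; ring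
    _ = -(((1+t)/2)^(2*m+1) * ((1+t)/2)) * ((1-t)/2) := by ring
    _ = -F^2*((1-t)/2) := by rw [h1]
  have hGodd : ((1-t)/2)^(2*m+1) = -G^2*((1+t)/2) := by
    have h1 : ((1-t)/2)^(2*m+1) * ((1-t)/2) = G^2 := by
      rw [← pow_succ, hGdef, ← pow_mul, hndef]
      congr 1
      ring
    calc ((1-t)/2)^(2*m+1)
        = -(((1-t)/2)^(2*m+1) * (((1+t)/2)*((1-t)/2))) := by rw [hprod]; ring
    _ = -(((1-t)/2)^(2*m+1) * ((1-t)/2)) * ((1+t)/2) := by ring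
    _ = -G^2*((1+t)/2) := by rw [h1]
  -- hA
  have hA : 25*(Nat.fib n : ℝ)^4*x^2 = 1 - 4*σ*x + 6*x^2 - 4*σ*x^3 + x^4 := by
    have h1 : 25*(Nat.fib n : ℝ)^4*x^2 = ((Nat.fib n : ℝ)*t)^4*x^2 := by
      rw [mul_pow, ht4]; ring
    rw [h1, hbn]
    have e : (F-G)^4*x^2 = (F^2*x)^2 - 4*((F^2*x)*(F*G))*x + 6*((F*G)^2)*x^2
        - 4*((F*G)*(G^2))*x^2 + ((G^2)^2)*x^2 := by ring
    rw [e, hF2, hFG, hσ2, hG2]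
    ring
  -- hB
  have hB : 25*(Nat.fib m : ℝ)^4*(x^2*((3-t)/2)^2)
      = x^4 + 4*σ*((3-t)/2)*x^3 + 6*((3-t)/2)^2*x^2 + 4*((3-t)/2)^3*σ*x + ((3-t)/2)^4 := by
    have h1 : 25*(Nat.fib m : ℝ)^4*(x^2*((3-t)/2)^2)
        = ((Nat.fib m : ℝ)*t)^4*(x^2*((3-t)/2)^2) := by
      rw [mul_pow, ht4]; ring
    rw [h1, hbm, hFm, hGm]
    have e : (-F*((1-t)/2) - (-G*((1+t)/2)))^4*(x^2*((3-t)/2)^2)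
        = ((G^2)^2)*((((1+t)/2)^2*((3-t)/2))^2)*x^2
        - 4*((G^2)*(F*G)*(((1+t)/2)^2*((3-t)/2))*(((1+t)/2)*((1-t)/2)))*(((3-t)/2)*x^2)
        + 6*((G^2)*(F^2*x)*(((1+t)/2)^2*((3-t)/2))*(((1-t)/2)^2))*(((3-t)/2)*x)
        - 4*((F*G)*(F^2*x)*(((1+t)/2)*((1-t)/2))*(((1-t)/2)^2))*(((3-t)/2)^2*x)
        + ((F^2*x)^2)*((((1-t)/2)^2)^2)*((3-t)/2)^2 := by ring
    rw [e, hφ2s, hprod, hψ2, hG2, hFG, hF2]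
    ring
  -- hC
  have hC : (Nat.fib (2*m+1) : ℝ)*(t*x) = x^2*((1+t)/2) - (1-t)/2 := by
    have h1 : (Nat.fib (2*m+1) : ℝ)*(t*x) = ((Nat.fib (2*m+1) : ℝ)*t)*x := by ring
    rw [h1, hb2, hFodd, hGodd]
    have e : (-F^2*((1-t)/2) - (-G^2*((1+t)/2)))*x
        = -(F^2*x)*((1-t)/2) + (G^2)*((1+t)/2)*x := by ring
    rw [e, hF2, hG2]
    ring
  -- combine
  have hmne : ((3-t)^2*t) ≠ 0 := by
    intro h
    rcases mul_eq_zero.mp h with h1 | h1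
    · have : (3-t) = 0 := by
        have := pow_eq_zero_iff (n := 2) (by norm_num) |>.mp h1
        exact this
      nlinarith [ht5b]
    · exact htne h1
  apply mul_right_cancel₀ hmne
  linear_combination ((3-t)^2*t) * hA - (4*t) * hB + (10*σ*x*(3-t)^2) * hC
    + (-9/4*t + 3/2*t^2 - 1/4*t^3 + 9*x*σ - 6*x*σ*t + x*σ*t^2 - 9*x^3*σ + x^3*σ*t^2
      - 11/2*x^4*t + 3/2*x^4*t^2) * ht


def Pqf (n : ℕ) : ℝ := (3*Real.sqrt 5-5)/2 - (5-Real.sqrt 5)*((-1:ℝ)^n)*ss^n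
  + (2*Real.sqrt 5/3)*(ss^n)^2 - (5+Real.sqrt 5)*((-1:ℝ)^n)*(ss^n)^3
  - ((5+3*Real.sqrt 5)/2)*(ss^n)^4

def Wf (n : ℕ) : ℝ := (-(1100+550*Real.sqrt 5)/3)*((-1:ℝ)^n)
  + (-4375/18 - 625*Real.sqrt 5/6)*(ss^n)
  + (-(3575+1625*Real.sqrt 5)/3)*(((-1:ℝ)^n)*(ss^n)^2)
  + (-750 - 1000*Real.sqrt 5/3)*(ss^n)^3

def Gqf (n : ℕ) : ℝ := aa + bb*(((-1:ℝ)^n)*(ss^n)) + cc*(ss^n)^2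

lemma sigma_sq (n : ℕ) : ((-1:ℝ)^n)^2 = 1 := by
  rw [← pow_mul, mul_comm, pow_mul]; norm_num

lemma TT_split (n : ℕ) : TT n = (ss^n)^2*Gqf n + rr n := by
  have e2 : ss^(2*n) = (ss^n)^2 := by rw [mul_comm, pow_mul]
  have e3 : ss^(3*n) = (ss^n)^3 := by rw [mul_comm, pow_mul]
  have e4 : ss^(4*n) = (ss^n)^4 := by rw [mul_comm, pow_mul]
  have : TT n = GG n + rr n := by unfold rr; ring
  rw [this]
  unfold GG Gqf
  rw [e2, e3, e4]
  ring

lemma TT_lb (n : ℕ) (hn : 1 ≤ n) : ss^(2*n) ≤ TT n := by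
  have hsum := (tail_decomp n hn).1
  have h0 : (1:ℝ)/(Nat.fib (n+0):ℝ)^4 ≤ TT n :=
    Summable.le_tsum hsum 0 (fun i _ => by positivity)
  rw [add_zero] at h0
  refine le_trans ?_ h0
  have hfpos : (0:ℝ) < (Nat.fib n : ℝ) := by
    exact_mod_cast Nat.cast_pos.mpr (Nat.fib_pos.mpr hn)
  have hfp4 : (0:ℝ) < (Nat.fib n:ℝ)^4 := by positivity
  rw [le_div_iff₀ hfp4]
  have hfib := fib_sq_s15 n
  have hyabs : |(-ss)^n| = ss^n := by
    rw [abs_pow, abs_neg, abs_of_pos ss_pos]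
  have hssk : ss^n ≤ 1/2 := by
    calc ss^n ≤ ss^1 := pow_le_pow_of_le_one ss_pos.le ss_lt_one.le hn
    _ = ss := pow_one ss
    _ ≤ 1/2 := ss_half
  obtain ⟨hyl, hyr⟩ := abs_le.mp (le_trans (le_of_eq hyabs) hssk)
  have hb : (1 - (-ss)^n)^4 ≤ (3/2:ℝ)^4 := by
    apply pow_le_pow_left₀ (by linarith) (by linarith)
  nlinarith [hfib, pow_pos ss_pos (2*n)]

lemma eventual_id (m : ℕ) :
    (TT (m+1))⁻¹ - ((Nat.fib (m+1) : ℝ)^4 - (Nat.fib m : ℝ)^4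
        + (2*(-1:ℝ)^(m+1)/5)*(Nat.fib (2*m+1) : ℝ) + 2*Real.sqrt 5/75)
    = -(((ss^(m+1))^2/TT (m+1)) * ( ss^(m+1)*(Wf (m+1))/25
        + (Pqf (m+1)/25)*(rr (m+1)/(ss^(m+1))^4) )) := by
  have hPX := PX m
  have hprod := prod_id (ss^(m+1)) ((-1:ℝ)^(m+1)) (sigma_sq (m+1))
  have hTT := TT_split (m+1)
  have hTpos : 0 < TT (m+1) :=
    lt_of_lt_of_le (pow_pos ss_pos (2*(m+1))) (TT_lb (m+1) (by omega))
  have hTne : TT (m+1) ≠ 0 := hTpos.ne'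
  have hxpos : (0:ℝ) < ss^(m+1) := pow_pos ss_pos (m+1)
  have hxne : (ss^(m+1) : ℝ) ≠ 0 := hxpos.ne'
  set P : ℝ := ((Nat.fib (m+1) : ℝ)^4 - (Nat.fib m : ℝ)^4
      + (2*(-1:ℝ)^(m+1)/5)*(Nat.fib (2*m+1) : ℝ) + 2*Real.sqrt 5/75) with hPdef
  have hTP : TT (m+1) * (25*P*(ss^(m+1))^2)
      = 25*(ss^(m+1))^2 + (ss^(m+1))^5*Wf (m+1) + Pqf (m+1)*rr (m+1) := by
    unfold Pqf Wf Gqf at *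
    linear_combination (25*P*(ss^(m+1))^2)*hTT
      + ((ss^(m+1))^2*(aa + bb*(((-1:ℝ)^(m+1))*(ss^(m+1))) + cc*(ss^(m+1))^2)
          + rr (m+1))*hPX
      + (ss^(m+1))^2*hprod
  have hfrac : (TT (m+1))⁻¹ - P
      = (25*(ss^(m+1))^4 - (TT (m+1)*(25*P*(ss^(m+1))^2))*(ss^(m+1))^2)
        /(25*(ss^(m+1))^4*TT (m+1)) := by
    field_simp
  rw [hfrac, hTP]
  field_simp
  ring


lemma key0 (d : ℝ) (j : ℕ) (hj : 1 ≤ j) :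
    Tendsto (fun n : ℕ => d*(ss^n)^j) atTop (nhds 0) := by
  have h1 : Tendsto (fun n : ℕ => (ss^j)^n) atTop (nhds 0) :=
    tendsto_pow_atTop_nhds_zero_of_lt_one (pow_nonneg ss_pos.le j)
      (pow_lt_one₀ ss_pos.le ss_lt_one (by omega))
  have h2 := h1.const_mul d
  rw [mul_zero] at h2
  refine h2.congr (fun n => ?_)
  rw [← pow_mul, mul_comm j n, pow_mul]

lemma key1 (d : ℝ) (j : ℕ) (hj : 1 ≤ j) :
    Tendsto (fun n : ℕ => d*(((-1:ℝ)^n)*(ss^n)^j)) atTop (nhds 0) := by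
  apply squeeze_zero_norm (a := fun n : ℕ => (abs d)*(ss^n)^j) (fun n => ?_) (key0 (abs d) j hj)
  show ‖_‖ ≤ _
  rw [Real.norm_eq_abs, abs_mul, abs_mul, abs_pow, abs_pow, abs_neg, abs_one, one_pow,
    one_mul, abs_of_nonneg (pow_nonneg ss_pos.le n)]

lemma rr_div_lim (j : ℕ) (hj : j ≤ 4) :
    Tendsto (fun n : ℕ => rr n/(ss^n)^j) atTop (nhds 0) := by
  apply squeeze_zero_norm' (a := fun n : ℕ => 50000*(ss^n)^(5-j))
  · filter_upwards [Filter.eventually_ge_atTop 1] with n hn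
    have hb := (tail_decomp n hn).2
    have hxpos : (0:ℝ) < ss^n := pow_pos ss_pos n
    have e5 : ss^(5*n) = (ss^n)^5 := by rw [mul_comm, pow_mul]
    rw [Real.norm_eq_abs, abs_div, abs_of_pos (pow_pos hxpos j), div_le_iff₀ (pow_pos hxpos j)]
    calc |rr n| ≤ 50000*ss^(5*n) := hb
    _ = 50000*(ss^n)^(5-j)*(ss^n)^j := by
        rw [e5, mul_assoc, ← pow_add, show 5-j+j = 5 by omega]
  · exact key0 50000 (5-j) (by omega)

theorem main_result :
    Filter.Tendsto
      (fun n : ℕ =>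
        (∑' k : ℕ, (1 : ℝ) / (Nat.fib (n + k) : ℝ) ^ 4)⁻¹ -
          ((Nat.fib n : ℝ) ^ 4 - (Nat.fib (n - 1) : ℝ) ^ 4 +
            (2 * (-1 : ℝ) ^ n / 5) * (Nat.fib (2 * n - 1) : ℝ) +
            2 * Real.sqrt 5 / 75))
      Filter.atTop (nhds 0) := by
  have haa_pos : 0 < aa := by unfold aa; nlinarith [ht5a]
  -- limit of TT n / (ss^n)^2
  have hTGG : ∀ n : ℕ, TT n/(ss^n)^2
      = aa + bb*(((-1:ℝ)^n)*(ss^n)^1) + cc*(ss^n)^2 + rr n/(ss^n)^2 := by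
    intro n
    have hxne : (ss^n : ℝ) ≠ 0 := (pow_pos ss_pos n).ne'
    rw [TT_split n]
    unfold Gqf
    field_simp
  have hTx : Tendsto (fun n : ℕ => TT n/(ss^n)^2) atTop (nhds aa) := by
    have h := ((tendsto_const_nhds (x := aa)).add (key1 bb 1 le_rfl)).add
      (key0 cc 2 (by norm_num)) |>.add (rr_div_lim 2 (by norm_num))
    rw [add_zero, add_zero, add_zero] at h
    exact h.congr (fun n => (hTGG n).symm)
  have hTxinv : Tendsto (fun n : ℕ => (ss^n)^2/TT n) atTop (nhds aa⁻¹) := by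
    have h := hTx.inv₀ haa_pos.ne'
    exact h.congr (fun n => inv_div _ _)
  -- limit of ss^n * Wf n / 25
  have hW : Tendsto (fun n : ℕ => ss^n*(Wf n)/25) atTop (nhds 0) := by
    have h := (((key1 ((-(1100+550*Real.sqrt 5)/3)/25) 1 le_rfl).add
      (key0 ((-4375/18 - 625*Real.sqrt 5/6)/25) 2 (by norm_num))).add
      (key1 ((-(3575+1625*Real.sqrt 5)/3)/25) 3 (by norm_num))).add
      (key0 ((-750 - 1000*Real.sqrt 5/3)/25) 4 (by norm_num))
    rw [add_zero, add_zero, add_zero] at h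
    refine h.congr (fun n => ?_)
    unfold Wf
    ring
  -- limit of Pqf n / 25
  have hPq : Tendsto (fun n : ℕ => Pqf n/25) atTop (nhds ((3*Real.sqrt 5-5)/50)) := by
    have h := ((((tendsto_const_nhds (x := (3*Real.sqrt 5-5)/50)).add
      (key1 (-(5-Real.sqrt 5)/25) 1 le_rfl)).add
      (key0 ((2*Real.sqrt 5/3)/25) 2 (by norm_num))).add
      (key1 (-(5+Real.sqrt 5)/25) 3 (by norm_num))).add
      (key0 (-((5+3*Real.sqrt 5)/2)/25) 4 (by norm_num))
    rw [add_zero, add_zero, add_zero, add_zero] at h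
    refine h.congr (fun n => ?_)
    unfold Pqf
    ring
  -- assemble
  have hfin : Tendsto (fun n : ℕ => -(((ss^n)^2/TT n) * ( ss^n*(Wf n)/25
      + (Pqf n/25)*(rr n/(ss^n)^4) ))) atTop
      (nhds (-(aa⁻¹ * (0 + (3*Real.sqrt 5-5)/50 * 0)))) :=
    (hTxinv.mul (hW.add (hPq.mul (rr_div_lim 4 le_rfl)))).neg
  rw [mul_zero, add_zero, mul_zero, neg_zero] at hfin
  refine Tendsto.congr' ?_ hfin
  filter_upwards [Filter.eventually_ge_atTop 1] with n hn
  obtain ⟨m, rfl⟩ : ∃ m, n = m + 1 := ⟨n - 1, by omega⟩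
  have h1 : m + 1 - 1 = m := by omega
  have h2 : 2*(m+1) - 1 = 2*m + 1 := by omega
  rw [h1, h2]
  have hTdef : (∑' k : ℕ, (1 : ℝ) / (Nat.fib (m + 1 + k) : ℝ) ^ 4) = TT (m+1) := rfl
  rw [hTdef]
  exact (eventual_id m).symm

end FibTail

theorem fib_reciprocal_fourth_tail_asymptotic :
    Filter.Tendsto
      (fun n : ℕ =>
        (∑' k : ℕ, (1 : ℝ) / (Nat.fib (n + k) : ℝ) ^ 4)⁻¹ -
          ((Nat.fib n : ℝ) ^ 4 - (Nat.fib (n - 1) : ℝ) ^ 4 +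
            (2 * (-1 : ℝ) ^ n / 5) * (Nat.fib (2 * n - 1) : ℝ) +
            2 * Real.sqrt 5 / 75))
      Filter.atTop (nhds 0) := FibTail.main_result
end
end

section
/- Let α > 1 > |β| ≥ 0 be reals, c₁ ≠ 0, c₂ reals, d a positive integer, and Wₙ = c₁αⁿ − c₂βⁿ. Then there is a constant C such that for all sufficiently large N, | 1/W_N^d − (1/c₁^d)·( 1/α^{dN} + ∑_{i=1}^{d−1} C(d−1+i,d−1)·(c₂/c₁)^i·β^{iN}/α^{(d+i)N} ) | ≤ C·|β|^{dN}/α^{2dN}. -/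
open Finset

lemma choose_le_two_pow' (n k : ℕ) : n.choose k ≤ 2 ^ n := by
  rcases le_or_gt k n with h | h
  · calc n.choose k ≤ ∑ m ∈ Finset.range (n+1), n.choose m :=
        Finset.single_le_sum (fun i _ => Nat.zero_le _) (Finset.mem_range.2 (Nat.lt_succ_of_le h))
    _ = 2 ^ n := Nat.sum_range_choose n
  · simp [Nat.choose_eq_zero_of_lt h]

lemma rem_bound_s17 (d : ℕ) (hd : 0 < d) (x : ℝ) (hx : |x| ≤ 1/4) :
    |1/(1-x)^d - ∑ i ∈ Finset.range d, ((i + (d-1)).choose (d-1) : ℝ) * x ^ i|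
      ≤ 4^d * |x|^d := by
  have hx1 : ‖x‖ < 1 := by rw [Real.norm_eq_abs]; linarith
  set f : ℕ → ℝ := fun n => ((n + (d-1)).choose (d-1) : ℝ) * x ^ n with hf
  have H : HasSum f (1/(1-x)^d) := by
    have := hasSum_choose_mul_geometric_of_norm_lt_one (𝕜 := ℝ) (d-1) hx1
    rwa [Nat.sub_add_cancel hd] at this
  have Htail : HasSum (fun n => f (n + d)) (1/(1-x)^d - ∑ i ∈ Finset.range d, f i) := by
    rw [hasSum_nat_add_iff (f := f) d, sub_add_cancel]
    exact H
  have hgeom : HasSum (fun n : ℕ => (2:ℝ)^(2*d-1) * |x|^d * (2*|x|)^n)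
      ((2:ℝ)^(2*d-1) * |x|^d * (1 - 2*|x|)⁻¹) := by
    exact (hasSum_geometric_of_lt_one (by positivity) (by linarith)).mul_left _
  have hbound : ∀ n : ℕ, ‖f (n + d)‖ ≤ (2:ℝ)^(2*d-1) * |x|^d * (2*|x|)^n := by
    intro n
    have h1 : (2:ℝ)^(2*d-1) * |x|^d * (2*|x|)^n = 2^(n + d + (d-1)) * |x|^(n+d) := by
      rw [mul_pow, show n + d + (d-1) = n + (2*d-1) by omega, pow_add,
        show n + d = d + n by omega, pow_add]
      ring
    rw [h1, hf]
    simp only [norm_mul, norm_pow, Real.norm_eq_abs, Nat.abs_cast]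
    apply mul_le_mul_of_nonneg_right _ (by positivity)
    calc ((n + d + (d-1)).choose (d-1) : ℝ) ≤ ((2:ℕ)^(n + d + (d-1)) : ℝ) := by
          exact_mod_cast choose_le_two_pow' _ _
      _ = (2:ℝ)^(n + d + (d-1)) := by push_cast; ring
  have key := tsum_of_norm_bounded hgeom hbound
  rw [Htail.tsum_eq, Real.norm_eq_abs] at key
  refine key.trans ?_
  have h2 : (1 - 2*|x|)⁻¹ ≤ 2 := by
    rw [inv_le_comm₀ (by linarith) (by norm_num)]
    linarith
  calc (2:ℝ)^(2*d-1) * |x|^d * (1 - 2*|x|)⁻¹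
      ≤ (2:ℝ)^(2*d-1) * |x|^d * 2 := by
        apply mul_le_mul_of_nonneg_left h2 (by positivity)
    _ = 4^d * |x|^d := by
        have h4 : (4:ℝ)^d = 2 * 2^(2*d-1) := by
          have h5 : (2:ℝ)^(2*d) = 2 * 2^(2*d-1) := by
            conv_lhs => rw [show 2*d = (2*d-1)+1 by omega]
            rw [pow_succ]; ring
          rw [show (4:ℝ) = 2^2 by norm_num, ← pow_mul, h5]
        rw [h4]; ring

theorem horadam_power_reciprocal_expansion
    (α β c₁ c₂ : ℝ) (hα : 1 < α) (hβ : |β| < 1) (hc₁ : c₁ ≠ 0)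
    (d : ℕ) (hd : 0 < d) (W : ℕ → ℝ) (hW : ∀ n, W n = c₁ * α ^ n - c₂ * β ^ n) :
    ∃ C : ℝ, ∃ N₀ : ℕ, ∀ N ≥ N₀,
      |1 / (W N) ^ d -
          (1 / c₁ ^ d) *
            (1 / α ^ (d * N) +
              ∑ i ∈ Finset.Icc 1 (d - 1),
                ((d - 1 + i).choose (d - 1) : ℝ) * (c₂ / c₁) ^ i *
                  (β ^ (i * N) / α ^ ((d + i) * N)))| ≤
        C * |β| ^ (d * N) / α ^ (2 * d * N) := by
  have hα0 : (0:ℝ) < α := lt_trans one_pos hα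
  have hβα : |β/α| < 1 := by
    rw [abs_div, abs_of_pos hα0, div_lt_one hα0]; linarith
  have htend : Filter.Tendsto (fun N : ℕ => |c₂/c₁| * |β/α|^N) Filter.atTop (nhds 0) := by
    have := tendsto_pow_atTop_nhds_zero_of_lt_one (abs_nonneg _) hβα
    simpa using this.const_mul |c₂/c₁|
  have hev : ∀ᶠ N in Filter.atTop, |c₂/c₁| * |β/α|^N ≤ 1/4 :=
    htend.eventually_le_const (by norm_num : (0:ℝ) < 1/4)
  obtain ⟨N₀, hN₀⟩ := Filter.eventually_atTop.1 hev
  refine ⟨4^d * |c₂/c₁|^d / |c₁|^d, N₀, fun N hN => ?_⟩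
  set x : ℝ := (c₂/c₁) * (β/α)^N with hxdef
  have hxabs : |x| = |c₂/c₁| * |β/α|^N := by
    rw [hxdef, abs_mul, abs_pow]
  have hxsmall : |x| ≤ 1/4 := by rw [hxabs]; exact hN₀ N hN
  have h1x : (1:ℝ) - x ≠ 0 := by
    have := abs_le.1 hxsmall
    intro h; linarith [this.2]
  have hαN : (0:ℝ) < α ^ N := pow_pos hα0 N
  have hαdN : α ^ (d*N) ≠ 0 := ne_of_gt (pow_pos hα0 _)
  have hWeq : W N = c₁ * α ^ N * (1 - x) := by
    rw [hW N, hxdef, div_pow]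
    field_simp
  have hWd : (W N) ^ d = c₁ ^ d * α ^ (d*N) * (1-x)^d := by
    rw [hWeq, mul_pow, mul_pow, ← pow_mul, Nat.mul_comm N d]
  have hW' : 1/(W N)^d = (1/(c₁^d * α^(d*N))) * (1/(1-x)^d) := by
    rw [hWd, div_mul_div_comm, one_mul]
  have hsplit : Finset.range d = insert 0 (Finset.Icc 1 (d-1)) := by
    ext i
    simp only [Finset.mem_range, Finset.mem_insert, Finset.mem_Icc]
    omega
  have h0 : (0:ℕ) ∉ Finset.Icc 1 (d-1) := by simp
  have hsum : (1 / c₁ ^ d) *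
            (1 / α ^ (d * N) +
              ∑ i ∈ Finset.Icc 1 (d - 1),
                ((d - 1 + i).choose (d - 1) : ℝ) * (c₂ / c₁) ^ i *
                  (β ^ (i * N) / α ^ ((d + i) * N)))
      = (1/(c₁^d * α^(d*N))) *
          ∑ i ∈ Finset.range d, ((i + (d-1)).choose (d-1) : ℝ) * x ^ i := by
    rw [hsplit, Finset.sum_insert h0, Nat.zero_add, Nat.choose_self, Nat.cast_one, pow_zero, mul_one,
      mul_add, mul_add, Finset.mul_sum, Finset.mul_sum]
    congr 1
    · rw [div_mul_div_comm, one_mul, mul_one]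
    · apply Finset.sum_congr rfl
      intro i _
      have hx_i : x ^ i = (c₂/c₁)^i * (β ^ (i*N) / α ^ (i*N)) := by
        rw [hxdef, mul_pow, ← pow_mul, div_pow, div_pow, Nat.mul_comm N i]
      have hαsplit : α ^ ((d + i) * N) = α ^ (d*N) * α ^ (i*N) := by
        rw [← pow_add, ← add_mul]
      have hαiN : α ^ (i*N) ≠ 0 := ne_of_gt (pow_pos hα0 _)
      rw [hx_i, Nat.add_comm (d-1) i, hαsplit]
      field_simp
  rw [hsum, hW', ← mul_sub, abs_mul]
  have habs1 : |1/(c₁^d * α^(d*N))| = 1/(|c₁|^d * α^(d*N)) := by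
    rw [abs_div, abs_one, abs_mul, abs_pow, abs_pow, abs_of_pos hα0]
  rw [habs1]
  calc (1/(|c₁|^d * α^(d*N))) *
        |1/(1-x)^d - ∑ i ∈ Finset.range d, ((i + (d-1)).choose (d-1) : ℝ) * x ^ i|
      ≤ (1/(|c₁|^d * α^(d*N))) * (4^d * |x|^d) := by
        apply mul_le_mul_of_nonneg_left (rem_bound_s17 d hd x hxsmall) (by positivity)
    _ = 4 ^ d * |c₂ / c₁| ^ d / |c₁| ^ d * |β| ^ (d * N) / α ^ (2 * d * N) := by
        have hxd : |x|^d = |c₂/c₁|^d * (|β|^(d*N) / α^(d*N)) := by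
          rw [hxabs, mul_pow, ← pow_mul, Nat.mul_comm N d, abs_div, abs_div, abs_of_pos hα0, div_pow, div_pow]
        have h2d : α ^ (2*d*N) = α^(d*N) * α^(d*N) := by
          rw [← pow_add]; congr 1; ring
        have hc1 : |c₁| ≠ 0 := abs_ne_zero.2 hc₁
        rw [hxd, h2d]
        field_simp
end

section
/- Let Wₙ = c₁αⁿ − c₂βⁿ with α > 1 > |β|, c₁ > 0 reals, m a positive integer, l ≥ 1−m an integer, d a positive integer. Then lim_{n→∞} (∑_{k=n}^∞ 1/W_{mk+l}^d)^{-1} · α^{−d(mn+l)} = c₁^d·(α^{md} − 1)/α^{md}. -/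
open Filter Topology

theorem horadam_tail_inverse_leading_order
    (α β c₁ c₂ : ℝ) (hα : 1 < α) (hβ : |β| < 1) (hc₁ : 0 < c₁)
    (m : ℕ) (hm : 0 < m) (l : ℤ) (hl : 1 - (m : ℤ) ≤ l) (d : ℕ) (hd : 0 < d)
    (W : ℤ → ℝ) (hW : ∀ n : ℤ, W n = c₁ * α ^ n - c₂ * β ^ n) :
    Filter.Tendsto
      (fun n : ℕ =>
        (∑' k : ℕ, 1 / (W ((m : ℤ) * ((n : ℤ) + (k : ℤ)) + l)) ^ d)⁻¹ *
          α ^ (-(d : ℤ) * ((m : ℤ) * (n : ℤ) + l)))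
      Filter.atTop (nhds (c₁ ^ d * (α ^ (m * d) - 1) / α ^ (m * d))) := by
  have hα0 : (0:ℝ) < α := lt_trans zero_lt_one hα
  have hαne : α ≠ 0 := ne_of_gt hα0
  -- geometric ratio
  set A : ℝ := α ^ (m * d) with hA
  have hA1 : 1 < A := one_lt_pow₀ hα (by positivity)
  have hA0 : (0:ℝ) < A := lt_trans zero_lt_one hA1
  set r : ℝ := A⁻¹ with hr
  have hr0 : 0 ≤ r := by positivity
  have hr1 : r < 1 := inv_lt_one_of_one_lt₀ hA1
  set c : ℝ := (c₁ ^ d)⁻¹ with hc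
  have hcpos : 0 < c := by positivity
  -- ratio limit
  have hq : |β / α| < 1 := by
    rw [abs_div, abs_of_pos hα0, div_lt_one hα0]
    exact lt_trans hβ hα
  have hgeo : Tendsto (fun j : ℤ => (β / α) ^ j) atTop (nhds 0) := by
    have h1 : Tendsto (fun k : ℕ => (β / α) ^ k) atTop (nhds 0) :=
      tendsto_pow_atTop_nhds_zero_of_abs_lt_one hq
    have h2 : Tendsto Int.toNat atTop atTop :=
      tendsto_atTop_atTop.2 fun b => ⟨(b : ℤ), fun a ha => by omega⟩
    refine (h1.comp h2).congr' ?_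
    filter_upwards [eventually_ge_atTop (0:ℤ)] with j hj
    simp only [Function.comp]
    rw [← zpow_natCast, Int.toNat_of_nonneg hj]
  have hratio : Tendsto (fun j : ℤ => W j / α ^ j) atTop (nhds c₁) := by
    have h : Tendsto (fun j : ℤ => c₁ - c₂ * (β / α) ^ j) atTop (nhds (c₁ - c₂ * 0)) :=
      tendsto_const_nhds.sub (tendsto_const_nhds.mul hgeo)
    rw [mul_zero, sub_zero] at h
    refine h.congr fun j => ?_
    have hαj : α ^ j ≠ 0 := zpow_ne_zero _ hαne
    rw [hW j, sub_div, mul_div_assoc, div_self hαj, mul_one, mul_div_assoc, div_zpow]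
  have hg : Tendsto (fun j : ℤ => (α ^ j / W j) ^ d) atTop (nhds c) := by
    have h := (hratio.inv₀ (ne_of_gt hc₁)).pow d
    rw [show c = c₁⁻¹ ^ d by rw [hc, inv_pow]]
    refine h.congr fun j => ?_
    rw [inv_div]
  -- index maps to atTop
  have haff : ∀ k : ℕ, Tendsto (fun n : ℕ => (m : ℤ) * ((n : ℤ) + (k : ℤ)) + l) atTop atTop := by
    intro k
    refine tendsto_atTop_atTop.2 fun b => ⟨(b - l).toNat, fun n hn => ?_⟩
    have h1 : (b - l : ℤ) ≤ ((b - l).toNat : ℤ) := Int.self_le_toNat _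
    have h2 : ((b - l).toNat : ℤ) ≤ (n : ℤ) := by exact_mod_cast hn
    have h3 : (1 : ℤ) ≤ (m : ℤ) := by exact_mod_cast hm
    have h4 : (0:ℤ) ≤ (n : ℤ) + (k : ℤ) := by positivity
    nlinarith
  -- terms
  set f : ℕ → ℕ → ℝ :=
    fun n k => r ^ k * (α ^ ((m : ℤ) * ((n : ℤ) + (k : ℤ)) + l) /
      W ((m : ℤ) * ((n : ℤ) + (k : ℤ)) + l)) ^ d with hf
  -- exponent identity
  have hpow : ∀ n k : ℕ,
      r ^ k * (α ^ ((m : ℤ) * ((n : ℤ) + (k : ℤ)) + l)) ^ d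
        = α ^ ((d : ℤ) * ((m : ℤ) * (n : ℤ) + l)) := by
    intro n k
    rw [hr, hA, ← zpow_natCast α (m * d), ← zpow_neg, ← zpow_natCast _ k, ← zpow_mul,
      ← zpow_natCast _ d, ← zpow_mul, ← zpow_add₀ hαne]
    congr 1
    push_cast
    ring
  have hterm : ∀ n k : ℕ,
      1 / (W ((m : ℤ) * ((n : ℤ) + (k : ℤ)) + l)) ^ d * α ^ ((d : ℤ) * ((m : ℤ) * (n : ℤ) + l))
        = f n k := by
    intro n k
    rw [hf]
    simp only
    rw [div_pow, ← hpow n k]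
    ring
  -- bound for Tannery
  have hbb : Summable (fun k : ℕ => r ^ k * (c + 1)) :=
    (summable_geometric_of_lt_one hr0 hr1).mul_right _
  have habs : ∀ᶠ j : ℤ in atTop, |(α ^ j / W j) ^ d| ≤ c + 1 := by
    have h1 : Tendsto (fun j : ℤ => |(α ^ j / W j) ^ d|) atTop (nhds |c|) := hg.abs
    rw [abs_of_pos hcpos] at h1
    exact h1.eventually_le_const (lt_add_one c)
  obtain ⟨N₁, hN₁⟩ := eventually_atTop.1 habs
  have hbound : ∀ᶠ n : ℕ in atTop, ∀ k : ℕ, ‖f n k‖ ≤ r ^ k * (c + 1) := by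
    have hev : ∀ᶠ n : ℕ in atTop, (m : ℤ) * ((n : ℤ) + 0) + l ≥ N₁ :=
      (haff 0).eventually_ge_atTop N₁
    filter_upwards [hev] with n hn k
    have hk : N₁ ≤ (m : ℤ) * ((n : ℤ) + (k : ℤ)) + l := by
      have h4 : (0:ℤ) ≤ (m : ℤ) * (k : ℤ) := by positivity
      have : (m : ℤ) * ((n : ℤ) + (k : ℤ)) + l = ((m : ℤ) * ((n : ℤ) + 0) + l) + (m : ℤ) * (k : ℤ) := by ring
      omega
    have := hN₁ _ hk
    rw [hf]
    simp only [Real.norm_eq_abs, abs_mul, abs_of_nonneg (pow_nonneg hr0 k)]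
    exact mul_le_mul_of_nonneg_left this (pow_nonneg hr0 k)
  -- pointwise limits
  have hab : ∀ k : ℕ, Tendsto (fun n : ℕ => f n k) atTop (nhds (r ^ k * c)) := by
    intro k
    exact tendsto_const_nhds.mul (hg.comp (haff k))
  -- Tannery
  have key : Tendsto (fun n : ℕ => ∑' k : ℕ, f n k) atTop (nhds ((1 - r)⁻¹ * c)) := by
    have := tendsto_tsum_of_dominated_convergence hbb hab hbound
    rwa [show (∑' k : ℕ, r ^ k * c) = (1 - r)⁻¹ * c by
      rw [tsum_mul_right, tsum_geometric_of_lt_one hr0 hr1]] at this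
  have hLne : (1 - r)⁻¹ * c ≠ 0 := by
    have : 0 < 1 - r := by linarith
    positivity
  have final := key.inv₀ hLne
  have hval : ((1 - r)⁻¹ * c)⁻¹ = c₁ ^ d * (A - 1) / A := by
    rw [hc, hr, mul_inv, inv_inv, inv_inv]
    have h1 : A - A⁻¹ * A = A - 1 := by field_simp
    field_simp
  rw [hval] at final
  refine final.congr fun n => ?_
  rw [show (-(d : ℤ) * ((m : ℤ) * (n : ℤ) + l)) = -((d : ℤ) * ((m : ℤ) * (n : ℤ) + l)) by ring,
    zpow_neg, ← mul_inv, ← tsum_mul_right]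
  congr 1
  congr 1
  exact funext fun k => (hterm n k).symm
end

section
/- Let Wₙ = c₁αⁿ − c₂βⁿ with α > 1 > |β|, c₁ > 0 reals, m a positive integer, l ≥ 1−m an integer, d a positive integer. Then lim_{n→∞} (−1)ⁿ·(∑_{k=n}^∞ (−1)^k/W_{mk+l}^d)^{-1} · α^{−d(mn+l)} = c₁^d·(α^{md} + 1)/α^{md}. -/
open Filter

theorem horadam_alternating_tail_inverse_leading_order
    (α β c₁ c₂ : ℝ) (hα : 1 < α) (hβ : |β| < 1) (hc₁ : 0 < c₁)
    (m : ℕ) (hm : 0 < m) (l : ℤ) (hl : 1 - (m : ℤ) ≤ l) (d : ℕ) (hd : 0 < d)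
    (W : ℤ → ℝ) (hW : ∀ n : ℤ, W n = c₁ * α ^ n - c₂ * β ^ n) :
    Filter.Tendsto
      (fun n : ℕ =>
        (-1 : ℝ) ^ n *
          (∑' k : ℕ, (-1 : ℝ) ^ (n + k) / (W ((m : ℤ) * ((n : ℤ) + (k : ℤ)) + l)) ^ d)⁻¹ *
          α ^ (-(d : ℤ) * ((m : ℤ) * (n : ℤ) + l)))
      Filter.atTop (nhds (c₁ ^ d * (α ^ (m * d) + 1) / α ^ (m * d))) := by
  have hα0 : (0:ℝ) < α := lt_trans one_pos hα
  have hαne : α ≠ 0 := ne_of_gt hα0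
  set q : ℝ := |β| / α with hq_def
  have hq0 : 0 ≤ q := div_nonneg (abs_nonneg β) hα0.le
  have hq1 : q < 1 := (div_lt_one hα0).mpr (hβ.trans hα)
  have hA1 : 1 < α ^ (m * d) := one_lt_pow₀ hα (by positivity)
  have hA0 : (0:ℝ) < α ^ (m * d) := lt_trans one_pos hA1
  set r : ℝ := -(α ^ (m * d))⁻¹ with hr_def
  have hrnorm : ‖r‖ < 1 := by
    rw [hr_def, norm_neg, norm_inv, Real.norm_eq_abs, abs_of_pos hA0]
    exact inv_lt_one_of_one_lt₀ hA1
  set E : ℕ → ℕ → ℤ := fun n k => (m : ℤ) * ((n : ℤ) + (k : ℤ)) + l with hE_def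
  have hE_ge : ∀ n k : ℕ, 1 ≤ n → (n : ℤ) ≤ E n k := by
    intro n k hn
    have hm1 : (1:ℤ) ≤ (m:ℤ) := by exact_mod_cast hm
    have hn1 : (1:ℤ) ≤ (n:ℤ) := by exact_mod_cast hn
    have hk0 : (0:ℤ) ≤ (k:ℤ) := Int.natCast_nonneg k
    simp only [hE_def]
    nlinarith [mul_nonneg (sub_nonneg.mpr hm1) (sub_nonneg.mpr hn1)]
  -- lower bound on W
  obtain ⟨N, hN⟩ : ∃ N : ℕ, ∀ j : ℤ, (N : ℤ) ≤ j → c₁ / 2 * α ^ j ≤ W j := by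
    have h0 : Tendsto (fun n : ℕ => |c₂| * q ^ n) atTop (nhds 0) := by
      simpa using (tendsto_pow_atTop_nhds_zero_of_lt_one hq0 hq1).const_mul |c₂|
    have h1 : ∀ᶠ n : ℕ in atTop, |c₂| * q ^ n < c₁ / 2 :=
      h0.eventually_lt_const (by positivity)
    obtain ⟨N, hN⟩ := h1.exists_forall_of_atTop
    refine ⟨N, ?_⟩
    intro j hj
    have hj0 : 0 ≤ j := le_trans (Int.natCast_nonneg N) hj
    lift j to ℕ using hj0
    have hjN : N ≤ j := by exact_mod_cast hj
    have hb : c₂ * β ^ j ≤ c₁ / 2 * α ^ j := by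
      calc c₂ * β ^ j ≤ |c₂ * β ^ j| := le_abs_self _
        _ = |c₂| * |β| ^ j := by rw [abs_mul, abs_pow]
        _ = |c₂| * (q * α) ^ j := by rw [div_mul_cancel₀ _ hαne]
        _ = |c₂| * q ^ j * α ^ j := by rw [mul_pow, mul_assoc]
        _ ≤ c₁ / 2 * α ^ j := by
            exact mul_le_mul_of_nonneg_right (hN j hjN).le (by positivity)
    rw [hW]
    simp only [zpow_natCast]
    linarith
  -- u and v
  set v : ℕ → ℕ → ℝ := fun n k => (β / α) ^ (E n k) with hv_def
  set u : ℕ → ℕ → ℝ := fun n k => W (E n k) * (α ^ (E n k))⁻¹ with hu_def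
  have hu_eq : ∀ n k, u n k = c₁ - c₂ * v n k := by
    intro n k
    have hne : (α:ℝ) ^ (E n k) ≠ 0 := zpow_ne_zero _ hαne
    rw [hu_def, hv_def]
    simp only [hW, div_zpow]
    field_simp
  -- per-k function identity
  set F : ℕ → ℕ → ℝ := fun n k =>
    α ^ ((d : ℤ) * ((m : ℤ) * (n : ℤ) + l)) *
      ((-1 : ℝ) ^ k / (W (E n k)) ^ d) with hF_def
  have hident : ∀ n k, F n k = r ^ k * ((u n k)⁻¹) ^ d := by
    intro n k
    have e3 : (((α:ℝ) ^ (m * d)) ^ k)⁻¹ * (α ^ E n k) ^ d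
        = α ^ ((d : ℤ) * ((m : ℤ) * (n : ℤ) + l)) := by
      rw [← pow_mul, ← zpow_natCast α (m * d * k), ← zpow_natCast (α ^ E n k) d,
        ← zpow_mul, ← zpow_neg, ← zpow_add₀ hαne]
      congr 1
      simp only [hE_def]
      push_cast
      ring
    show α ^ ((d : ℤ) * ((m : ℤ) * (n : ℤ) + l)) * ((-1 : ℝ) ^ k / (W (E n k)) ^ d)
      = (-(α ^ (m * d))⁻¹) ^ k * ((W (E n k) * (α ^ (E n k))⁻¹)⁻¹) ^ d
    rw [← e3, show (-((α:ℝ) ^ (m * d))⁻¹) = (-1) * ((α:ℝ) ^ (m * d))⁻¹ by ring,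
      mul_pow, mul_inv, inv_inv, mul_pow, div_eq_mul_inv, ← inv_pow, inv_pow (α ^ (m*d)) k]
    ring
  -- per-k limit
  have hu_lim : ∀ k, Tendsto (fun n => u n k) atTop (nhds c₁) := by
    intro k
    have hv_lim : Tendsto (fun n => v n k) atTop (nhds 0) := by
      refine squeeze_zero_norm' ?_ (tendsto_pow_atTop_nhds_zero_of_lt_one hq0 hq1)
      filter_upwards [eventually_ge_atTop 1] with n hn
      have h2 : (n:ℤ) ≤ E n k := hE_ge n k hn
      have h3 : ((E n k).toNat : ℤ) = E n k := Int.toNat_of_nonneg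
        (le_trans (by exact_mod_cast Nat.zero_le n) h2)
      obtain ⟨t, ht⟩ : ∃ t : ℕ, E n k = (t : ℤ) := ⟨(E n k).toNat, h3.symm⟩
      have h4 : n ≤ t := by omega
      show ‖(β / α) ^ (E n k)‖ ≤ q ^ n
      simp only [Real.norm_eq_abs]
      rw [ht, zpow_natCast, abs_pow, abs_div, abs_of_pos hα0]
      exact pow_le_pow_of_le_one hq0 hq1.le h4
    have h5 : Tendsto (fun n : ℕ => c₁ - c₂ * v n k) atTop (nhds (c₁ - c₂ * 0)) :=
      Tendsto.const_sub c₁ (hv_lim.const_mul c₂)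
    simp only [mul_zero, sub_zero] at h5
    exact Tendsto.congr (fun n => (hu_eq n k).symm) h5
  set g : ℕ → ℝ := fun k => r ^ k * (c₁⁻¹) ^ d with hg_def
  have hk_lim : ∀ k, Tendsto (fun n => F n k) atTop (nhds (g k)) := by
    intro k
    simp only [hident]
    exact tendsto_const_nhds.mul (((hu_lim k).inv₀ hc₁.ne').pow d)
  -- domination
  set bound : ℕ → ℝ := fun k => (2 / c₁) ^ d * ((α ^ (m * d))⁻¹) ^ k with hbound_def
  have hbound_sum : Summable bound :=
    (summable_geometric_of_lt_one (by positivity) (inv_lt_one_of_one_lt₀ hA1)).mul_left _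
  have hdom : ∀ᶠ n : ℕ in atTop, ∀ k, ‖F n k‖ ≤ bound k := by
    filter_upwards [eventually_ge_atTop (max N 1)] with n hn k
    have hn1 : 1 ≤ n := le_trans (le_max_right _ _) hn
    have hnN : N ≤ n := le_trans (le_max_left _ _) hn
    have hEN : (N : ℤ) ≤ E n k := le_trans (by exact_mod_cast hnN) (hE_ge n k hn1)
    have hWlow := hN _ hEN
    have hαE : (0:ℝ) < α ^ (E n k) := zpow_pos hα0 _
    have huge : c₁ / 2 ≤ u n k := by
      have h := mul_le_mul_of_nonneg_right hWlow (le_of_lt (inv_pos.mpr hαE))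
      calc c₁ / 2 = c₁ / 2 * α ^ E n k * (α ^ E n k)⁻¹ := by field_simp
        _ ≤ W (E n k) * (α ^ E n k)⁻¹ := h
        _ = u n k := rfl
    have hu0 : (0:ℝ) < u n k := lt_of_lt_of_le (by positivity) huge
    have hinv : (u n k)⁻¹ ≤ 2 / c₁ := by
      rw [show (2:ℝ) / c₁ = (c₁ / 2)⁻¹ by rw [inv_div]]
      exact inv_anti₀ (by positivity) huge
    have hrn : ‖r‖ = (α ^ (m * d))⁻¹ := by
      rw [hr_def, norm_neg, norm_inv, Real.norm_eq_abs, abs_of_pos hA0]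
    have hun : ‖(u n k)⁻¹‖ = (u n k)⁻¹ := by
      rw [Real.norm_eq_abs, abs_of_pos (inv_pos.mpr hu0)]
    rw [hident, norm_mul, norm_pow, norm_pow, hrn, hun]
    calc ((α ^ (m * d))⁻¹) ^ k * ((u n k)⁻¹) ^ d
        ≤ ((α ^ (m * d))⁻¹) ^ k * (2 / c₁) ^ d :=
          mul_le_mul_of_nonneg_left
            (pow_le_pow_left₀ (inv_pos.mpr hu0).le hinv d) (by positivity)
      _ = (2 / c₁) ^ d * ((α ^ (m * d))⁻¹) ^ k := mul_comm _ _
      _ = bound k := rfl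
  have hmain : Tendsto (fun n => ∑' k, F n k) atTop (nhds (∑' k, g k)) :=
    tendsto_tsum_of_dominated_convergence hbound_sum hk_lim hdom
  -- the limit value
  have hgsum : ∑' k, g k = (1 - r)⁻¹ * (c₁⁻¹) ^ d := by
    rw [hg_def, tsum_mul_right, tsum_geometric_of_norm_lt_one hrnorm]
  have h1r : (0:ℝ) < 1 - r := by
    rw [hr_def]
    have : (0:ℝ) < (α ^ (m * d))⁻¹ := by positivity
    linarith
  have hLne : (∑' k, g k) ≠ 0 := by
    rw [hgsum]; positivity
  have hfinal := hmain.inv₀ hLne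
  -- identify the function
  have hfun : ∀ n : ℕ,
      (-1:ℝ) ^ n * (∑' k : ℕ, (-1:ℝ) ^ (n + k) / (W (E n k)) ^ d)⁻¹ *
        α ^ (-(d:ℤ) * ((m:ℤ) * (n:ℤ) + l)) = (∑' k, F n k)⁻¹ := by
    intro n
    have t1 : (∑' k : ℕ, (-1:ℝ) ^ (n + k) / (W (E n k)) ^ d)
        = (-1:ℝ) ^ n * ∑' k : ℕ, (-1:ℝ) ^ k / (W (E n k)) ^ d := by
      rw [← tsum_mul_left]
      congr 1; funext k; rw [pow_add, mul_div_assoc]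
    have t2 : (∑' k, F n k)
        = α ^ ((d:ℤ) * ((m:ℤ) * (n:ℤ) + l)) * ∑' k : ℕ, (-1:ℝ) ^ k / (W (E n k)) ^ d := by
      simp only [hF_def]
      exact tsum_mul_left
    have hneg : ((-1:ℝ) ^ n)⁻¹ = (-1:ℝ) ^ n := by
      rw [← inv_pow]; norm_num
    have hneg2 : (-1:ℝ) ^ n * (-1:ℝ) ^ n = 1 := by
      rw [← pow_add]; exact Even.neg_one_pow ⟨n, rfl⟩
    rw [t1, t2, mul_inv, mul_inv, hneg, neg_mul, zpow_neg, ← mul_assoc, hneg2, one_mul]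
    ring
  rw [show c₁ ^ d * (α ^ (m * d) + 1) / α ^ (m * d) = (∑' k, g k)⁻¹ by
    rw [hgsum, hr_def, sub_neg_eq_add]
    field_simp
    ring_nf
    rw [← mul_pow, mul_inv_cancel₀ hc₁.ne', one_pow]]
  exact hfinal.congr fun n => (hfun n).symm
end
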